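/- arXiv:1110.3939 — 6 statements merged into one kernel-verified Lean document; each statement's English description precedes it below -/
import Mathlib

section
/- A family ℱ of subsets of a finite set F is a clone structure (i.e., ℱ equals the family of all clone sets of some preference profile over F) if and only if ℱ satisfies axioms A1–A5. -/
variable {α : Type*}

/-- `r` is a strict linear order (complete, transitive, antisymmetric) on the set `C`. -/
def IsLinOn (C : Set α) (r : α → α → Prop) : Prop :=
  (∀ a ∈ C, ¬r a a) ∧
    (∀ a ∈ C, ∀ b ∈ C, ∀ c ∈ C, r a b → r b c → r a c) ∧
      ∀ a ∈ C, ∀ b ∈ C, a ≠ b → r a b ∨ r b a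

/-- A preference profile over `C`: a (nonempty) finite tuple of linear orders on `C`. -/
def IsProfile (C : Set α) {n : ℕ} (R : Fin n → α → α → Prop) : Prop :=
  0 < n ∧ ∀ i, IsLinOn C (R i)

/-- `X` is a clone set for the profile `R` over `C`. -/
def IsCloneSet (C : Set α) {n : ℕ} (R : Fin n → α → α → Prop) (X : Set α) : Prop :=
  X.Nonempty ∧ X ⊆ C ∧
    ∀ c ∈ X, ∀ c' ∈ X, ∀ a ∈ C \ X, ∀ i, (R i c a ↔ R i c' a)

/-- The clone structure of `R`: the family of all clone sets. -/
def cloneSets (C : Set α) {n : ℕ} (R : Fin n → α → α → Prop) : Set (Set α) :=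
  {X | IsCloneSet C R X}

/-- `X` and `Y` intersect non-trivially. -/
def Bowtie (X Y : Set α) : Prop :=
  (X ∩ Y).Nonempty ∧ (X \ Y).Nonempty ∧ (Y \ X).Nonempty

/-- `Z` is a proper minimal superset of `X` in the family `𝓕`. -/
def IsProperMinimalSuperset (𝓕 : Set (Set α)) (X Z : Set α) : Prop :=
  Z ∈ 𝓕 ∧ X ⊆ Z ∧ X ≠ Z ∧ ∀ Y ∈ 𝓕, X ⊆ Y → Y ⊆ Z → Y = X ∨ Y = Z

/-- The family `𝓕` contains a bicycle chain. -/
def HasBicycleChain (𝓕 : Set (Set α)) : Prop :=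
  ∃ (k : ℕ) (A : ZMod k → Set α), 3 ≤ k ∧ (∀ i, A i ∈ 𝓕) ∧
    ∀ i : ZMod k,
      Bowtie (A (i - 1)) (A i) ∧ A (i - 1) ∩ A i ∩ A (i + 1) = ∅ ∧
        A i ⊆ A (i - 1) ∪ A (i + 1)

/-- A family `𝓕` of subsets of `F` satisfies axioms A1–A5. -/
def SatisfiesAxioms (F : Set α) (𝓕 : Set (Set α)) : Prop :=
  (∀ X ∈ 𝓕, X ⊆ F) ∧
    ((∀ f ∈ F, ({f} : Set α) ∈ 𝓕) ∧ (∅ : Set α) ∉ 𝓕 ∧ F ∈ 𝓕) ∧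
    (∀ C₁ ∈ 𝓕, ∀ C₂ ∈ 𝓕, (C₁ ∩ C₂).Nonempty → C₁ ∪ C₂ ∈ 𝓕 ∧ C₁ ∩ C₂ ∈ 𝓕) ∧
    (∀ C₁ ∈ 𝓕, ∀ C₂ ∈ 𝓕, Bowtie C₁ C₂ → C₁ \ C₂ ∈ 𝓕 ∧ C₂ \ C₁ ∈ 𝓕) ∧
    (∀ X ∈ 𝓕, {Z | IsProperMinimalSuperset 𝓕 X Z}.encard ≤ 2) ∧
    ¬HasBicycleChain 𝓕

/-- `𝓒` is a clone structure over `C`. -/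
def IsCloneStructure (C : Set α) (𝓒 : Set (Set α)) : Prop :=
  ∃ (n : ℕ) (R : Fin n → α → α → Prop), IsProfile C R ∧ 𝓒 = cloneSets C R

namespace CloneAux

/-- clone condition for one order -/
def CC (F : Set α) (r : α → α → Prop) (X : Set α) : Prop :=
  ∀ c ∈ X, ∀ c' ∈ X, ∀ a ∈ F \ X, (r c a ↔ r c' a)

lemma linOn.asymm {F : Set α} {r} (h : IsLinOn F r) {a b : α} (ha : a ∈ F) (hb : b ∈ F)
    (hab : r a b) : ¬ r b a := fun hba => h.1 a ha (h.2.1 a ha b hb a ha hab hba)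

lemma linOn.flip_iff {F : Set α} {r} (h : IsLinOn F r) {a b : α} (ha : a ∈ F) (hb : b ∈ F)
    (hne : a ≠ b) : (¬ r a b) ↔ r b a := by
  constructor
  · intro hn; rcases h.2.2 a ha b hb hne with h1 | h1
    · exact absurd h1 hn
    · exact h1
  · intro h1; exact fun h2 => linOn.asymm h ha hb h2 h1

/-- a clone set is an "interval" -/
lemma clone_interval {F : Set α} {r} (h : IsLinOn F r) {X : Set α} (hXF : X ⊆ F)
    (hX : CC F r X) {x b z : α} (hx : x ∈ X) (hz : z ∈ X) (hb : b ∈ F)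
    (h1 : r x b) (h2 : r b z) : b ∈ X := by
  by_contra hbX
  have := hX x hx z hz b ⟨hb, hbX⟩
  have hz' : r z b := this.1 h1
  exact linOn.asymm h hb (hXF hz) h2 hz'

/-- every nonempty finite subset has a minimum -/
lemma exists_min {F : Set α} {r} (h : IsLinOn F r) (s : Set α) (hsF : s ⊆ F)
    (hfin : s.Finite) (hne : s.Nonempty) : ∃ μ ∈ s, ∀ x ∈ s, x ≠ μ → r μ x := by
  classical
  obtain ⟨t, rfl⟩ : ∃ t : Finset α, s = ↑t := ⟨hfin.toFinset, by simp⟩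
  induction t using Finset.induction_on with
  | empty => simp at hne
  | @insert a t ha ih =>
    by_cases hte : t.Nonempty
    · have hsub : (↑t : Set α) ⊆ F := fun x hx => hsF (by simp [hx])
      obtain ⟨μ, hμt, hμ⟩ := ih hsub (t.finite_toSet) (by simpa using hte)
      have haF : a ∈ F := hsF (by simp)
      have hμF : μ ∈ F := hsub hμt
      by_cases haμ : a = μ
      · subst haμ; exact absurd hμt ha
      rcases h.2.2 a haF μ hμF haμ with h1 | h1
      · refine ⟨a, by simp, ?_⟩
        intro x hx hxa
        simp only [Finset.coe_insert, Set.mem_insert_iff] at hx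
        rcases hx with rfl | hx
        · exact absurd rfl hxa
        · by_cases hxμ : x = μ
          · subst hxμ; exact h1
          · exact h.2.1 a haF μ hμF x (hsub hx) h1 (hμ x hx hxμ)
      · refine ⟨μ, by simp [hμt], ?_⟩
        intro x hx hxμ
        simp only [Finset.coe_insert, Set.mem_insert_iff] at hx
        rcases hx with rfl | hx
        · exact h1
        · exact hμ x hx hxμ
    · obtain ⟨x, hx⟩ := hne
      simp only [Finset.coe_insert, Set.mem_insert_iff] at hx
      rcases hx with rfl | hx
      · refine ⟨x, by simp, ?_⟩
        intro y hy hyx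
        simp only [Finset.coe_insert, Set.mem_insert_iff] at hy
        rcases hy with rfl | hy
        · exact absurd rfl hyx
        · exact absurd ⟨y, hy⟩ hte
      · exact absurd ⟨x, hx⟩ hte

lemma encard_le_two_of_no_three {S : Set (Set α)}
    (h : ∀ a ∈ S, ∀ b ∈ S, ∀ c ∈ S, a ≠ b → a ≠ c → b ≠ c → False) : S.encard ≤ 2 := by
  classical
  by_cases h2 : ∃ a ∈ S, ∃ b ∈ S, a ≠ b
  · obtain ⟨a, ha, b, hb, hab⟩ := h2
    have hsub : S ⊆ {a, b} := by
      intro c hc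
      by_contra hcm
      simp only [Set.mem_insert_iff, Set.mem_singleton_iff, not_or] at hcm
      exact h a ha b hb c hc hab (Ne.symm hcm.1) (Ne.symm hcm.2)
    refine le_trans (Set.encard_mono hsub) ?_
    refine le_trans (Set.encard_insert_le _ _) ?_
    simp only [Set.encard_singleton]
    norm_num
  · push_neg at h2
    by_cases hne : S.Nonempty
    · obtain ⟨a, ha⟩ := hne
      have : S ⊆ {a} := fun b hb => (h2 b hb a ha)
      exact le_trans (Set.encard_mono this) (by simp)
    · rw [Set.not_nonempty_iff_eq_empty] at hne
      simp [hne]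

end CloneAux
namespace CloneAux

variable {F : Set α} {n : ℕ} {R : Fin n → α → α → Prop}

lemma cloneSets_subset (hX : X ∈ cloneSets F R) : X ⊆ F := hX.2.1

lemma cloneSets_nonempty {X : Set α} (hX : X ∈ cloneSets F R) : X.Nonempty := hX.1

/-- two bowtie-ing intervals cannot share the minimum of their union -/
lemma bowtie_min_helper {r : α → α → Prop} (h : IsLinOn F r) {X Y : Set α}
    (hXF : X ⊆ F) (hYF : Y ⊆ F) (hX : CC F r X) (hY : CC F r Y)
    (hbow : Bowtie X Y) {μ : α} (hμX : μ ∈ X) (hμY : μ ∈ Y)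
    (hmin : ∀ x, x ∈ X ∪ Y → x ≠ μ → r μ x) : False := by
  obtain ⟨-, ⟨a, haX, haY⟩, ⟨b, hbY, hbX⟩⟩ := hbow
  have haF : a ∈ F := hXF haX
  have hbF : b ∈ F := hYF hbY
  have hab : a ≠ b := fun he => hbX (he ▸ haX)
  have hμa : r μ a := hmin a (Or.inl haX) (fun he => haY (he ▸ hμY))
  have hμb : r μ b := hmin b (Or.inr hbY) (fun he => hbX (he ▸ hμX))
  rcases h.2.2 a haF b hbF hab with h1 | h1
  · exact haY (clone_interval h hYF hY hμY hbY haF hμa h1)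
  · exact hbX (clone_interval h hXF hX hμX haX hbF hμb h1)

end CloneAux
namespace CloneAux

variable {F : Set α} {n : ℕ} {R : Fin n → α → α → Prop}

lemma cc_of_mem {X : Set α} (hX : X ∈ cloneSets F R) (i : Fin n) : CC F (R i) X :=
  fun c hc c' hc' a ha => hX.2.2 c hc c' hc' a ha i

lemma singleton_mem_cloneSets {f : α} (hf : f ∈ F) : {f} ∈ cloneSets F R := by
  refine ⟨⟨f, rfl⟩, by simpa using hf, ?_⟩
  rintro c rfl c' rfl a _ i; rfl

lemma top_mem_cloneSets (hne : F.Nonempty) : F ∈ cloneSets F R :=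
  ⟨hne, le_refl _, fun c _ c' _ a ha _ => absurd ha.1 ha.2⟩

lemma union_mem_cloneSets {X Y : Set α} (hX : X ∈ cloneSets F R) (hY : Y ∈ cloneSets F R)
    (hint : (X ∩ Y).Nonempty) : X ∪ Y ∈ cloneSets F R := by
  obtain ⟨w, hwX, hwY⟩ := hint
  refine ⟨hX.1.mono Set.subset_union_left, Set.union_subset hX.2.1 hY.2.1, ?_⟩
  intro c hc c' hc' a ha i
  have ha' : a ∈ F ∧ a ∉ X ∧ a ∉ Y := ⟨ha.1, fun h => ha.2 (Or.inl h), fun h => ha.2 (Or.inr h)⟩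
  have key : ∀ c'' ∈ X ∪ Y, (R i c'' a ↔ R i w a) := by
    rintro c'' (hc'' | hc'')
    · exact hX.2.2 c'' hc'' w hwX a ⟨ha'.1, ha'.2.1⟩ i
    · exact hY.2.2 c'' hc'' w hwY a ⟨ha'.1, ha'.2.2⟩ i
  exact (key c hc).trans (key c' hc').symm

lemma inter_mem_cloneSets {X Y : Set α} (hX : X ∈ cloneSets F R) (hY : Y ∈ cloneSets F R)
    (hint : (X ∩ Y).Nonempty) : X ∩ Y ∈ cloneSets F R := by
  refine ⟨hint, fun x hx => hX.2.1 hx.1, ?_⟩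
  intro c hc c' hc' a ha i
  by_cases haX : a ∈ X
  · have : a ∉ Y := fun hY' => ha.2 ⟨haX, hY'⟩
    exact hY.2.2 c hc.2 c' hc'.2 a ⟨ha.1, this⟩ i
  · exact hX.2.2 c hc.1 c' hc'.1 a ⟨ha.1, haX⟩ i

lemma diff_mem_cloneSets (hR : IsProfile F R) {X Y : Set α}
    (hX : X ∈ cloneSets F R) (hY : Y ∈ cloneSets F R)
    (hbow : Bowtie X Y) : X \ Y ∈ cloneSets F R := by
  obtain ⟨hint, hXY, hYX⟩ := hbow
  obtain ⟨b, hbY, hbX⟩ := hYX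
  refine ⟨hXY, fun x hx => hX.2.1 hx.1, ?_⟩
  intro c hc c' hc' a ha i
  have lin := hR.2 i
  have hcF : c ∈ F := hX.2.1 hc.1
  have hc'F : c' ∈ F := hX.2.1 hc'.1
  have haF : a ∈ F := ha.1
  have hbF : b ∈ F := hY.2.1 hbY
  by_cases haX : a ∈ X
  · -- a ∈ X ∩ Y
    have haY : a ∈ Y := by
      by_contra haY
      exact ha.2 ⟨haX, haY⟩
    have hac : a ≠ c := fun he => hc.2 (he ▸ haY)
    have hac' : a ≠ c' := fun he => hc'.2 (he ▸ haY)
    have hbc : b ≠ c := fun he => hbX (he ▸ hc.1)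
    have hbc' : b ≠ c' := fun he => hbX (he ▸ hc'.1)
    have e1 : R i c a ↔ ¬ R i a c := (linOn.flip_iff lin haF hcF hac).symm
    have e2 : R i a c ↔ R i b c := hY.2.2 a haY b hbY c ⟨hcF, hc.2⟩ i
    have e3 : ¬ R i b c ↔ R i c b := linOn.flip_iff lin hbF hcF hbc
    have e4 : R i c b ↔ R i c' b := hX.2.2 c hc.1 c' hc'.1 b ⟨hbF, hbX⟩ i
    have e6 : R i a c' ↔ R i b c' := hY.2.2 a haY b hbY c' ⟨hc'F, hc'.2⟩ i
    have e7 : ¬ R i a c' ↔ R i c' a := linOn.flip_iff lin haF hc'F hac'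
    calc R i c a ↔ ¬ R i a c := e1
      _ ↔ ¬ R i b c := not_congr e2
      _ ↔ R i c b := e3
      _ ↔ R i c' b := e4
      _ ↔ ¬ R i b c' := (linOn.flip_iff lin hbF hc'F hbc').symm
      _ ↔ ¬ R i a c' := (not_congr e6).symm
      _ ↔ R i c' a := e7
  · exact hX.2.2 c hc.1 c' hc'.1 a ⟨ha.1, haX⟩ i

end CloneAux
namespace CloneAux

variable {F : Set α} {n : ℕ} {R : Fin n → α → α → Prop}

lemma a4_cloneSets (hR : IsProfile F R) {X : Set α} (hX : X ∈ cloneSets F R) :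
    {Z | IsProperMinimalSuperset (cloneSets F R) X Z}.encard ≤ 2 := by
  classical
  apply encard_le_two_of_no_three
  intro Z1 hZ1 Z2 hZ2 Z3 hZ3 h12 h13 h23
  simp only [Set.mem_setOf_eq] at hZ1 hZ2 hZ3
  have pair : ∀ Z Z', IsProperMinimalSuperset (cloneSets F R) X Z →
      IsProperMinimalSuperset (cloneSets F R) X Z' → Z ≠ Z' → Z ∩ Z' = X := by
    intro Z Z' hZ hZ' hne
    have hint : (Z ∩ Z').Nonempty := by
      obtain ⟨x, hx⟩ := hX.1
      exact ⟨x, hZ.2.1 hx, hZ'.2.1 hx⟩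
    have hmem := inter_mem_cloneSets hZ.1 hZ'.1 hint
    have hXsub : X ⊆ Z ∩ Z' := Set.subset_inter hZ.2.1 hZ'.2.1
    rcases hZ.2.2.2 (Z ∩ Z') hmem hXsub Set.inter_subset_left with h | h
    · exact h
    · have hZZ' : Z ⊆ Z' := h ▸ Set.inter_subset_right
      rcases hZ'.2.2.2 Z hZ.1 hZ.2.1 hZZ' with h' | h'
      · exact absurd h'.symm hZ.2.2.1
      · exact absurd h' hne
  have e12 := pair _ _ hZ1 hZ2 h12
  have e13 := pair _ _ hZ1 hZ3 h13
  have e23 := pair _ _ hZ2 hZ3 h23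
  set i0 : Fin n := ⟨0, hR.1⟩ with hi0
  have lin := hR.2 i0
  set r := R i0 with hr
  have hdiff : ∀ Z, IsProperMinimalSuperset (cloneSets F R) X Z → ∃ d, d ∈ Z ∧ d ∉ X := by
    intro Z hZ
    obtain ⟨d, hd, hdX⟩ := Set.exists_of_ssubset (ssubset_of_ne_of_subset hZ.2.2.1 hZ.2.1)
    exact ⟨d, hd, hdX⟩
  obtain ⟨d1, hd1, hd1X⟩ := hdiff _ hZ1
  obtain ⟨d2, hd2, hd2X⟩ := hdiff _ hZ2
  obtain ⟨d3, hd3, hd3X⟩ := hdiff _ hZ3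
  have ccX : CC F r X := cc_of_mem hX i0
  have hXF : X ⊆ F := hX.2.1
  have hd1F : d1 ∈ F := hZ1.1.2.1 hd1
  have hd2F : d2 ∈ F := hZ2.1.2.1 hd2
  have hd3F : d3 ∈ F := hZ3.1.2.1 hd3
  have updown : ∀ d ∈ F, d ∉ X → (∀ x ∈ X, r x d) ∨ (∀ x ∈ X, r d x) := by
    intro d hdF hdX'
    obtain ⟨x0, hx0⟩ := hX.1
    have hdx0 : d ≠ x0 := fun he => hdX' (he ▸ hx0)
    rcases lin.2.2 x0 (hXF hx0) d hdF (Ne.symm hdx0) with h1 | h1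
    · left
      intro x hx
      rcases lin.2.2 x (hXF hx) d hdF (fun he => hdX' (he ▸ hx)) with h2 | h2
      · exact h2
      · exact absurd (clone_interval lin hXF ccX hx0 hx hdF h1 h2) hdX'
    · right
      intro x hx
      rcases lin.2.2 d hdF x (hXF hx) (fun he => hdX' (by rw [he]; exact hx)) with h2 | h2
      · exact h2
      · exact absurd (clone_interval lin hXF ccX hx hx0 hdF h2 h1) hdX'
  -- no two "up" elements from different minimal supersets
  have key2 : ∀ Za Zb da db, IsProperMinimalSuperset (cloneSets F R) X Za →
      IsProperMinimalSuperset (cloneSets F R) X Zb → Za ∩ Zb = X →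
      da ∈ Za → da ∉ X → db ∈ Zb → db ∉ X →
      (∀ x ∈ X, r x da) → (∀ x ∈ X, r x db) → False := by
    intro Za Zb da db hZa hZb hab hda hdaX hdb hdbX hup1 hup2
    obtain ⟨x0, hx0⟩ := hX.1
    have hdaF : da ∈ F := hZa.1.2.1 hda
    have hdbF : db ∈ F := hZb.1.2.1 hdb
    have hne : da ≠ db := by
      intro he
      subst he
      exact hdaX (hab ▸ (⟨hda, hdb⟩ : da ∈ Za ∩ Zb))
    rcases lin.2.2 da hdaF db hdbF hne with h1 | h1
    · have := clone_interval lin hZb.1.2.1 (cc_of_mem hZb.1 i0) (hZb.2.1 hx0) hdb hdaF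
        (hup1 x0 hx0) h1
      exact hdaX (hab ▸ (⟨hda, this⟩ : da ∈ Za ∩ Zb))
    · have := clone_interval lin hZa.1.2.1 (cc_of_mem hZa.1 i0) (hZa.2.1 hx0) hda hdbF
        (hup2 x0 hx0) h1
      exact hdbX (hab ▸ (⟨this, hdb⟩ : db ∈ Za ∩ Zb))
  have key3 : ∀ Za Zb da db, IsProperMinimalSuperset (cloneSets F R) X Za →
      IsProperMinimalSuperset (cloneSets F R) X Zb → Za ∩ Zb = X →
      da ∈ Za → da ∉ X → db ∈ Zb → db ∉ X →
      (∀ x ∈ X, r da x) → (∀ x ∈ X, r db x) → False := by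
    intro Za Zb da db hZa hZb hab hda hdaX hdb hdbX hdn1 hdn2
    obtain ⟨x0, hx0⟩ := hX.1
    have hdaF : da ∈ F := hZa.1.2.1 hda
    have hdbF : db ∈ F := hZb.1.2.1 hdb
    have hne : da ≠ db := by
      intro he
      subst he
      exact hdaX (hab ▸ (⟨hda, hdb⟩ : da ∈ Za ∩ Zb))
    rcases lin.2.2 da hdaF db hdbF hne with h1 | h1
    · have := clone_interval lin hZa.1.2.1 (cc_of_mem hZa.1 i0) hda (hZa.2.1 hx0) hdbF
        h1 (hdn2 x0 hx0)
      exact hdbX (hab ▸ (⟨this, hdb⟩ : db ∈ Za ∩ Zb))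
    · have := clone_interval lin hZb.1.2.1 (cc_of_mem hZb.1 i0) hdb (hZb.2.1 hx0) hdaF
        h1 (hdn1 x0 hx0)
      exact hdaX (hab ▸ (⟨hda, this⟩ : da ∈ Za ∩ Zb))
  rcases updown d1 hd1F hd1X with u1 | v1 <;>
  rcases updown d2 hd2F hd2X with u2 | v2 <;>
  rcases updown d3 hd3F hd3X with u3 | v3
  · exact key2 _ _ _ _ hZ1 hZ2 e12 hd1 hd1X hd2 hd2X u1 u2
  · exact key2 _ _ _ _ hZ1 hZ2 e12 hd1 hd1X hd2 hd2X u1 u2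
  · exact key2 _ _ _ _ hZ1 hZ3 e13 hd1 hd1X hd3 hd3X u1 u3
  · exact key3 _ _ _ _ hZ2 hZ3 e23 hd2 hd2X hd3 hd3X v2 v3
  · exact key2 _ _ _ _ hZ2 hZ3 e23 hd2 hd2X hd3 hd3X u2 u3
  · exact key3 _ _ _ _ hZ1 hZ3 e13 hd1 hd1X hd3 hd3X v1 v3
  · exact key3 _ _ _ _ hZ1 hZ2 e12 hd1 hd1X hd2 hd2X v1 v2
  · exact key3 _ _ _ _ hZ1 hZ2 e12 hd1 hd1X hd2 hd2X v1 v2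

lemma a5_cloneSets (hF : F.Finite) (hR : IsProfile F R) :
    ¬ HasBicycleChain (cloneSets F R) := by
  rintro ⟨k, A, hk3, hmem, hch⟩
  haveI : NeZero k := ⟨by omega⟩
  set i0 : Fin n := ⟨0, hR.1⟩ with hi0
  have lin := hR.2 i0
  set r := R i0 with hr
  set U : Set α := ⋃ i, A i with hU
  have hUF : U ⊆ F := Set.iUnion_subset fun i => (hmem i).2.1
  have hUfin : U.Finite := hF.subset hUF
  have hUne : U.Nonempty := by
    obtain ⟨w, hw⟩ := (hch 0).1.1
    exact ⟨w, Set.mem_iUnion.2 ⟨0, hw.2⟩⟩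
  obtain ⟨μ, hμU, hmin⟩ := exists_min lin U hUF hUfin hUne
  obtain ⟨j, hμj⟩ := Set.mem_iUnion.1 hμU
  have hcov := (hch j).2.2 hμj
  have hmin' : ∀ (P Q : Set α), P = A (j-1) ∨ P = A j → Q = A j ∨ Q = A (j+1) →
      ∀ x, x ∈ P ∪ Q → x ≠ μ → r μ x := by
    rintro P Q hP hQ x hx hxμ
    apply hmin x _ hxμ
    rcases hx with hx | hx
    · rcases hP with rfl | rfl <;> exact Set.mem_iUnion.2 ⟨_, hx⟩
    · rcases hQ with rfl | rfl <;> exact Set.mem_iUnion.2 ⟨_, hx⟩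
  rcases hcov with hμl | hμr
  · exact bowtie_min_helper lin (hmem _).2.1 (hmem _).2.1 (cc_of_mem (hmem _) i0)
      (cc_of_mem (hmem _) i0) (hch j).1 hμl hμj (hmin' _ _ (Or.inl rfl) (Or.inl rfl))
  · have hb : Bowtie (A j) (A (j+1)) := by
      have := (hch (j+1)).1
      rwa [add_sub_cancel_right] at this
    exact bowtie_min_helper lin (hmem _).2.1 (hmem _).2.1 (cc_of_mem (hmem _) i0)
      (cc_of_mem (hmem _) i0) hb hμj hμr (hmin' _ _ (Or.inr rfl) (Or.inr rfl))

theorem axioms_of_profile (hF : F.Finite) (hne : F.Nonempty)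
    (hR : IsProfile F R) : SatisfiesAxioms F (cloneSets F R) := by
  refine ⟨fun X hX => hX.2.1,
    ⟨fun f hf => singleton_mem_cloneSets hf, fun h => by simpa using h.1, top_mem_cloneSets hne⟩,
    fun X hX Y hY hint => ⟨union_mem_cloneSets hX hY hint, inter_mem_cloneSets hX hY hint⟩,
    fun X hX Y hY hbow => ⟨diff_mem_cloneSets hR hX hY hbow,
      diff_mem_cloneSets hR hY hX ⟨hbow.1.imp (fun x hx => ⟨hx.2, hx.1⟩), hbow.2.2, hbow.2.1⟩⟩,
    fun X hX => a4_cloneSets hR hX, a5_cloneSets hF hR⟩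

end CloneAux
namespace CloneAux

/-- linear order with explicit support -/
def OrdOn (s : Set α) (r : α → α → Prop) : Prop :=
  IsLinOn s r ∧ ∀ a b, r a b → a ∈ s ∧ b ∈ s

def swapOrd (r : α → α → Prop) : α → α → Prop := fun a b => r b a

lemma OrdOn.swap {s : Set α} {r} (h : OrdOn s r) : OrdOn s (swapOrd r) := by
  obtain ⟨⟨hirr, htr, htot⟩, hsupp⟩ := h
  refine ⟨⟨fun a ha h' => hirr a ha h', ?_, ?_⟩, fun a b h' => ⟨(hsupp _ _ h').2, (hsupp _ _ h').1⟩⟩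
  · intro a ha b hb c hc h1 h2
    exact htr c hc b hb a ha h2 h1
  · intro a ha b hb hne
    exact (htot b hb a ha (Ne.symm hne)).imp id id

lemma swap_cc_iff {F X : Set α} {r} (lin : IsLinOn F r) (hXF : X ⊆ F) :
    CC F (swapOrd r) X ↔ CC F r X := by
  have key : ∀ (q : α → α → Prop), IsLinOn F q → CC F q X → CC F (swapOrd q) X := by
    intro q hq hcc c hc c' hc' a ha
    have hac : a ≠ c := fun he => ha.2 (he ▸ hc)
    have hac' : a ≠ c' := fun he => ha.2 (he ▸ hc')
    have e1 := (linOn.flip_iff hq ha.1 (hXF hc) hac)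
    have e2 := (linOn.flip_iff hq ha.1 (hXF hc') hac')
    have := hcc c hc c' hc' a ha
    show q a c ↔ q a c'
    rw [← not_iff_not, e1, e2]
    exact this
  constructor
  · intro h
    have lin' : IsLinOn F (swapOrd r) := by
      refine ⟨fun a ha h' => lin.1 a ha h', ?_, ?_⟩
      · intro a ha b hb c hc h1 h2; exact lin.2.1 c hc b hb a ha h2 h1
      · intro a ha b hb hne; exact (lin.2.2 b hb a ha (Ne.symm hne)).imp id id
    exact key _ lin' h
  · exact key r lin

def prependOrd (a : α) (s : Set α) (r : α → α → Prop) : α → α → Prop :=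
  fun x y => (x = a ∧ y ∈ s) ∨ r x y

lemma OrdOn.prepend {s : Set α} {r} {a : α} (ha : a ∉ s) (h : OrdOn s r) :
    OrdOn (insert a s) (prependOrd a s r) := by
  obtain ⟨⟨hirr, htr, htot⟩, hsupp⟩ := h
  constructor
  · refine ⟨?_, ?_, ?_⟩
    · rintro x hx (⟨rfl, hx'⟩ | h')
      · exact ha hx'
      · exact hirr x (by
          rcases hx with rfl | hx
          · exact absurd (hsupp _ _ h').1 ha
          · exact hx) h'
    · rintro x hx y hy z hz (⟨rfl, hy'⟩ | h1) h2
      · rcases h2 with ⟨rfl, hz'⟩ | h2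
        · exact absurd hy' ha
        · exact Or.inl ⟨rfl, (hsupp _ _ h2).2⟩
      · rcases h2 with ⟨rfl, hz'⟩ | h2
        · exact absurd (hsupp _ _ h1).2 ha
        · have hx' : x ∈ s := (hsupp _ _ h1).1
          have hy' : y ∈ s := (hsupp _ _ h1).2
          have hz' : z ∈ s := (hsupp _ _ h2).2
          exact Or.inr (htr x hx' y hy' z hz' h1 h2)
    · rintro x hx y hy hne
      rcases hx with rfl | hx
      · rcases hy with rfl | hy
        · exact absurd rfl hne
        · exact Or.inl (Or.inl ⟨rfl, hy⟩)
      · rcases hy with rfl | hy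
        · exact Or.inr (Or.inl ⟨rfl, hx⟩)
        · exact (htot x hx y hy hne).imp Or.inr Or.inr
  · rintro x y (⟨rfl, hy⟩ | h')
    · exact ⟨Or.inl rfl, Or.inr hy⟩
    · exact ⟨Or.inr (hsupp _ _ h').1, Or.inr (hsupp _ _ h').2⟩

lemma exists_ordOn (s : Set α) (h : s.Finite) : ∃ r, OrdOn s r := by
  classical
  refine Set.Finite.induction_on (motive := fun s _ => ∃ r, OrdOn s r) s h ?_ ?_
  · exact ⟨fun _ _ => False, ⟨fun a ha => absurd ha (Set.notMem_empty a),
      fun a ha => absurd ha (Set.notMem_empty a), fun a ha => absurd ha (Set.notMem_empty a)⟩,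
      fun a b h => absurd h not_false⟩
  · intro a s ha _ ih
    obtain ⟨r, hr⟩ := ih
    exact ⟨prependOrd a s r, hr.prepend ha⟩

/-- combined order from block partition -/
def combOrd (P : Set (Set α)) (bl : Set α → Set α → Prop) (o : Set α → α → α → Prop) :
    α → α → Prop :=
  fun x y => ∃ B, B ∈ P ∧ ∃ B', B' ∈ P ∧ x ∈ B ∧ y ∈ B' ∧
    ((B = B' ∧ o B x y) ∨ (B ≠ B' ∧ bl B B'))

section Comb

variable {F : Set α} {P : Set (Set α)} {bl : Set α → Set α → Prop} {o : Set α → α → α → Prop}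

variable (hdisj : ∀ B ∈ P, ∀ B' ∈ P, ∀ x, x ∈ B → x ∈ B' → B = B')

include hdisj

lemma combOrd_eval_same (hB : B ∈ P) (hx : x ∈ B) (hy : y ∈ B) :
    combOrd P bl o x y ↔ o B x y := by
  constructor
  · rintro ⟨B1, hB1, B2, hB2, hx1, hy2, (⟨rfl, h⟩ | ⟨hne, h⟩)⟩
    · rwa [hdisj B1 hB1 B hB x hx1 hx] at h
    · exact absurd ((hdisj B1 hB1 B hB x hx1 hx).trans (hdisj B hB B2 hB2 y hy hy2)) hne
  · intro h
    exact ⟨B, hB, B, hB, hx, hy, Or.inl ⟨rfl, h⟩⟩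

lemma combOrd_eval_diff (hB : B ∈ P) (hB' : B' ∈ P) (hx : x ∈ B) (hy : y ∈ B')
    (hne : B ≠ B') : combOrd P bl o x y ↔ bl B B' := by
  constructor
  · rintro ⟨B1, hB1, B2, hB2, hx1, hy2, (⟨rfl, h⟩ | ⟨hne', h⟩)⟩
    · exact absurd ((hdisj B hB B1 hB1 x hx hx1).trans (hdisj B1 hB1 B' hB' y hy2 hy)) hne
    · rwa [hdisj B1 hB1 B hB x hx1 hx, hdisj B2 hB2 B' hB' y hy2 hy] at h
  · intro h
    exact ⟨B, hB, B', hB', hx, hy, Or.inr ⟨hne, h⟩⟩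

lemma combOrd_ordOn
    (hcover : ∀ x ∈ F, ∃ B ∈ P, x ∈ B)
    (hsub : ∀ B ∈ P, B ⊆ F)
    (ho : ∀ B ∈ P, OrdOn B (o B))
    (hasym : ∀ B ∈ P, ∀ B' ∈ P, bl B B' → ¬ bl B' B)
    (htrans : ∀ B ∈ P, ∀ B' ∈ P, ∀ B'' ∈ P, bl B B' → bl B' B'' → bl B B'')
    (htotal : ∀ B ∈ P, ∀ B' ∈ P, B ≠ B' → bl B B' ∨ bl B' B) :
    OrdOn F (combOrd P bl o) := by
  constructor
  · refine ⟨?_, ?_, ?_⟩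
    · rintro x hx ⟨B1, hB1, B2, hB2, hx1, hx2, (⟨rfl, h⟩ | ⟨hne, h⟩)⟩
      · exact (ho B1 hB1).1.1 x hx1 h
      · exact hne (hdisj B1 hB1 B2 hB2 x hx1 hx2)
    · rintro x hx y hy z hz ⟨B1, hB1, B2, hB2, hx1, hy2, hc1⟩ ⟨B2', hB2', B3, hB3, hy2', hz3, hc2⟩
      have he2 : B2' = B2 := hdisj B2' hB2' B2 hB2 y hy2' hy2
      subst he2
      rcases hc1 with ⟨rfl, h1⟩ | ⟨hne1, h1⟩
      · rcases hc2 with ⟨he, h2⟩ | ⟨hne2, h2⟩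
        · subst he
          exact ⟨B1, hB1, B1, hB1, hx1, hz3, Or.inl ⟨rfl, (ho B1 hB1).1.2.1 x hx1 y hy2 z hz3 h1 h2⟩⟩
        · exact ⟨B1, hB1, B3, hB3, hx1, hz3, Or.inr ⟨hne2, h2⟩⟩
      · rcases hc2 with ⟨he, h2⟩ | ⟨hne2, h2⟩
        · subst he
          exact ⟨B1, hB1, B2', hB2', hx1, hz3, Or.inr ⟨hne1, h1⟩⟩
        · have hne3 : B1 ≠ B3 := by
            rintro rfl
            exact hasym B1 hB1 B2' hB2' h1 h2
          exact ⟨B1, hB1, B3, hB3, hx1, hz3,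
            Or.inr ⟨hne3, htrans B1 hB1 B2' hB2' B3 hB3 h1 h2⟩⟩
    · intro x hx y hy hne
      obtain ⟨Bx, hBx, hxB⟩ := hcover x hx
      obtain ⟨By, hBy, hyB⟩ := hcover y hy
      by_cases he : Bx = By
      · subst he
        rcases (ho Bx hBx).1.2.2 x hxB y hyB hne with h | h
        · exact Or.inl ⟨Bx, hBx, Bx, hBx, hxB, hyB, Or.inl ⟨rfl, h⟩⟩
        · exact Or.inr ⟨Bx, hBx, Bx, hBx, hyB, hxB, Or.inl ⟨rfl, h⟩⟩
      · rcases htotal Bx hBx By hBy he with h | h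
        · exact Or.inl ⟨Bx, hBx, By, hBy, hxB, hyB, Or.inr ⟨he, h⟩⟩
        · exact Or.inr ⟨By, hBy, Bx, hBx, hyB, hxB, Or.inr ⟨Ne.symm he, h⟩⟩
  · rintro x y ⟨B1, hB1, B2, hB2, hx1, hy2, -⟩
    exact ⟨hsub B1 hB1 hx1, hsub B2 hB2 hy2⟩

/-- a set inside one block, clone within the block, is a clone of the combined order -/
lemma combOrd_cc_inner {B0 Y : Set α}
    (hcover : ∀ x ∈ F, ∃ B ∈ P, x ∈ B)
    (hB0 : B0 ∈ P) (hY : Y ⊆ B0) (hcc : CC B0 (o B0) Y) :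
    CC F (combOrd P bl o) Y := by
  intro c hc c' hc' a ⟨haF, haY⟩
  by_cases haB : a ∈ B0
  · rw [combOrd_eval_same hdisj hB0 (hY hc) haB, combOrd_eval_same hdisj hB0 (hY hc') haB]
    exact hcc c hc c' hc' a ⟨haB, haY⟩
  · obtain ⟨Ba, hBa, haBa⟩ := hcover a haF
    have hne : B0 ≠ Ba := fun he => haB (he ▸ haBa)
    rw [combOrd_eval_diff hdisj hB0 hBa (hY hc) haBa hne,
      combOrd_eval_diff hdisj hB0 hBa (hY hc') haBa hne]

/-- a union of blocks forming a `bl`-interval is a clone of the combined order -/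
lemma combOrd_cc_blockunion {Y : Set α}
    (hcover : ∀ x ∈ F, ∃ B ∈ P, x ∈ B)
    (hYF : Y ⊆ F)
    (hbu : ∀ B ∈ P, (B ∩ Y).Nonempty → B ⊆ Y)
    (hiv : ∀ B ∈ P, ∀ B' ∈ P, ∀ B'' ∈ P, B ⊆ Y → B' ⊆ Y → B'' ∩ Y = ∅ →
      (bl B B'' ↔ bl B' B'')) :
    CC F (combOrd P bl o) Y := by
  intro c hc c' hc' a ⟨haF, haY⟩
  obtain ⟨Bc, hBc, hcB⟩ := hcover c (hYF hc)
  obtain ⟨Bc', hBc', hcB'⟩ := hcover c' (hYF hc')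
  obtain ⟨Ba, hBa, haB⟩ := hcover a haF
  have hBcY : Bc ⊆ Y := hbu Bc hBc ⟨c, hcB, hc⟩
  have hBc'Y : Bc' ⊆ Y := hbu Bc' hBc' ⟨c', hcB', hc'⟩
  have hBaY : Ba ∩ Y = ∅ := by
    by_contra hne
    exact haY (hbu Ba hBa (Set.nonempty_iff_ne_empty.2 hne) haB)
  have hne1 : Bc ≠ Ba := fun he => haY (hBcY (he ▸ haB))
  have hne2 : Bc' ≠ Ba := fun he => haY (hBc'Y (he ▸ haB))
  rw [combOrd_eval_diff hdisj hBc hBa hcB haB hne1,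
    combOrd_eval_diff hdisj hBc' hBa hcB' haB hne2]
  exact hiv Bc hBc Bc' hBc' Ba hBa hBcY hBc'Y hBaY

end Comb

lemma not_cc_of_witness {F X : Set α} {r} (lin : IsLinOn F r) (hXF : X ⊆ F)
    {c c' a : α} (hc : c ∈ X) (hc' : c' ∈ X) (ha : a ∈ F \ X)
    (h1 : r c a) (h2 : r a c') : ¬ CC F r X := by
  intro hcc
  have := (hcc c hc c' hc' a ha).1 h1
  exact linOn.asymm lin ha.1 (hXF hc') h2 this

end CloneAux
namespace CloneAux

def IsStrong (𝓕 : Set (Set α)) (Y : Set α) : Prop :=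
  Y ∈ 𝓕 ∧ ∀ Z ∈ 𝓕, ¬ Bowtie Y Z

def IsBlockOf (F : Set α) (𝓕 : Set (Set α)) (B : Set α) : Prop :=
  IsStrong 𝓕 B ∧ B ≠ F ∧ ∀ B', IsStrong 𝓕 B' → B ⊆ B' → B' ≠ F → B' = B

def IsBU (F : Set α) (𝓕 : Set (Set α)) (Y : Set α) : Prop :=
  Y ∈ 𝓕 ∧ ∀ B, IsBlockOf F 𝓕 B → (B ∩ Y).Nonempty → B ⊆ Y

section Struct

variable {F : Set α} {𝓕 : Set (Set α)}

lemma exists_maximal_mem (S : Set (Set α)) (hS : S.Finite) (hne : S.Nonempty) :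
    ∃ M ∈ S, ∀ Y ∈ S, M ⊆ Y → Y = M := by
  classical
  obtain ⟨M, hM, hmax⟩ := Finset.exists_maximal (s := hS.toFinset) (by simpa using hne)
  refine ⟨M, by simpa using hM, fun Y hY hMY => ?_⟩
  by_contra hne'
  exact hne' (le_antisymm (hmax (by simpa using hY) hMY) hMY)

lemma exists_minimal_mem (S : Set (Set α)) (hS : S.Finite) (hne : S.Nonempty) :
    ∃ M ∈ S, ∀ Y ∈ S, Y ⊆ M → Y = M := by
  classical
  obtain ⟨M, hM, hmin⟩ := Finset.exists_minimal (s := hS.toFinset) (by simpa using hne)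
  refine ⟨M, by simpa using hM, fun Y hY hMY => ?_⟩
  by_contra hne'
  exact hne' (le_antisymm hMY (hmin (by simpa using hY) hMY))

variable (hax : SatisfiesAxioms F 𝓕) (hF : F.Finite)
include hax

lemma mem_nonempty {Y : Set α} (hY : Y ∈ 𝓕) : Y.Nonempty := by
  rcases Set.eq_empty_or_nonempty Y with rfl | h
  · exact absurd hY hax.2.1.2.1
  · exact h

include hF in
lemma fam_finite : 𝓕.Finite := hF.finite_subsets.subset hax.1

lemma strong_singleton {f : α} (hf : f ∈ F) : IsStrong 𝓕 {f} := by
  refine ⟨hax.2.1.1 f hf, ?_⟩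
  rintro Z hZ ⟨⟨w, hw1, hw2⟩, ⟨u, hu1, hu2⟩, -⟩
  rw [Set.mem_singleton_iff] at hw1 hu1
  exact hu2 (by rw [hu1, ← hw1]; exact hw2)

include hF in
lemma exists_block_above {Y : Set α} (hYs : IsStrong 𝓕 Y) (hYne : Y ≠ F) :
    ∃ B, IsBlockOf F 𝓕 B ∧ Y ⊆ B := by
  classical
  set S : Set (Set α) := {B | IsStrong 𝓕 B ∧ B ≠ F ∧ Y ⊆ B} with hS
  have hfin : S.Finite := (fam_finite hax hF).subset (fun B hB => hB.1.1)
  have hne : S.Nonempty := ⟨Y, hYs, hYne, le_refl _⟩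
  obtain ⟨M, hM, hmax⟩ := exists_maximal_mem S hfin hne
  refine ⟨M, ⟨hM.1, hM.2.1, ?_⟩, hM.2.2⟩
  intro B' hB' hMB' hB'ne
  exact hmax B' ⟨hB', hB'ne, hM.2.2.trans hMB'⟩ hMB'

include hF in
lemma exists_block_of_mem {x : α} (hx : x ∈ F) (h2 : ({x} : Set α) ≠ F) :
    ∃ B, IsBlockOf F 𝓕 B ∧ x ∈ B := by
  obtain ⟨B, hB, hsub⟩ := exists_block_above hax hF (strong_singleton hax hx) h2
  exact ⟨B, hB, hsub rfl⟩

omit hax in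
lemma block_mem {B : Set α} (hB : IsBlockOf F 𝓕 B) : B ∈ 𝓕 := hB.1.1

lemma block_subset_or {Y B : Set α} (hY : Y ∈ 𝓕) (hB : IsBlockOf F 𝓕 B)
    (hint : (B ∩ Y).Nonempty) : Y ⊆ B ∨ B ⊆ Y := by
  have hnb := hB.1.2 Y hY
  by_cases h1 : (B \ Y).Nonempty
  · by_cases h2 : (Y \ B).Nonempty
    · exact absurd ⟨hint, h1, h2⟩ hnb
    · left; rwa [Set.not_nonempty_iff_eq_empty, Set.diff_eq_empty] at h2
  · right; rwa [Set.not_nonempty_iff_eq_empty, Set.diff_eq_empty] at h1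

lemma blocks_disjoint {B B' : Set α} (hB : IsBlockOf F 𝓕 B) (hB' : IsBlockOf F 𝓕 B')
    {x : α} (hx : x ∈ B) (hx' : x ∈ B') : B = B' := by
  rcases block_subset_or hax (block_mem hB') hB ⟨x, hx, hx'⟩ with h | h
  · exact hB'.2.2 B hB.1 h hB.2.1
  · exact (hB.2.2 B' hB'.1 h hB'.2.1).symm

lemma block_or_bu {Y : Set α} (hY : Y ∈ 𝓕) :
    (∃ B, IsBlockOf F 𝓕 B ∧ Y ⊆ B) ∨ IsBU F 𝓕 Y := by
  by_cases hc : ∀ B, IsBlockOf F 𝓕 B → (B ∩ Y).Nonempty → B ⊆ Y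
  · exact Or.inr ⟨hY, hc⟩
  · push_neg at hc
    obtain ⟨B, hB, hint, hnsub⟩ := hc
    rcases block_subset_or hax hY hB hint with h | h
    · exact Or.inl ⟨B, hB, h⟩
    · exact absurd h hnsub

lemma bu_union {Y Z : Set α} (hY : IsBU F 𝓕 Y) (hZ : IsBU F 𝓕 Z)
    (hint : (Y ∩ Z).Nonempty) : IsBU F 𝓕 (Y ∪ Z) := by
  refine ⟨(hax.2.2.1 Y hY.1 Z hZ.1 hint).1, ?_⟩
  rintro B hB ⟨x, hxB, hx | hx⟩
  · exact (hY.2 B hB ⟨x, hxB, hx⟩).trans Set.subset_union_left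
  · exact (hZ.2 B hB ⟨x, hxB, hx⟩).trans Set.subset_union_right

lemma bu_inter {Y Z : Set α} (hY : IsBU F 𝓕 Y) (hZ : IsBU F 𝓕 Z)
    (hint : (Y ∩ Z).Nonempty) : IsBU F 𝓕 (Y ∩ Z) := by
  refine ⟨(hax.2.2.1 Y hY.1 Z hZ.1 hint).2, ?_⟩
  rintro B hB ⟨x, hxB, hx1, hx2⟩
  exact Set.subset_inter (hY.2 B hB ⟨x, hxB, hx1⟩) (hZ.2 B hB ⟨x, hxB, hx2⟩)

lemma bu_diff {Y Z : Set α} (hY : IsBU F 𝓕 Y) (hZ : IsBU F 𝓕 Z)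
    (hbow : Bowtie Y Z) : IsBU F 𝓕 (Y \ Z) := by
  refine ⟨(hax.2.2.2.1 Y hY.1 Z hZ.1 hbow).1, ?_⟩
  rintro B hB ⟨x, hxB, hx1, hx2⟩
  have h1 : B ⊆ Y := hY.2 B hB ⟨x, hxB, hx1⟩
  have h2 : B ∩ Z = ∅ := by
    by_contra h
    exact hx2 (hZ.2 B hB (Set.nonempty_iff_ne_empty.2 h) hxB)
  intro y hy
  exact ⟨h1 hy, fun hyZ => (Set.eq_empty_iff_forall_notMem.1 h2 y) ⟨hy, hyZ⟩⟩

lemma bu_top : IsBU F 𝓕 F :=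
  ⟨hax.2.1.2.2, fun B hB _ => hax.1 B (block_mem hB)⟩

lemma block_bu {B : Set α} (hB : IsBlockOf F 𝓕 B) : IsBU F 𝓕 B := by
  refine ⟨block_mem hB, fun B' hB' ⟨x, hx1, hx2⟩ => ?_⟩
  exact le_of_eq (blocks_disjoint hax hB' hB hx1 hx2)

include hF in
lemma bu_partner
    (hcov : ∀ x ∈ F, ∃ B, IsBlockOf F 𝓕 B ∧ x ∈ B)
    {Y : Set α} (hY : IsBU F 𝓕 Y) (hYF : Y ≠ F) (hYb : ¬ IsBlockOf F 𝓕 Y) :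
    ∃ Z, IsBU F 𝓕 Z ∧ Bowtie Y Z := by
  have hYstr : ¬ IsStrong 𝓕 Y := by
    intro hstr
    obtain ⟨B, hB, hYB⟩ := exists_block_above hax hF hstr hYF
    obtain ⟨x, hx⟩ := mem_nonempty hax hY.1
    obtain ⟨Bx, hBx, hxBx⟩ := hcov x (hax.1 Y hY.1 hx)
    have hBxY : Bx ⊆ Y := hY.2 Bx hBx ⟨x, hxBx, hx⟩
    have : Bx = B := blocks_disjoint hax hBx hB hxBx (hYB hx)
    have hYeq : Y = Bx := le_antisymm (this ▸ hYB) hBxY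
    exact hYb (hYeq ▸ hBx)
  rw [IsStrong] at hYstr
  push_neg at hYstr
  obtain ⟨Z, hZ, hbow⟩ := hYstr hY.1
  rcases block_or_bu hax hZ with ⟨B, hB, hZB⟩ | hZbu
  · have hBY : B ⊆ Y := by
      apply hY.2 B hB
      obtain ⟨w, hw1, hw2⟩ := hbow.1
      exact ⟨w, hZB hw2, hw1⟩
    obtain ⟨u, hu1, hu2⟩ := hbow.2.2
    exact absurd (hBY (hZB hu1)) hu2
  · exact ⟨Z, hZbu, hbow⟩

end Struct

end CloneAux
namespace CloneAux

def IsMaxBU (F : Set α) (𝓕 : Set (Set α)) (M : Set α) : Prop :=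
  IsBU F 𝓕 M ∧ M ≠ F ∧ ∀ Y, IsBU F 𝓕 Y → M ⊆ Y → Y ≠ F → Y = M

lemma bowtie_comm {X Y : Set α} (h : Bowtie X Y) : Bowtie Y X :=
  ⟨h.1.imp (fun x hx => ⟨hx.2, hx.1⟩), h.2.2, h.2.1⟩

lemma not_encard_le_two_of_three {S : Set (Set α)} {a b c : Set α}
    (ha : a ∈ S) (hb : b ∈ S) (hc : c ∈ S)
    (hab : a ≠ b) (hac : a ≠ c) (hbc : b ≠ c) : ¬ (S.encard ≤ 2) := by
  intro hle
  have hsub : ({a, b, c} : Set (Set α)) ⊆ S := by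
    intro x hx
    rcases hx with rfl | rfl | rfl
    · exact ha
    · exact hb
    · exact hc
  have h3 : ({a, b, c} : Set (Set α)).encard = 3 :=
    Set.encard_eq_three.2 ⟨a, b, c, hab, hac, hbc, rfl⟩
  have := (h3 ▸ Set.encard_mono hsub).trans hle
  norm_num at this

def tri (M M' M'' : Set α) : ZMod 3 → Set α :=
  fun i => if i = 0 then M else if i = 1 then M' else M''

lemma tri0 {M M' M'' : Set α} : tri M M' M'' 0 = M := by
  unfold tri; rw [if_pos rfl]

lemma tri1 {M M' M'' : Set α} : tri M M' M'' 1 = M' := by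
  unfold tri; rw [if_neg (by decide), if_pos rfl]

lemma tri2 {M M' M'' : Set α} : tri M M' M'' 2 = M'' := by
  unfold tri; rw [if_neg (by decide), if_neg (by decide)]

def quad (A0 A1 A2 A3 : Set α) : ZMod 4 → Set α :=
  fun i => if i = 0 then A0 else if i = 1 then A1 else if i = 2 then A2 else A3

lemma quad0 {A0 A1 A2 A3 : Set α} : quad A0 A1 A2 A3 0 = A0 := by
  unfold quad; rw [if_pos rfl]

lemma quad1 {A0 A1 A2 A3 : Set α} : quad A0 A1 A2 A3 1 = A1 := by
  unfold quad; rw [if_neg (by decide), if_pos rfl]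

lemma quad2 {A0 A1 A2 A3 : Set α} : quad A0 A1 A2 A3 2 = A2 := by
  unfold quad; rw [if_neg (by decide), if_neg (by decide), if_pos rfl]

lemma quad3 {A0 A1 A2 A3 : Set α} : quad A0 A1 A2 A3 3 = A3 := by
  unfold quad; rw [if_neg (by decide), if_neg (by decide), if_neg (by decide)]

section QCase

variable {F : Set α} {𝓕 : Set (Set α)}
variable (hax : SatisfiesAxioms F 𝓕) (hF : F.Finite)

include hax hF in
lemma exists_maxbu_above {Y : Set α} (hY : IsBU F 𝓕 Y) (hYF : Y ≠ F) :
    ∃ M, IsMaxBU F 𝓕 M ∧ Y ⊆ M := by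
  set S : Set (Set α) := {Z | IsBU F 𝓕 Z ∧ Z ≠ F ∧ Y ⊆ Z} with hS
  have hfin : S.Finite := (fam_finite hax hF).subset (fun B hB => hB.1.1)
  obtain ⟨M, hM, hmax⟩ := exists_maximal_mem S hfin ⟨Y, hY, hYF, le_refl _⟩
  refine ⟨M, ⟨hM.1, hM.2.1, ?_⟩, hM.2.2⟩
  intro Z hZ hMZ hZF
  exact hmax Z ⟨hZ, hZF, hM.2.2.trans hMZ⟩ hMZ

include hax in
lemma max_union_top {A B : Set α} (hA : IsMaxBU F 𝓕 A) (hB : IsMaxBU F 𝓕 B)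
    (hne : A ≠ B) (hint : (A ∩ B).Nonempty) : A ∪ B = F := by
  by_contra hne'
  have hmem := bu_union hax hA.1 hB.1 hint
  have h1 : A ∪ B = A := hA.2.2 _ hmem Set.subset_union_left hne'
  have hBA : B ⊆ A := h1 ▸ Set.subset_union_right
  exact hne (hB.2.2 A hA.1 hBA hA.2.1)

lemma max_bowtie {A B : Set α} (hA : IsMaxBU F 𝓕 A) (hB : IsMaxBU F 𝓕 B)
    (hne : A ≠ B) (hint : (A ∩ B).Nonempty) : Bowtie A B := by
  refine ⟨hint, ?_, ?_⟩
  · rw [Set.nonempty_iff_ne_empty]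
    intro h
    rw [Set.diff_eq_empty] at h
    exact hne (hA.2.2 B hB.1 h hB.2.1).symm
  · rw [Set.nonempty_iff_ne_empty]
    intro h
    rw [Set.diff_eq_empty] at h
    exact hne (hB.2.2 A hA.1 h hA.2.1)

include hax hF in
lemma no_third_max {M M' M'' : Set α} (hM : IsMaxBU F 𝓕 M) (hM' : IsMaxBU F 𝓕 M')
    (hMM' : Bowtie M M') (hM'' : IsMaxBU F 𝓕 M'') : M'' = M ∨ M'' = M' := by
  by_contra hcon
  push_neg at hcon
  obtain ⟨hne1, hne2⟩ := hcon
  have hneMM' : M ≠ M' := by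
    intro h
    obtain ⟨u, hu⟩ := hMM'.2.1
    exact hu.2 (h ▸ hu.1)
  have htop : M ∪ M' = F := max_union_top hax hM hM' hneMM' hMM'.1
  have hsubF : ∀ {Z : Set α}, IsMaxBU F 𝓕 Z → Z ⊆ F := fun hZ => hax.1 _ hZ.1.1
  have hint1 : (M'' ∩ M).Nonempty := by
    rw [Set.nonempty_iff_ne_empty]
    intro h
    have hsub : M'' ⊆ M' := by
      intro x hx
      have hxF : x ∈ F := hsubF hM'' hx
      rcases (htop ▸ hxF : x ∈ M ∪ M') with h1 | h1
      · exact ((Set.eq_empty_iff_forall_notMem.1 h x) ⟨hx, h1⟩).elim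
      · exact h1
    exact hne2 (hM''.2.2 M' hM'.1 hsub hM'.2.1).symm
  have hint2 : (M'' ∩ M').Nonempty := by
    rw [Set.nonempty_iff_ne_empty]
    intro h
    have hsub : M'' ⊆ M := by
      intro x hx
      have hxF : x ∈ F := hsubF hM'' hx
      rcases (htop ▸ hxF : x ∈ M ∪ M') with h1 | h1
      · exact h1
      · exact ((Set.eq_empty_iff_forall_notMem.1 h x) ⟨hx, h1⟩).elim
    exact hne1 (hM''.2.2 M hM.1 hsub hM.2.1).symm
  have hbow1 : Bowtie M M'' := max_bowtie hM hM'' (Ne.symm hne1)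
    (hint1.imp (fun x hx => ⟨hx.2, hx.1⟩))
  have hbow2 : Bowtie M' M'' := max_bowtie hM' hM'' (Ne.symm hne2)
    (hint2.imp (fun x hx => ⟨hx.2, hx.1⟩))
  have htop1 : M ∪ M'' = F := max_union_top hax hM hM'' (Ne.symm hne1) hbow1.1
  have htop2 : M' ∪ M'' = F := max_union_top hax hM' hM'' (Ne.symm hne2) hbow2.1
  by_cases hT : (M ∩ M' ∩ M'').Nonempty
  · obtain ⟨hMf, hM'f, hM''f⟩ : M ∈ 𝓕 ∧ M' ∈ 𝓕 ∧ M'' ∈ 𝓕 := ⟨hM.1.1, hM'.1.1, hM''.1.1⟩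
    have hP1 : M ∩ M' ∈ 𝓕 := (hax.2.2.1 M hMf M' hM'f hMM'.1).2
    have hP2 : M' ∩ M'' ∈ 𝓕 := (hax.2.2.1 M' hM'f M'' hM''f
      (hint2.imp (fun x hx => ⟨hx.2, hx.1⟩))).2
    have hP3 : M ∩ M'' ∈ 𝓕 := (hax.2.2.1 M hMf M'' hM''f
      (hint1.imp (fun x hx => ⟨hx.2, hx.1⟩))).2
    have hTf : M ∩ M' ∩ M'' ∈ 𝓕 := (hax.2.2.1 _ hP1 _ hM''f hT).2
    set T := M ∩ M' ∩ M'' with hTdef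
    have hC1 : ∃ x, x ∈ (M ∩ M') ∧ x ∉ M'' := by
      obtain ⟨x, hxF, hxM''⟩ : ∃ x, x ∈ F ∧ x ∉ M'' := by
        by_contra hc
        push_neg at hc
        exact hM''.2.1 (le_antisymm (hsubF hM'') hc)
      have hx1 : x ∈ M := (htop1 ▸ hxF : x ∈ M ∪ M'').resolve_right hxM''
      have hx2 : x ∈ M' := (htop2 ▸ hxF : x ∈ M' ∪ M'').resolve_right hxM''
      exact ⟨x, ⟨hx1, hx2⟩, hxM''⟩
    have hC2 : ∃ x, x ∈ (M' ∩ M'') ∧ x ∉ M := by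
      obtain ⟨x, hxF, hxM⟩ : ∃ x, x ∈ F ∧ x ∉ M := by
        by_contra hc
        push_neg at hc
        exact hM.2.1 (le_antisymm (hsubF hM) hc)
      have hx1 : x ∈ M' := (htop ▸ hxF : x ∈ M ∪ M').resolve_left hxM
      have hx2 : x ∈ M'' := (htop1 ▸ hxF : x ∈ M ∪ M'').resolve_left hxM
      exact ⟨x, ⟨hx1, hx2⟩, hxM⟩
    have hC3 : ∃ x, x ∈ (M ∩ M'') ∧ x ∉ M' := by
      obtain ⟨x, hxF, hxM'⟩ : ∃ x, x ∈ F ∧ x ∉ M' := by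
        by_contra hc
        push_neg at hc
        exact hM'.2.1 (le_antisymm (hsubF hM') hc)
      have hx1 : x ∈ M := (htop ▸ hxF : x ∈ M ∪ M').resolve_right hxM'
      have hx2 : x ∈ M'' := (htop2 ▸ hxF : x ∈ M' ∪ M'').resolve_left hxM'
      exact ⟨x, ⟨hx1, hx2⟩, hxM'⟩
    have minstep : ∀ P, P ∈ 𝓕 → T ⊆ P → (∃ x, x ∈ P ∧ x ∉ T) →
        ∃ Z, IsProperMinimalSuperset 𝓕 T Z ∧ Z ⊆ P := by
      rintro P hP hTP ⟨x, hxP, hxT⟩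
      set S : Set (Set α) := {W | W ∈ 𝓕 ∧ T ⊆ W ∧ T ≠ W ∧ W ⊆ P} with hSdef
      have hfin : S.Finite := (fam_finite hax hF).subset (fun B hB => hB.1)
      have hne : S.Nonempty := ⟨P, hP, hTP, fun h => hxT (h ▸ hxP), le_refl _⟩
      obtain ⟨Z, hZ, hmin⟩ := exists_minimal_mem S hfin hne
      refine ⟨Z, ⟨hZ.1, hZ.2.1, hZ.2.2.1, ?_⟩, hZ.2.2.2⟩
      intro Y hY hTY hYZ
      by_cases hYT : Y = T
      · exact Or.inl hYT
      · exact Or.inr (hmin Y ⟨hY, hTY, fun h => hYT h.symm, hYZ.trans hZ.2.2.2⟩ hYZ)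
    have hT1 : T ⊆ M ∩ M' := Set.inter_subset_left
    have hT2 : T ⊆ M' ∩ M'' := fun x hx => ⟨hx.1.2, hx.2⟩
    have hT3 : T ⊆ M ∩ M'' := fun x hx => ⟨hx.1.1, hx.2⟩
    obtain ⟨Z1, hZ1, hZ1s⟩ := minstep _ hP1 hT1
      (hC1.imp (fun x hx => ⟨hx.1, fun h => hx.2 h.2⟩))
    obtain ⟨Z2, hZ2, hZ2s⟩ := minstep _ hP2 hT2
      (hC2.imp (fun x hx => ⟨hx.1, fun h => hx.2 h.1.1⟩))
    obtain ⟨Z3, hZ3, hZ3s⟩ := minstep _ hP3 hT3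
      (hC3.imp (fun x hx => ⟨hx.1, fun h => hx.2 h.1.2⟩))
    have hdist : ∀ Za Zb Pa Pb, IsProperMinimalSuperset 𝓕 T Za →
        IsProperMinimalSuperset 𝓕 T Zb → Za ⊆ Pa → Zb ⊆ Pb → Pa ∩ Pb ⊆ T → Za ≠ Zb := by
      intro Za Zb Pa Pb hZa hZb hsa hsb hPab he
      subst he
      have hsubT : Za ⊆ T := fun x hx => hPab ⟨hsa hx, hsb hx⟩
      exact hZa.2.2.1 (le_antisymm hZa.2.1 hsubT)
    have h12 : Z1 ≠ Z2 := hdist _ _ _ _ hZ1 hZ2 hZ1s hZ2s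
      (fun x hx => ⟨⟨hx.1.1, hx.1.2⟩, hx.2.2⟩)
    have h13 : Z1 ≠ Z3 := hdist _ _ _ _ hZ1 hZ3 hZ1s hZ3s
      (fun x hx => ⟨⟨hx.1.1, hx.1.2⟩, hx.2.2⟩)
    have h23 : Z2 ≠ Z3 := hdist _ _ _ _ hZ2 hZ3 hZ2s hZ3s
      (fun x hx => ⟨⟨hx.2.1, hx.1.1⟩, hx.1.2⟩)
    exact not_encard_le_two_of_three hZ1 hZ2 hZ3 h12 h13 h23 (hax.2.2.2.2.1 T hTf)
  · rw [Set.not_nonempty_iff_eq_empty] at hT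
    apply hax.2.2.2.2.2
    refine ⟨3, tri M M' M'', le_refl _, ?_, ?_⟩
    · intro i
      rcases (by decide : ∀ j : ZMod 3, j = 0 ∨ j = 1 ∨ j = 2) i with rfl | rfl | rfl
      · rw [tri0]; exact hM.1.1
      · rw [tri1]; exact hM'.1.1
      · rw [tri2]; exact hM''.1.1
    · have hTall : ∀ x, x ∈ M → x ∈ M' → x ∈ M'' → False := by
        intro x h1 h2 h3
        exact absurd (hT ▸ (⟨⟨h1, h2⟩, h3⟩ : x ∈ M ∩ M' ∩ M'')) (Set.notMem_empty x)
      intro i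
      have e01 : (0 : ZMod 3) - 1 = 2 := by decide
      have f01 : (0 : ZMod 3) + 1 = 1 := by decide
      have e12 : (1 : ZMod 3) - 1 = 0 := by decide
      have f12 : (1 : ZMod 3) + 1 = 2 := by decide
      have e23 : (2 : ZMod 3) - 1 = 1 := by decide
      have f23 : (2 : ZMod 3) + 1 = 0 := by decide
      rcases (by decide : ∀ j : ZMod 3, j = 0 ∨ j = 1 ∨ j = 2) i with rfl | rfl | rfl
      · rw [e01, f01, tri2, tri0, tri1]
        refine ⟨bowtie_comm hbow1, ?_, ?_⟩
        · ext x
          simp only [Set.mem_inter_iff, Set.mem_empty_iff_false, iff_false, not_and]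
          intro h1 h2
          exact hTall x h1.2 h2 h1.1
        · intro x hx
          exact (htop2 ▸ (hax.1 M hM.1.1 hx) : x ∈ M' ∪ M'').elim
            (fun h => Or.inr h) (fun h => Or.inl h)
      · rw [e12, f12, tri0, tri1, tri2]
        refine ⟨hMM', ?_, ?_⟩
        · ext x
          simp only [Set.mem_inter_iff, Set.mem_empty_iff_false, iff_false, not_and]
          intro h1 h2
          exact hTall x h1.1 h1.2 h2
        · intro x hx
          exact (htop1 ▸ (hax.1 M' hM'.1.1 hx) : x ∈ M ∪ M'').elim
            (fun h => Or.inl h) (fun h => Or.inr h)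
      · rw [e23, f23, tri1, tri2, tri0]
        refine ⟨hbow2, ?_, ?_⟩
        · ext x
          simp only [Set.mem_inter_iff, Set.mem_empty_iff_false, iff_false, not_and]
          intro h1 h2
          exact hTall x h2 h1.1 h1.2
        · intro x hx
          exact (htop ▸ (hax.1 M'' hM''.1.1 hx) : x ∈ M ∪ M').elim
            (fun h => Or.inr h) (fun h => Or.inl h)

end QCase

end CloneAux
namespace CloneAux

section WChain

variable {F : Set α} {𝓕 : Set (Set α)} {M M' : Set α}
variable (hax : SatisfiesAxioms F 𝓕) (hF : F.Finite)
variable (hM : IsMaxBU F 𝓕 M) (hM' : IsMaxBU F 𝓕 M') (hbow : Bowtie M M')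

include hax hF hM hM' hbow in
lemma sub_max {Y : Set α} (hY : IsBU F 𝓕 Y) (hYF : Y ≠ F) : Y ⊆ M ∨ Y ⊆ M' := by
  obtain ⟨N, hN, hYN⟩ := exists_maxbu_above hax hF hY hYF
  rcases no_third_max hax hF hM hM' hbow hN with h | h
  · exact Or.inl (h ▸ hYN)
  · exact Or.inr (h ▸ hYN)

include hax hM hM' hbow in
lemma mm_top : M ∪ M' = F := by
  apply max_union_top hax hM hM'
  · intro h
    obtain ⟨u, hu⟩ := hbow.2.1
    exact hu.2 (h ▸ hu.1)
  · exact hbow.1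

include hax hF hM hM' hbow in
lemma straddle_left {W : Set α} (hW : IsBU F 𝓕 W) (hWF : W ≠ F)
    (h1 : (W ∩ (M \ M')).Nonempty) (h2 : (W ∩ (M ∩ M')).Nonempty) : M \ M' ⊆ W := by
  have hWM : W ⊆ M := by
    rcases sub_max hax hF hM hM' hbow hW hWF with h | h
    · exact h
    · obtain ⟨x, hx⟩ := h1
      exact absurd (h hx.1) hx.2.2
  have hbw : Bowtie W M' := by
    refine ⟨h2.imp (fun x hx => ⟨hx.1, hx.2.2⟩), h1.imp (fun x hx => ⟨hx.1, hx.2.2⟩), ?_⟩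
    obtain ⟨y, hy⟩ := hbow.2.2
    exact ⟨y, hy.1, fun hyW => hy.2 (hWM hyW)⟩
  have hun : W ∪ M' = F := by
    by_contra hne
    have heq := hM'.2.2 (W ∪ M') (bu_union hax hW hM'.1 hbw.1) Set.subset_union_right hne
    obtain ⟨x, hx⟩ := h1
    have : x ∈ M' := heq ▸ (Or.inl hx.1 : x ∈ W ∪ M')
    exact hx.2.2 this
  intro x hx
  have hxF : x ∈ F := hax.1 M hM.1.1 hx.1
  rcases (hun ▸ hxF : x ∈ W ∪ M') with h | h
  · exact h
  · exact absurd h hx.2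

include hax hF hM hM' hbow in
lemma bl_block (hcov : ∀ x ∈ F, ∃ B, IsBlockOf F 𝓕 B ∧ x ∈ B) :
    IsBlockOf F 𝓕 (M \ M') := by
  have hbl_bu : IsBU F 𝓕 (M \ M') := bu_diff hax hM.1 hM'.1 hbow
  have hblF : M \ M' ≠ F := by
    intro h
    obtain ⟨y, hy⟩ := hbow.2.2
    have hyF : y ∈ F := hax.1 M' hM'.1.1 hy.1
    rw [← h] at hyF
    exact hyF.2 hy.1
  by_contra hnb
  obtain ⟨Z, hZ, hzbow⟩ := bu_partner hax hF hcov hbl_bu hblF hnb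
  have hZF : Z ≠ F := by
    rintro rfl
    obtain ⟨u, hu⟩ := hzbow.2.1
    exact hu.2 (hax.1 M hM.1.1 hu.1.1)
  have hZM : Z ⊆ M := by
    rcases sub_max hax hF hM hM' hbow hZ hZF with h | h
    · exact h
    · obtain ⟨x, hx⟩ := hzbow.1
      exact absurd (h hx.2) hx.1.2
  have h2 : (Z ∩ (M ∩ M')).Nonempty := by
    obtain ⟨x, hx⟩ := hzbow.2.2
    have hxM : x ∈ M := hZM hx.1
    have hxM' : x ∈ M' := by
      by_contra h
      exact hx.2 ⟨hxM, h⟩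
    exact ⟨x, hx.1, hxM, hxM'⟩
  have hsub := straddle_left hax hF hM hM' hbow hZ hZF
    (hzbow.1.imp (fun x hx => ⟨hx.2, hx.1⟩)) h2
  obtain ⟨u, hu⟩ := hzbow.2.1
  exact hu.2 (hsub hu.1)

include hax hF hM hM' hbow in
lemma w_chain {W W' : Set α}
    (hW : IsBU F 𝓕 W) (hWbl : M \ M' ⊆ W) (hWF : W ≠ F)
    (hW' : IsBU F 𝓕 W') (hW'bl : M \ M' ⊆ W') (hW'F : W' ≠ F) :
    W ⊆ W' ∨ W' ⊆ W := by
  by_contra hcon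
  push_neg at hcon
  obtain ⟨hnc1, hnc2⟩ := hcon
  obtain ⟨x1, hx1W, hx1W'⟩ := Set.not_subset.1 hnc1
  obtain ⟨x2, hx2W', hx2W⟩ := Set.not_subset.1 hnc2
  obtain ⟨xBL, hxBL⟩ := hbow.2.1
  have hWM : W ⊆ M := by
    rcases sub_max hax hF hM hM' hbow hW hWF with h | h
    · exact h
    · exact absurd (h (hWbl hxBL)) hxBL.2
  have hW'M : W' ⊆ M := by
    rcases sub_max hax hF hM hM' hbow hW' hW'F with h | h
    · exact h
    · exact absurd (h (hW'bl hxBL)) hxBL.2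
  set BL := M \ M' with hBLdef
  set C := M ∩ M' with hCdef
  have hWdec : ∀ x, x ∈ W ↔ (x ∈ BL ∨ x ∈ W ∩ C) := by
    intro x
    constructor
    · intro hx
      by_cases hx' : x ∈ M'
      · exact Or.inr ⟨hx, hWM hx, hx'⟩
      · exact Or.inl ⟨hWM hx, hx'⟩
    · rintro (hx | hx)
      · exact hWbl hx
      · exact hx.1
  have hW'dec : ∀ x, x ∈ W' ↔ (x ∈ BL ∨ x ∈ W' ∩ C) := by
    intro x
    constructor
    · intro hx
      by_cases hx' : x ∈ M'
      · exact Or.inr ⟨hx, hW'M hx, hx'⟩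
      · exact Or.inl ⟨hW'M hx, hx'⟩
    · rintro (hx | hx)
      · exact hW'bl hx
      · exact hx.1
  set P := W ∩ C with hPdef
  set P' := W' ∩ C with hP'def
  have hPC : P ⊆ C := Set.inter_subset_right
  have hP'C : P' ⊆ C := Set.inter_subset_right
  have hBLC : ∀ x, x ∈ BL → x ∉ C := fun x hx hc => hx.2 hc.2
  have hxP : x1 ∈ P ∧ x1 ∉ P' := by
    have h1 : x1 ∈ P := by
      rcases (hWdec x1).1 hx1W with h | h
      · exact absurd (hW'bl h) hx1W'
      · exact h
    exact ⟨h1, fun h => hx1W' h.1⟩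
  have hxP' : x2 ∈ P' ∧ x2 ∉ P := by
    have h1 : x2 ∈ P' := by
      rcases (hW'dec x2).1 hx2W' with h | h
      · exact absurd (hWbl h) hx2W
      · exact h
    exact ⟨h1, fun h => hx2W h.1⟩
  have hWeqM' : W ∩ M' = P := by
    ext x
    constructor
    · intro hx
      exact ⟨hx.1, hWM hx.1, hx.2⟩
    · intro hx
      exact ⟨hx.1, hx.2.2⟩
  have hW'eqM' : W' ∩ M' = P' := by
    ext x
    constructor
    · intro hx
      exact ⟨hx.1, hW'M hx.1, hx.2⟩
    · intro hx
      exact ⟨hx.1, hx.2.2⟩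
  have hPf : P ∈ 𝓕 := hWeqM' ▸ (hax.2.2.1 W hW.1 M' hM'.1.1
    (hWeqM' ▸ ⟨x1, hxP.1⟩ : (W ∩ M').Nonempty)).2
  have hP'f : P' ∈ 𝓕 := hW'eqM' ▸ (hax.2.2.1 W' hW'.1 M' hM'.1.1
    (hW'eqM' ▸ ⟨x2, hxP'.1⟩ : (W' ∩ M').Nonempty)).2
  apply hax.2.2.2.2.2
  by_cases hQ : (P ∩ P').Nonempty
  · -- 4-chain
    obtain ⟨xQ, hxQ⟩ := hQ
    have hbow1 : Bowtie W P' := by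
      refine ⟨⟨xQ, hxQ.1.1, hxQ.2⟩, ⟨xBL, hWbl hxBL, fun h => hBLC xBL hxBL (hP'C h)⟩,
        ⟨x2, hxP'.1, hx2W⟩⟩
    have hbow2 : Bowtie W' P := by
      refine ⟨⟨xQ, hxQ.2.1, hxQ.1⟩, ⟨xBL, hW'bl hxBL, fun h => hBLC xBL hxBL (hPC h)⟩,
        ⟨x1, hxP.1, hx1W'⟩⟩
    have hA0f : W \ P' ∈ 𝓕 := (hax.2.2.2.1 W hW.1 P' hP'f hbow1).1
    have hA3f : W' \ P ∈ 𝓕 := (hax.2.2.2.1 W' hW'.1 P hPf hbow2).1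
    have hA0dec : ∀ x, x ∈ W \ P' ↔ (x ∈ BL ∨ (x ∈ P ∧ x ∉ P')) := by
      intro x
      constructor
      · rintro ⟨hxW, hxP'⟩
        rcases (hWdec x).1 hxW with h | h
        · exact Or.inl h
        · exact Or.inr ⟨h, hxP'⟩
      · rintro (hx | hx)
        · exact ⟨hWbl hx, fun h => hBLC x hx (hP'C h)⟩
        · exact ⟨hx.1.1, hx.2⟩
    have hA3dec : ∀ x, x ∈ W' \ P ↔ (x ∈ BL ∨ (x ∈ P' ∧ x ∉ P)) := by
      intro x
      constructor
      · rintro ⟨hxW, hxP⟩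
        rcases (hW'dec x).1 hxW with h | h
        · exact Or.inl h
        · exact Or.inr ⟨h, hxP⟩
      · rintro (hx | hx)
        · exact ⟨hW'bl hx, fun h => hBLC x hx (hPC h)⟩
        · exact ⟨hx.1.1, hx.2⟩
    refine ⟨4, quad (W \ P') P P' (W' \ P), by norm_num, ?_, ?_⟩
    · intro i
      rcases (by decide : ∀ j : ZMod 4, j = 0 ∨ j = 1 ∨ j = 2 ∨ j = 3) i with rfl | rfl | rfl | rfl
      · rw [quad0]; exact hA0f
      · rw [quad1]; exact hPf
      · rw [quad2]; exact hP'f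
      · rw [quad3]; exact hA3f
    · intro i
      have e0 : (0 : ZMod 4) - 1 = 3 := by decide
      have f0 : (0 : ZMod 4) + 1 = 1 := by decide
      have e1 : (1 : ZMod 4) - 1 = 0 := by decide
      have f1 : (1 : ZMod 4) + 1 = 2 := by decide
      have e2 : (2 : ZMod 4) - 1 = 1 := by decide
      have f2 : (2 : ZMod 4) + 1 = 3 := by decide
      have e3 : (3 : ZMod 4) - 1 = 2 := by decide
      have f3 : (3 : ZMod 4) + 1 = 0 := by decide
      rcases (by decide : ∀ j : ZMod 4, j = 0 ∨ j = 1 ∨ j = 2 ∨ j = 3) i with rfl | rfl | rfl | rfl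
      · rw [e0, f0, quad3, quad0, quad1]
        refine ⟨?_, ?_, ?_⟩
        · -- Bowtie (W'\P) (W\P')
          refine ⟨⟨xBL, (hA3dec xBL).2 (Or.inl hxBL), (hA0dec xBL).2 (Or.inl hxBL)⟩,
            ⟨x2, (hA3dec x2).2 (Or.inr ⟨hxP'.1, hxP'.2⟩), ?_⟩,
            ⟨x1, (hA0dec x1).2 (Or.inr ⟨hxP.1, hxP.2⟩), ?_⟩⟩
          · intro h
            rcases (hA0dec x2).1 h with h' | h'
            · exact hBLC x2 h' (hP'C hxP'.1)
            · exact hxP'.2 h'.1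
          · intro h
            rcases (hA3dec x1).1 h with h' | h'
            · exact hBLC x1 h' (hPC hxP.1)
            · exact hxP.2 h'.1
        · ext x
          simp only [Set.mem_inter_iff, Set.mem_empty_iff_false, iff_false, not_and]
          rintro ⟨h3, h0⟩ hP1
          rcases (hA3dec x).1 h3 with h | h
          · exact hBLC x h (hPC hP1)
          · exact h.2 hP1
        · intro x hx
          rcases (hA0dec x).1 hx with h | h
          · exact Or.inl ((hA3dec x).2 (Or.inl h))
          · exact Or.inr h.1
      · rw [e1, f1, quad0, quad1, quad2]
        refine ⟨?_, ?_, ?_⟩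
        · -- Bowtie (W\P') P
          refine ⟨⟨x1, (hA0dec x1).2 (Or.inr ⟨hxP.1, hxP.2⟩), hxP.1⟩,
            ⟨xBL, (hA0dec xBL).2 (Or.inl hxBL), fun h => hBLC xBL hxBL (hPC h)⟩,
            ⟨xQ, hxQ.1, ?_⟩⟩
          intro h
          rcases (hA0dec xQ).1 h with h' | h'
          · exact hBLC xQ h' (hPC hxQ.1)
          · exact h'.2 hxQ.2
        · ext x
          simp only [Set.mem_inter_iff, Set.mem_empty_iff_false, iff_false, not_and]
          rintro ⟨h0, h1⟩ h2
          rcases (hA0dec x).1 h0 with h | h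
          · exact hBLC x h (hPC h1)
          · exact h.2 h2
        · intro x hx
          by_cases h : x ∈ P'
          · exact Or.inr h
          · exact Or.inl ((hA0dec x).2 (Or.inr ⟨hx, h⟩))
      · rw [e2, f2, quad1, quad2, quad3]
        refine ⟨?_, ?_, ?_⟩
        · exact ⟨⟨xQ, hxQ.1, hxQ.2⟩, ⟨x1, hxP.1, hxP.2⟩, ⟨x2, hxP'.1, hxP'.2⟩⟩
        · ext x
          simp only [Set.mem_inter_iff, Set.mem_empty_iff_false, iff_false, not_and]
          rintro ⟨h1, h2⟩ h3
          rcases (hA3dec x).1 h3 with h | h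
          · exact hBLC x h (hPC h1)
          · exact h.2 h1
        · intro x hx
          by_cases h : x ∈ P
          · exact Or.inl h
          · exact Or.inr ((hA3dec x).2 (Or.inr ⟨hx, h⟩))
      · rw [e3, f3, quad2, quad3, quad0]
        refine ⟨?_, ?_, ?_⟩
        · -- Bowtie P' (W'\P)
          refine ⟨⟨x2, hxP'.1, (hA3dec x2).2 (Or.inr ⟨hxP'.1, hxP'.2⟩)⟩,
            ⟨xQ, hxQ.2, ?_⟩,
            ⟨xBL, (hA3dec xBL).2 (Or.inl hxBL), fun h => hBLC xBL hxBL (hP'C h)⟩⟩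
          intro h
          rcases (hA3dec xQ).1 h with h' | h'
          · exact hBLC xQ h' (hP'C hxQ.2)
          · exact h'.2 hxQ.1
        · ext x
          simp only [Set.mem_inter_iff, Set.mem_empty_iff_false, iff_false, not_and]
          rintro ⟨h2, h3⟩ h0
          rcases (hA0dec x).1 h0 with h | h
          · exact hBLC x h (hP'C h2)
          · exact h.2 h2
        · intro x hx
          rcases (hA3dec x).1 hx with h | h
          · exact Or.inr ((hA0dec x).2 (Or.inl h))
          · exact Or.inl h.1
  · -- 3-chain
    rw [Set.not_nonempty_iff_eq_empty] at hQ
    have hQ' : ∀ x, x ∈ P → x ∈ P' → False := fun x h1 h2 =>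
      absurd (hQ ▸ (⟨h1, h2⟩ : x ∈ P ∩ P')) (Set.notMem_empty x)
    have hUf : W ∪ W' ∈ 𝓕 := (hax.2.2.1 W hW.1 W' hW'.1
      ⟨xBL, hWbl hxBL, hW'bl hxBL⟩).1
    have hUeq : (W ∪ W') ∩ M' = P ∪ P' := by
      ext x
      constructor
      · rintro ⟨hx | hx, hxM'⟩
        · exact Or.inl ⟨hx, hWM hx, hxM'⟩
        · exact Or.inr ⟨hx, hW'M hx, hxM'⟩
      · rintro (hx | hx)
        · exact ⟨Or.inl hx.1, hx.2.2⟩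
        · exact ⟨Or.inr hx.1, hx.2.2⟩
    have hPP'f : P ∪ P' ∈ 𝓕 := hUeq ▸ (hax.2.2.1 _ hUf M' hM'.1.1
      ⟨x1, Or.inl hx1W, hxP.1.2.2⟩).2
    refine ⟨3, tri W W' (P ∪ P'), le_refl _, ?_, ?_⟩
    · intro i
      rcases (by decide : ∀ j : ZMod 3, j = 0 ∨ j = 1 ∨ j = 2) i with rfl | rfl | rfl
      · rw [tri0]; exact hW.1
      · rw [tri1]; exact hW'.1
      · rw [tri2]; exact hPP'f
    · intro i
      have e01 : (0 : ZMod 3) - 1 = 2 := by decide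
      have f01 : (0 : ZMod 3) + 1 = 1 := by decide
      have e12 : (1 : ZMod 3) - 1 = 0 := by decide
      have f12 : (1 : ZMod 3) + 1 = 2 := by decide
      have e23 : (2 : ZMod 3) - 1 = 1 := by decide
      have f23 : (2 : ZMod 3) + 1 = 0 := by decide
      have htri : ∀ x, x ∈ W → x ∈ W' → x ∈ P ∪ P' → False := by
        intro x hxW hxW' hxPP'
        rcases (hWdec x).1 hxW with h | h
        · rcases hxPP' with h' | h'
          · exact hBLC x h (hPC h')
          · exact hBLC x h (hP'C h')
        · exact hQ' x h ⟨hxW', h.2⟩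
      rcases (by decide : ∀ j : ZMod 3, j = 0 ∨ j = 1 ∨ j = 2) i with rfl | rfl | rfl
      · rw [e01, f01, tri2, tri0, tri1]
        refine ⟨?_, ?_, ?_⟩
        · -- Bowtie (P∪P') W
          refine ⟨⟨x1, Or.inl hxP.1, hx1W⟩, ⟨x2, Or.inr hxP'.1, hx2W⟩,
            ⟨xBL, hWbl hxBL, ?_⟩⟩
          rintro (h | h)
          · exact hBLC xBL hxBL (hPC h)
          · exact hBLC xBL hxBL (hP'C h)
        · ext x
          simp only [Set.mem_inter_iff, Set.mem_empty_iff_false, iff_false, not_and]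
          rintro ⟨h2, h0⟩ h1
          exact htri x h0 h1 h2
        · intro x hx
          rcases (hWdec x).1 hx with h | h
          · exact Or.inr (hW'bl h)
          · exact Or.inl (Or.inl h)
      · rw [e12, f12, tri0, tri1, tri2]
        refine ⟨?_, ?_, ?_⟩
        · exact ⟨⟨xBL, hWbl hxBL, hW'bl hxBL⟩, ⟨x1, hx1W, hx1W'⟩, ⟨x2, hx2W', hx2W⟩⟩
        · ext x
          simp only [Set.mem_inter_iff, Set.mem_empty_iff_false, iff_false, not_and]
          rintro ⟨h0, h1⟩ h2
          exact htri x h0 h1 h2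
        · intro x hx
          rcases (hW'dec x).1 hx with h | h
          · exact Or.inl (hWbl h)
          · exact Or.inr (Or.inr h)
      · rw [e23, f23, tri1, tri2, tri0]
        refine ⟨?_, ?_, ?_⟩
        · -- Bowtie W' (P∪P')
          refine ⟨⟨x2, hx2W', Or.inr hxP'.1⟩, ⟨xBL, hW'bl hxBL, ?_⟩,
            ⟨x1, Or.inl hxP.1, hx1W'⟩⟩
          rintro (h | h)
          · exact hBLC xBL hxBL (hPC h)
          · exact hBLC xBL hxBL (hP'C h)
        · ext x
          simp only [Set.mem_inter_iff, Set.mem_empty_iff_false, iff_false, not_and]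
          rintro ⟨h1, h2⟩ h0
          exact htri x h0 h1 h2
        · rintro x (hx | hx)
          · exact Or.inr ((hWdec x).2 (Or.inr hx))
          · exact Or.inl ((hW'dec x).2 (Or.inr hx))

end WChain

end CloneAux
namespace CloneAux

def Wm (F : Set α) (𝓕 : Set (Set α)) (M M' : Set α) (W : Set α) : Prop :=
  IsBU F 𝓕 W ∧ M \ M' ⊆ W ∧ W ≠ F

def blkL (F : Set α) (𝓕 : Set (Set α)) (M M' : Set α) (B B' : Set α) : Prop :=
  ∃ W, Wm F 𝓕 M M' W ∧ B ⊆ W ∧ B' ∩ W = ∅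

section Sep

variable {F : Set α} {𝓕 : Set (Set α)} {M M' : Set α}
variable (hax : SatisfiesAxioms F 𝓕) (hF : F.Finite)
variable (hM : IsMaxBU F 𝓕 M) (hM' : IsMaxBU F 𝓕 M') (hbow : Bowtie M M')
variable (hcov : ∀ x ∈ F, ∃ B, IsBlockOf F 𝓕 B ∧ x ∈ B)

lemma bu_block_dichot {W B : Set α} (hW : IsBU F 𝓕 W) (hB : IsBlockOf F 𝓕 B) :
    B ⊆ W ∨ B ∩ W = ∅ := by
  by_cases h : (B ∩ W).Nonempty
  · exact Or.inl (hW.2 B hB h)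
  · exact Or.inr (Set.not_nonempty_iff_eq_empty.1 h)

include hax in
lemma blocks_disjoint' {B B' : Set α} (hB : IsBlockOf F 𝓕 B) (hB' : IsBlockOf F 𝓕 B')
    (hne : B ≠ B') : B ∩ B' = ∅ := by
  rw [Set.eq_empty_iff_forall_notMem]
  rintro x ⟨h1, h2⟩
  exact hne (blocks_disjoint hax hB hB' h1 h2)

include hax in
lemma block_nonempty {B : Set α} (hB : IsBlockOf F 𝓕 B) : B.Nonempty :=
  mem_nonempty hax hB.1.1

include hax hF hM hM' hbow in
lemma w_sub {W : Set α} (hW : Wm F 𝓕 M M' W) : W ⊆ M := by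
  rcases sub_max hax hF hM hM' hbow hW.1 hW.2.2 with h | h
  · exact h
  · obtain ⟨x, hx⟩ := hbow.2.1
    exact absurd (h (hW.2.1 hx)) hx.2

include hax hM hM' hbow in
lemma w_bl_mem : Wm F 𝓕 M M' (M \ M') := by
  refine ⟨bu_diff hax hM.1 hM'.1 hbow, le_refl _, ?_⟩
  intro h
  obtain ⟨y, hy⟩ := hbow.2.2
  have hyF : y ∈ F := hax.1 M' hM'.1.1 hy.1
  rw [← h] at hyF
  exact hyF.2 hy.1

omit hax in
lemma w_M_mem (hbl : (M \ M').Nonempty) (hMbu : IsMaxBU F 𝓕 M) : Wm F 𝓕 M M' M :=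
  ⟨hMbu.1, Set.diff_subset, hMbu.2.1⟩

include hax hF hM hM' hbow hcov in
lemma br_block : IsBlockOf F 𝓕 (M' \ M) :=
  bl_block hax hF hM' hM (bowtie_comm hbow) hcov

include hax hF hM hM' hbow hcov in
lemma block_cases {B : Set α} (hB : IsBlockOf F 𝓕 B) : B ⊆ M ∨ B = M' \ M := by
  rcases bu_block_dichot hM.1 hB with h | h
  · exact Or.inl h
  · right
    have hsub : B ⊆ M' \ M := by
      intro x hx
      have hxF : x ∈ F := hax.1 B hB.1.1 hx
      have hxM : x ∉ M := fun hm => (Set.eq_empty_iff_forall_notMem.1 h x) ⟨hx, hm⟩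
      rcases (mm_top hax hM hM' hbow ▸ hxF : x ∈ M ∪ M') with h' | h'
      · exact absurd h' hxM
      · exact ⟨h', hxM⟩
    obtain ⟨x, hx⟩ := block_nonempty hax hB
    exact blocks_disjoint hax hB (br_block hax hF hM hM' hbow hcov) hx (hsub hx)

include hax hF hM hM' hbow in
lemma blkL_asymm {B B' : Set α} (hBne : B.Nonempty) (hB'ne : B'.Nonempty)
    (h1 : blkL F 𝓕 M M' B B') : ¬ blkL F 𝓕 M M' B' B := by
  rintro ⟨W2, hW2, hs2, hd2⟩
  obtain ⟨W1, hW1, hs1, hd1⟩ := h1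
  rcases w_chain hax hF hM hM' hbow hW1.1 hW1.2.1 hW1.2.2 hW2.1 hW2.2.1 hW2.2.2 with h | h
  · obtain ⟨x, hx⟩ := hBne
    exact (Set.eq_empty_iff_forall_notMem.1 hd2 x) ⟨hx, h (hs1 hx)⟩
  · obtain ⟨x, hx⟩ := hB'ne
    exact (Set.eq_empty_iff_forall_notMem.1 hd1 x) ⟨hx, h (hs2 hx)⟩

include hax hF hM hM' hbow in
lemma blkL_trans {B B' B'' : Set α} (hB'ne : B'.Nonempty)
    (h1 : blkL F 𝓕 M M' B B') (h2 : blkL F 𝓕 M M' B' B'') : blkL F 𝓕 M M' B B'' := by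
  obtain ⟨W1, hW1, hs1, hd1⟩ := h1
  obtain ⟨W2, hW2, hs2, hd2⟩ := h2
  have hsub : W1 ⊆ W2 := by
    rcases w_chain hax hF hM hM' hbow hW1.1 hW1.2.1 hW1.2.2 hW2.1 hW2.2.1 hW2.2.2 with h | h
    · exact h
    · obtain ⟨x, hx⟩ := hB'ne
      exact ((Set.eq_empty_iff_forall_notMem.1 hd1 x) ⟨hx, h (hs2 hx)⟩).elim
  refine ⟨W1, hW1, hs1, ?_⟩
  rw [Set.eq_empty_iff_forall_notMem]
  rintro x ⟨hx1, hx2⟩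
  exact (Set.eq_empty_iff_forall_notMem.1 hd2 x) ⟨hx1, hsub hx2⟩

include hax hF hM hM' hbow hcov in
lemma blkL_total {Bx By : Set α} (hBx : IsBlockOf F 𝓕 Bx) (hBy : IsBlockOf F 𝓕 By)
    (hne : Bx ≠ By) : blkL F 𝓕 M M' Bx By ∨ blkL F 𝓕 M M' By Bx := by
  have hBLb : IsBlockOf F 𝓕 (M \ M') := bl_block hax hF hM hM' hbow hcov
  have hBRb : IsBlockOf F 𝓕 (M' \ M) := br_block hax hF hM hM' hbow hcov
  have hMw : Wm F 𝓕 M M' M := w_M_mem hbow.2.1 hM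
  have hBLw : Wm F 𝓕 M M' (M \ M') := w_bl_mem hax hM hM' hbow
  have hBxne : Bx.Nonempty := block_nonempty hax hBx
  have hByne : By.Nonempty := block_nonempty hax hBy
  by_cases hxBR : Bx = M' \ M
  · rcases block_cases hax hF hM hM' hbow hcov hBy with h | h
    · right
      refine ⟨M, hMw, h, ?_⟩
      rw [hxBR, Set.eq_empty_iff_forall_notMem]
      rintro x ⟨hx1, hx2⟩
      exact hx1.2 hx2
    · exact absurd (hxBR.trans h.symm) hne
  by_cases hyBR : By = M' \ M
  · rcases block_cases hax hF hM hM' hbow hcov hBx with h | h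
    · left
      refine ⟨M, hMw, h, ?_⟩
      rw [hyBR, Set.eq_empty_iff_forall_notMem]
      rintro x ⟨hx1, hx2⟩
      exact hx1.2 hx2
    · exact absurd h hxBR
  have hBxM : Bx ⊆ M := (block_cases hax hF hM hM' hbow hcov hBx).resolve_right hxBR
  have hByM : By ⊆ M := (block_cases hax hF hM hM' hbow hcov hBy).resolve_right hyBR
  by_cases hxBL : Bx = M \ M'
  · left
    exact ⟨M \ M', hBLw, le_of_eq hxBL,
      blocks_disjoint' hax hBy hBLb (fun h => hne (hxBL.trans h.symm)) ⟩
  by_cases hyBL : By = M \ M'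
  · right
    exact ⟨M \ M', hBLw, le_of_eq hyBL,
      blocks_disjoint' hax hBx hBLb (fun h => hne (h.trans hyBL.symm))⟩
  by_contra hno
  push_neg at hno
  obtain ⟨hnoxy, hnoyx⟩ := hno
  have hBxBL : Bx ∩ (M \ M') = ∅ := blocks_disjoint' hax hBx hBLb hxBL
  have hByBL : By ∩ (M \ M') = ∅ := blocks_disjoint' hax hBy hBLb hyBL
  have hunsep : ∀ W, Wm F 𝓕 M M' W → (Bx ⊆ W ↔ By ⊆ W) := by
    intro W hW
    constructor
    · intro h
      rcases bu_block_dichot hW.1 hBy with h' | h'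
      · exact h'
      · exact absurd ⟨W, hW, h, h'⟩ hnoxy
    · intro h
      rcases bu_block_dichot hW.1 hBx with h' | h'
      · exact h'
      · exact absurd ⟨W, hW, h, h'⟩ hnoyx
  -- minimal W containing Bx, maximal W disjoint from Bx
  have hfam_fin : ∀ p : Set α → Prop, {W | Wm F 𝓕 M M' W ∧ p W}.Finite :=
    fun p => (fam_finite hax hF).subset (fun W hW => hW.1.1.1)
  obtain ⟨W1, hW1mem, hW1min⟩ := exists_minimal_mem {W | Wm F 𝓕 M M' W ∧ Bx ⊆ W}
    (hfam_fin _) ⟨M, hMw, hBxM⟩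
  obtain ⟨W0, hW0mem, hW0max⟩ := exists_maximal_mem {W | Wm F 𝓕 M M' W ∧ Bx ∩ W = ∅}
    (hfam_fin _) ⟨M \ M', hBLw, hBxBL⟩
  obtain ⟨hW1w, hW1x⟩ := hW1mem
  obtain ⟨hW0w, hW0x⟩ := hW0mem
  have dich : ∀ W, Wm F 𝓕 M M' W → W ⊆ W0 ∨ W1 ⊆ W := by
    intro W hW
    rcases bu_block_dichot hW.1 hBx with h | h
    · rcases w_chain hax hF hM hM' hbow hW.1 hW.2.1 hW.2.2 hW1w.1 hW1w.2.1 hW1w.2.2 with hc | hc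
      · exact Or.inr (le_of_eq (hW1min W ⟨hW, h⟩ hc).symm)
      · exact Or.inr hc
    · rcases w_chain hax hF hM hM' hbow hW.1 hW.2.1 hW.2.2 hW0w.1 hW0w.2.1 hW0w.2.2 with hc | hc
      · exact Or.inl hc
      · exact Or.inl (le_of_eq (hW0max W ⟨hW, h⟩ hc))
  have hW01 : W0 ⊆ W1 := by
    rcases w_chain hax hF hM hM' hbow hW0w.1 hW0w.2.1 hW0w.2.2 hW1w.1 hW1w.2.1 hW1w.2.2 with h | h
    · exact h
    · obtain ⟨x, hx⟩ := hBxne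
      exact ((Set.eq_empty_iff_forall_notMem.1 hW0x x) ⟨hx, h (hW1x hx)⟩).elim
  set S := W1 \ W0 with hSdef
  have hBxS : Bx ⊆ S := fun x hx => ⟨hW1x hx, fun h =>
    (Set.eq_empty_iff_forall_notMem.1 hW0x x) ⟨hx, h⟩⟩
  have hByW1 : By ⊆ W1 := (hunsep W1 hW1w).1 hW1x
  have hByW0 : By ∩ W0 = ∅ := by
    rcases bu_block_dichot hW0w.1 hBy with h | h
    · obtain ⟨x, hx⟩ := hBxne
      exact absurd ((hunsep W0 hW0w).2 h hx) (fun hc =>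
        (Set.eq_empty_iff_forall_notMem.1 hW0x x) ⟨hx, hc⟩)
    · exact h
  have hByS : By ⊆ S := fun x hx => ⟨hByW1 hx, fun h =>
    (Set.eq_empty_iff_forall_notMem.1 hByW0 x) ⟨hx, h⟩⟩
  have hW1M : W1 ⊆ M := w_sub hax hF hM hM' hbow hW1w
  have hW0M : W0 ⊆ M := w_sub hax hF hM hM' hbow hW0w
  have hBxM' : Bx ⊆ M' := by
    intro x hx
    by_contra h
    exact (Set.eq_empty_iff_forall_notMem.1 hBxBL x) ⟨hx, hBxM hx, h⟩
  have hSBU : IsBU F 𝓕 S := by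
    by_cases hW0BL : W0 = M \ M'
    · have hSeq : S = W1 ∩ M' := by
        ext x
        constructor
        · rintro ⟨h1, h2⟩
          refine ⟨h1, ?_⟩
          by_contra h3
          exact h2 (hW0BL ▸ (⟨hW1M h1, h3⟩ : x ∈ M \ M'))
        · rintro ⟨h1, h2⟩
          exact ⟨h1, fun h3 => (hW0BL ▸ h3 : x ∈ M \ M').2 h2⟩
      obtain ⟨x, hx⟩ := hBxne
      exact hSeq ▸ bu_inter hax hW1w.1 hM'.1 ⟨x, hW1x hx, hBxM' hx⟩
    · have hW0ne : ∃ u, u ∈ W0 ∧ u ∉ M \ M' := by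
        by_contra hc
        push_neg at hc
        exact hW0BL (le_antisymm hc hW0w.2.1)
      obtain ⟨u, hu1, hu2⟩ := hW0ne
      have huM' : u ∈ M' := by
        by_contra h
        exact hu2 ⟨hW0M hu1, h⟩
      have hDbow : Bowtie M' W0 := by
        obtain ⟨x, hx⟩ := hBxne
        refine ⟨⟨u, huM', hu1⟩, ⟨x, hBxM' hx, fun h =>
          (Set.eq_empty_iff_forall_notMem.1 hW0x x) ⟨hx, h⟩⟩, ?_⟩
        obtain ⟨z, hz⟩ := hbow.2.1
        exact ⟨z, hW0w.2.1 hz, hz.2⟩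
      have hD : IsBU F 𝓕 (M' \ W0) := bu_diff hax hM'.1 hW0w.1 hDbow
      have hSeq : S = W1 ∩ (M' \ W0) := by
        ext x
        constructor
        · rintro ⟨h1, h2⟩
          refine ⟨h1, ?_, h2⟩
          by_contra h3
          exact h2 (hW0w.2.1 ⟨hW1M h1, h3⟩)
        · rintro ⟨h1, h2, h3⟩
          exact ⟨h1, h3⟩
      obtain ⟨x, hx⟩ := hBxne
      exact hSeq ▸ bu_inter hax hW1w.1 hD ⟨x, hW1x hx, hBxM' hx, fun h =>
        (Set.eq_empty_iff_forall_notMem.1 hW0x x) ⟨hx, h⟩⟩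
  have hSF : S ≠ F := by
    intro h
    obtain ⟨z, hz⟩ := hbow.2.1
    have : z ∈ S := h ▸ hax.1 M hM.1.1 hz.1
    exact this.2 (hW0w.2.1 hz)
  have hSnb : ¬ IsBlockOf F 𝓕 S := by
    intro hSb
    obtain ⟨x, hx⟩ := hBxne
    obtain ⟨y, hy⟩ := hByne
    exact hne ((blocks_disjoint hax hBx hSb hx (hBxS hx)).trans
      (blocks_disjoint hax hSb hBy (hByS hy) hy))
  obtain ⟨V, hV, hVbow⟩ := bu_partner hax hF hcov hSBU hSF hSnb
  have hSsubF : S ⊆ F := fun x hx => hax.1 W1 hW1w.1.1 hx.1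
  have hVF : V ≠ F := by
    rintro rfl
    obtain ⟨x, hx⟩ := hVbow.2.1
    exact hx.2 (hSsubF hx.1)
  rcases bu_block_dichot hV hBLb with hBLV | hBLV
  · have hVw : Wm F 𝓕 M M' V := ⟨hV, hBLV, hVF⟩
    rcases dich V hVw with h | h
    · obtain ⟨x, hx⟩ := hVbow.1
      exact hx.1.2 (h hx.2)
    · obtain ⟨x, hx⟩ := hVbow.2.1
      exact hx.2 ((fun hh => hh hx.1.1) (fun hh : x ∈ W1 => h hh) : x ∈ V)
  · by_cases hVW0 : (V ∩ W0).Nonempty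
    · have hWm : Wm F 𝓕 M M' (V ∪ W0) := by
        refine ⟨bu_union hax hV hW0w.1 hVW0, fun x hx => Or.inr (hW0w.2.1 hx), ?_⟩
        intro h
        obtain ⟨x, hx⟩ := hVbow.2.1
        have hxF : x ∈ F := hSsubF hx.1
        rcases (h ▸ hxF : x ∈ V ∪ W0) with h' | h'
        · exact hx.2 h'
        · exact hx.1.2 h'
      rcases dich _ hWm with h | h
      · obtain ⟨x, hx⟩ := hVbow.1
        exact hx.1.2 (h (Or.inl hx.2))
      · obtain ⟨x, hx⟩ := hVbow.2.1
        rcases h hx.1.1 with h' | h'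
        · exact hx.2 h'
        · exact hx.1.2 h'
    · rw [Set.not_nonempty_iff_eq_empty] at hVW0
      have hTbow : Bowtie W1 V := by
        refine ⟨hVbow.1.imp (fun x hx => ⟨hx.1.1, hx.2⟩), ?_, ?_⟩
        · obtain ⟨z, hz⟩ := hbow.2.1
          refine ⟨z, hW01 (hW0w.2.1 hz), fun h =>
            (Set.eq_empty_iff_forall_notMem.1 hVW0 z) ⟨h, hW0w.2.1 hz⟩⟩
        · rw [Set.nonempty_iff_ne_empty]
          intro h
          rw [Set.diff_eq_empty] at h
          obtain ⟨x, hx⟩ := hVbow.2.2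
          exact hx.2 ⟨h hx.1, fun hc =>
            (Set.eq_empty_iff_forall_notMem.1 hVW0 x) ⟨hx.1, hc⟩⟩
      have hT : IsBU F 𝓕 (W1 \ V) := bu_diff hax hW1w.1 hV hTbow
      have hTw : Wm F 𝓕 M M' (W1 \ V) := by
        refine ⟨hT, ?_, ?_⟩
        · intro x hx
          exact ⟨hW01 (hW0w.2.1 hx), fun h =>
            (Set.eq_empty_iff_forall_notMem.1 hVW0 x) ⟨h, hW0w.2.1 hx⟩⟩
        · intro h
          apply hW1w.2.2
          refine le_antisymm (fun x hx => hax.1 W1 hW1w.1.1 hx) ?_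
          intro x hx
          exact (h ▸ hx : x ∈ W1 \ V).1
      rcases dich _ hTw with h | h
      · obtain ⟨x, hx⟩ := hVbow.2.1
        have hxT : x ∈ W1 \ V := ⟨hx.1.1, hx.2⟩
        exact hx.1.2 (h hxT)
      · obtain ⟨x, hx⟩ := hVbow.1
        have hxT : x ∈ W1 \ V := h hx.1.1
        exact hxT.2 hx.2

end Sep

end CloneAux
namespace CloneAux

section Interval

variable {F : Set α} {𝓕 : Set (Set α)} {M M' : Set α}
variable (hax : SatisfiesAxioms F 𝓕) (hF : F.Finite)
variable (hM : IsMaxBU F 𝓕 M) (hM' : IsMaxBU F 𝓕 M') (hbow : Bowtie M M')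
variable (hcov : ∀ x ∈ F, ∃ B, IsBlockOf F 𝓕 B ∧ x ∈ B)

include hax hF hM hM' hbow hcov in
lemma iv_of_bu {Y B B' B'' : Set α} (hY : IsBU F 𝓕 Y) (hYF : Y ≠ F)
    (hB : IsBlockOf F 𝓕 B) (hB' : IsBlockOf F 𝓕 B') (hB'' : IsBlockOf F 𝓕 B'')
    (hBY : B ⊆ Y) (hB'Y : B' ⊆ Y) (hB''Y : B'' ∩ Y = ∅) :
    blkL F 𝓕 M M' B B'' ↔ blkL F 𝓕 M M' B' B'' := by
  have hBLb : IsBlockOf F 𝓕 (M \ M') := bl_block hax hF hM hM' hbow hcov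
  rcases bu_block_dichot hY hBLb with hBLY | hBLY
  · have hYw : Wm F 𝓕 M M' Y := ⟨hY, hBLY, hYF⟩
    exact iff_of_true ⟨Y, hYw, hBY, hB''Y⟩ ⟨Y, hYw, hB'Y, hB''Y⟩
  · have hBLY' : ∀ x, x ∈ M \ M' → x ∉ Y := fun x hx hy =>
      (Set.eq_empty_iff_forall_notMem.1 hBLY x) ⟨hx, hy⟩
    have key : ∀ Ba Bb, IsBlockOf F 𝓕 Ba → IsBlockOf F 𝓕 Bb → Ba ⊆ Y → Bb ⊆ Y →
        blkL F 𝓕 M M' Ba B'' → blkL F 𝓕 M M' Bb B'' := by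
      intro Ba Bb hBa hBb hBaY hBbY ⟨W1, hW1, hs1, hd1⟩
      by_contra hnb
      have hBbne := block_nonempty hax hBb
      have hB''ne := block_nonempty hax hB''
      have hBbB'' : Bb ≠ B'' := by
        rintro rfl
        obtain ⟨x, hx⟩ := hBbne
        exact (Set.eq_empty_iff_forall_notMem.1 hB''Y x) ⟨hx, hBbY hx⟩
      have h2 : blkL F 𝓕 M M' B'' Bb :=
        (blkL_total hax hF hM hM' hbow hcov hBb hB'' hBbB'').resolve_left hnb
      obtain ⟨W2, hW2, hs2, hd2⟩ := h2
      have hW12 : W1 ⊆ W2 := by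
        rcases w_chain hax hF hM hM' hbow hW1.1 hW1.2.1 hW1.2.2 hW2.1 hW2.2.1 hW2.2.2 with h | h
        · exact h
        · obtain ⟨x, hx⟩ := hB''ne
          exact ((Set.eq_empty_iff_forall_notMem.1 hd1 x) ⟨hx, h (hs2 hx)⟩).elim
      have hbw : Bowtie W2 Y := by
        obtain ⟨xa, hxa⟩ := block_nonempty hax hBa
        obtain ⟨xb, hxb⟩ := hBbne
        obtain ⟨z, hz⟩ := hbow.2.1
        refine ⟨⟨xa, hW12 (hs1 hxa), hBaY hxa⟩,
          ⟨z, hW2.2.1 hz, hBLY' z hz⟩,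
          ⟨xb, hBbY hxb, fun h => (Set.eq_empty_iff_forall_notMem.1 hd2 xb) ⟨hxb, h⟩⟩⟩
      have hW3 : IsBU F 𝓕 (W2 \ Y) := bu_diff hax hW2.1 hY hbw
      have hW3w : Wm F 𝓕 M M' (W2 \ Y) := by
        refine ⟨hW3, fun x hx => ⟨hW2.2.1 hx, hBLY' x hx⟩, ?_⟩
        intro h
        apply hW2.2.2
        refine le_antisymm (fun x hx => hax.1 W2 hW2.1.1 hx) (fun x hx => (h ▸ hx : x ∈ W2 \ Y).1)
      have hblk : blkL F 𝓕 M M' B'' Ba := by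
        refine ⟨W2 \ Y, hW3w, fun x hx => ⟨hs2 hx, fun hy =>
          (Set.eq_empty_iff_forall_notMem.1 hB''Y x) ⟨hx, hy⟩⟩, ?_⟩
        rw [Set.eq_empty_iff_forall_notMem]
        rintro x ⟨hx1, hx2⟩
        exact hx2.2 (hBaY hx1)
      exact blkL_asymm hax hF hM hM' hbow (block_nonempty hax hBa) hB''ne
        ⟨W1, hW1, hs1, hd1⟩ hblk
    exact ⟨key B B' hB hB' hBY hB'Y, key B' B hB' hB hB'Y hBY⟩

include hax hF hM hM' hbow hcov in
lemma bu_of_iv {X : Set α} (hXF : X ⊆ F) (hXne : X.Nonempty) (hXnF : X ≠ F)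
    (hXblocks : ∀ B, IsBlockOf F 𝓕 B → (B ∩ X).Nonempty → B ⊆ X)
    (hXiv : ∀ B B' B'', IsBlockOf F 𝓕 B → IsBlockOf F 𝓕 B' → IsBlockOf F 𝓕 B'' →
      B ⊆ X → B' ⊆ X → B'' ∩ X = ∅ → (blkL F 𝓕 M M' B B'' ↔ blkL F 𝓕 M M' B' B'')) :
    X ∈ 𝓕 := by
  have hBLb : IsBlockOf F 𝓕 (M \ M') := bl_block hax hF hM hM' hbow hcov
  have hMw : Wm F 𝓕 M M' M := w_M_mem hbow.2.1 hM
  have hBLw : Wm F 𝓕 M M' (M \ M') := w_bl_mem hax hM hM' hbow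
  have htop := mm_top hax hM hM' hbow
  have hdichX : ∀ B, IsBlockOf F 𝓕 B → B ⊆ X ∨ B ∩ X = ∅ := by
    intro B hB
    by_cases h : (B ∩ X).Nonempty
    · exact Or.inl (hXblocks B hB h)
    · exact Or.inr (Set.not_nonempty_iff_eq_empty.1 h)
  have hfam_fin : ∀ p : Set α → Prop, {W | Wm F 𝓕 M M' W ∧ p W}.Finite :=
    fun p => (fam_finite hax hF).subset (fun W hW => hW.1.1.1)
  obtain ⟨x0, hx0⟩ := hXne
  obtain ⟨B0, hB0, hx0B⟩ := hcov x0 (hXF hx0)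
  have hB0X : B0 ⊆ X := hXblocks B0 hB0 ⟨x0, hx0B, hx0⟩
  obtain ⟨u0, hu0F, hu0X⟩ : ∃ u, u ∈ F ∧ u ∉ X := by
    by_contra hc
    push_neg at hc
    exact hXnF (le_antisymm hXF hc)
  obtain ⟨Bu, hBu, hu0B⟩ := hcov u0 hu0F
  have hBuX : Bu ∩ X = ∅ := by
    rcases hdichX Bu hBu with h | h
    · exact absurd (h hu0B) hu0X
    · exact h
  rcases hdichX (M \ M') hBLb with hBLX | hBLX
  · -- case BL ⊆ X
    have hout_neBL : ∀ B'', IsBlockOf F 𝓕 B'' → B'' ∩ X = ∅ → B'' ≠ M \ M' := by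
      rintro B'' hB'' hd rfl
      obtain ⟨z, hz⟩ := hbow.2.1
      exact (Set.eq_empty_iff_forall_notMem.1 hd z) ⟨hz, hBLX hz⟩
    have hpre : ∀ B, IsBlockOf F 𝓕 B → B ⊆ X → ∀ B'', IsBlockOf F 𝓕 B'' → B'' ∩ X = ∅ →
        blkL F 𝓕 M M' B B'' := by
      intro B hB hBX B'' hB'' hd
      have hbl : blkL F 𝓕 M M' (M \ M') B'' :=
        ⟨M \ M', hBLw, le_refl _, blocks_disjoint' hax hB'' hBLb (hout_neBL B'' hB'' hd)⟩
      exact (hXiv B (M \ M') B'' hB hBLb hB'' hBX hBLX hd).2 hbl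
    have hBM : ∀ B, IsBlockOf F 𝓕 B → B ⊆ X → B ⊆ M := by
      intro B hB hBX
      rcases block_cases hax hF hM hM' hbow hcov hB with h | h
      · exact h
      · exfalso
        obtain ⟨W, hW, hs, -⟩ := hpre B hB hBX Bu hBu hBuX
        obtain ⟨z, hz⟩ := block_nonempty hax hB
        exact (h ▸ hz : z ∈ M' \ M).2 (w_sub hax hF hM hM' hbow hW (hs hz))
    obtain ⟨W0, hW0mem, hW0max⟩ := exists_maximal_mem {W | Wm F 𝓕 M M' W ∧ W ⊆ X}
      (hfam_fin _) ⟨M \ M', hBLw, hBLX⟩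
    obtain ⟨hW0w, hW0X⟩ := hW0mem
    by_cases hWX : W0 = X
    · exact hWX ▸ hW0w.1.1
    · exfalso
      obtain ⟨z, hzX, hzW0⟩ := Set.exists_of_ssubset (ssubset_of_ne_of_subset hWX hW0X)
      obtain ⟨Bin, hBin, hzB⟩ := hcov z (hXF hzX)
      have hBinX : Bin ⊆ X := hXblocks Bin hBin ⟨z, hzB, hzX⟩
      have hBinW0 : Bin ∩ W0 = ∅ := by
        rcases bu_block_dichot hW0w.1 hBin with h | h
        · exact absurd (h hzB) hzW0
        · exact h
      obtain ⟨W1, hW1mem, hW1min⟩ := exists_minimal_mem {W | Wm F 𝓕 M M' W ∧ Bin ⊆ W}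
        (hfam_fin _) ⟨M, hMw, hBM Bin hBin hBinX⟩
      obtain ⟨hW1w, hW1in⟩ := hW1mem
      obtain ⟨W0', hW0'mem, hW0'max⟩ := exists_maximal_mem
        {W | Wm F 𝓕 M M' W ∧ Bin ∩ W = ∅} (hfam_fin _) ⟨W0, hW0w, hBinW0⟩
      obtain ⟨hW0'w, hW0'in⟩ := hW0'mem
      have hGap : W1 ⊆ W0' ∪ Bin := by
        intro x hx
        by_cases hxW0' : x ∈ W0'
        · exact Or.inl hxW0'
        right
        have hxF : x ∈ F := hax.1 W1 hW1w.1.1 hx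
        obtain ⟨Bx, hBx, hxB⟩ := hcov x hxF
        have hBxW1 : Bx ⊆ W1 := by
          rcases bu_block_dichot hW1w.1 hBx with h | h
          · exact h
          · exact absurd ⟨hxB, hx⟩ (Set.eq_empty_iff_forall_notMem.1 h x)
        have hBxW0' : Bx ∩ W0' = ∅ := by
          rcases bu_block_dichot hW0'w.1 hBx with h | h
          · exact absurd (h hxB) hxW0'
          · exact h
        by_cases hBxin : Bx = Bin
        · exact hBxin ▸ hxB
        exfalso
        rcases blkL_total hax hF hM hM' hbow hcov hBx hBin hBxin with ⟨W, hW, hs, hd⟩ | ⟨W, hW, hs, hd⟩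
        · have hWsub : W ⊆ W0' := by
            rcases w_chain hax hF hM hM' hbow hW.1 hW.2.1 hW.2.2 hW0'w.1 hW0'w.2.1 hW0'w.2.2
              with h | h
            · exact h
            · exact le_of_eq (hW0'max W ⟨hW, hd⟩ h)
          exact (Set.eq_empty_iff_forall_notMem.1 hBxW0' x) ⟨hxB, hWsub (hs hxB)⟩
        · have hWsub : W1 ⊆ W := by
            rcases w_chain hax hF hM hM' hbow hW.1 hW.2.1 hW.2.2 hW1w.1 hW1w.2.1 hW1w.2.2
              with h | h
            · exact le_of_eq (hW1min W ⟨hW, hs⟩ h).symm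
            · exact h
          exact (Set.eq_empty_iff_forall_notMem.1 hd x) ⟨hxB, hWsub hx⟩
      have hW0'X : W0' ⊆ X := by
        intro y hy
        by_contra hyX
        have hyF : y ∈ F := hax.1 W0' hW0'w.1.1 hy
        obtain ⟨By, hBy, hyB⟩ := hcov y hyF
        have hByX : By ∩ X = ∅ := by
          rcases hdichX By hBy with h | h
          · exact absurd (h hyB) hyX
          · exact h
        have hByW0' : By ⊆ W0' := by
          rcases bu_block_dichot hW0'w.1 hBy with h | h
          · exact h
          · exact absurd ⟨hyB, hy⟩ (Set.eq_empty_iff_forall_notMem.1 h y)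
        have h1 : blkL F 𝓕 M M' By Bin := ⟨W0', hW0'w, hByW0',
          by rw [Set.inter_comm] at hW0'in ⊢; exact hW0'in⟩
        have h2 : blkL F 𝓕 M M' Bin By := hpre Bin hBin hBinX By hBy hByX
        exact blkL_asymm hax hF hM hM' hbow (block_nonempty hax hBin)
          (block_nonempty hax hBy) h2 h1
      have hW1X : W1 ⊆ X := fun x hx => by
        rcases hGap hx with h | h
        · exact hW0'X h
        · exact hBinX h
      have hW0'W1 : W0' ⊆ W1 := by
        rcases w_chain hax hF hM hM' hbow hW0'w.1 hW0'w.2.1 hW0'w.2.2 hW1w.1 hW1w.2.1 hW1w.2.2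
          with h | h
        · exact h
        · exfalso
          obtain ⟨w, hw⟩ := block_nonempty hax hBin
          exact (Set.eq_empty_iff_forall_notMem.1 hW0'in w) ⟨hw, h (hW1in hw)⟩
      have hW0W0' : W0 ⊆ W0' := by
        rcases w_chain hax hF hM hM' hbow hW0w.1 hW0w.2.1 hW0w.2.2 hW0'w.1 hW0'w.2.1 hW0'w.2.2
          with h | h
        · exact h
        · exact le_of_eq (hW0'max W0 ⟨hW0w, hBinW0⟩ h)
      have heq : W1 = W0 := hW0max W1 ⟨hW1w, hW1X⟩ (hW0W0'.trans hW0'W1)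
      obtain ⟨w, hw⟩ := block_nonempty hax hBin
      exact (Set.eq_empty_iff_forall_notMem.1 hBinW0 w) ⟨hw, heq ▸ hW1in hw⟩
  · -- case BL ∩ X = ∅
    have hXM' : X ⊆ M' := by
      intro x hx
      by_contra h
      rcases (htop ▸ hXF hx : x ∈ M ∪ M') with h' | h'
      · exact (Set.eq_empty_iff_forall_notMem.1 hBLX x) ⟨⟨h', h⟩, hx⟩
      · exact h h'
    -- chain including F
    set famb : Set (Set α) := {W | (Wm F 𝓕 M M' W ∨ W = F) ∧ X ⊆ W} with hfambdef
    have hfambfin : famb.Finite := by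
      apply ((fam_finite hax hF).insert F).subset
      rintro W ⟨hW | rfl, -⟩
      · exact Set.mem_insert_of_mem F hW.1.1
      · exact Set.mem_insert _ _
    obtain ⟨Wb, hWbmem, hWbmin⟩ := exists_minimal_mem famb hfambfin
      ⟨F, Or.inr rfl, hXF⟩
    obtain ⟨hWbw, hWbX⟩ := hWbmem
    obtain ⟨Wa, hWamem, hWamax⟩ := exists_maximal_mem
      {W | Wm F 𝓕 M M' W ∧ W ∩ X = ∅} (hfam_fin _) ⟨M \ M', hBLw, hBLX⟩
    obtain ⟨hWaw, hWaX⟩ := hWamem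
    have hWbF : Wb ⊆ F := by
      rcases hWbw with hW | rfl
      · exact hax.1 Wb hW.1.1
      · exact le_refl _
    have hchainb : ∀ W, Wm F 𝓕 M M' W → W ⊆ Wb ∨ Wb ⊆ W := by
      intro W hW
      rcases hWbw with hWb' | rfl
      · exact (w_chain hax hF hM hM' hbow hW.1 hW.2.1 hW.2.2 hWb'.1 hWb'.2.1 hWb'.2.2)
      · exact Or.inl (hax.1 W hW.1.1)
    have hXeq : X = Wb \ Wa := by
      refine le_antisymm (fun x hx => ⟨hWbX hx, fun h =>
        (Set.eq_empty_iff_forall_notMem.1 hWaX x) ⟨h, hx⟩⟩) ?_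
      rintro z ⟨hzb, hza⟩
      by_contra hzX
      have hzF : z ∈ F := hWbF hzb
      obtain ⟨Bz, hBz, hzB⟩ := hcov z hzF
      have hBzX : Bz ∩ X = ∅ := by
        rcases hdichX Bz hBz with h | h
        · exact absurd (h hzB) hzX
        · exact h
      have hBzBL : Bz ≠ M \ M' := by
        rintro rfl
        exact hza (hWaw.2.1 hzB)
      -- uniform side
      have huni : (∀ B, IsBlockOf F 𝓕 B → B ⊆ X → blkL F 𝓕 M M' Bz B) ∨
          (∀ B, IsBlockOf F 𝓕 B → B ⊆ X → blkL F 𝓕 M M' B Bz) := by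
        have hne0 : Bz ≠ B0 := by
          rintro rfl
          obtain ⟨w, hw⟩ := block_nonempty hax hBz
          exact (Set.eq_empty_iff_forall_notMem.1 hBzX w) ⟨hw, hB0X hw⟩
        rcases blkL_total hax hF hM hM' hbow hcov hBz hB0 hne0 with h | h
        · left
          intro B hB hBX
          have hneB : Bz ≠ B := by
            rintro rfl
            obtain ⟨w, hw⟩ := block_nonempty hax hBz
            exact (Set.eq_empty_iff_forall_notMem.1 hBzX w) ⟨hw, hBX hw⟩
          rcases blkL_total hax hF hM hM' hbow hcov hBz hB hneB with h' | h'
          · exact h'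
          · exfalso
            exact blkL_asymm hax hF hM hM' hbow (block_nonempty hax hBz)
              (block_nonempty hax hB0) h ((hXiv B0 B Bz hB0 hB hBz hB0X hBX hBzX).2 h')
        · right
          intro B hB hBX
          exact (hXiv B B0 Bz hB hB0 hBz hBX hB0X hBzX).2 h
      rcases huni with hbelow | habove
      · obtain ⟨Wz0, hWz0, hsz0, hdz0⟩ := hbelow B0 hB0 hB0X
        obtain ⟨Wz, hWzmem, hWzmin⟩ := exists_minimal_mem
          {W | Wm F 𝓕 M M' W ∧ Bz ⊆ W} (hfam_fin _) ⟨Wz0, hWz0, hsz0⟩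
        obtain ⟨hWzw, hWzin⟩ := hWzmem
        have hWzX : Wz ∩ X = ∅ := by
          rw [Set.eq_empty_iff_forall_notMem]
          rintro x ⟨hx1, hx2⟩
          obtain ⟨Bx, hBx, hxB⟩ := hcov x (hXF hx2)
          have hBxX : Bx ⊆ X := hXblocks Bx hBx ⟨x, hxB, hx2⟩
          obtain ⟨W', hW', hs', hd'⟩ := hbelow Bx hBx hBxX
          have : Wz ⊆ W' := by
            rcases w_chain hax hF hM hM' hbow hWzw.1 hWzw.2.1 hWzw.2.2 hW'.1 hW'.2.1 hW'.2.2
              with h | h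
            · exact h
            · exact le_of_eq (hWzmin W' ⟨hW', hs'⟩ h).symm
          exact (Set.eq_empty_iff_forall_notMem.1 hd' x) ⟨hxB, this hx1⟩
        have : Wz ⊆ Wa := by
          rcases w_chain hax hF hM hM' hbow hWzw.1 hWzw.2.1 hWzw.2.2 hWaw.1 hWaw.2.1 hWaw.2.2
            with h | h
          · exact h
          · exact le_of_eq (hWamax Wz ⟨hWzw, hWzX⟩ h)
        exact hza (this (hWzin hzB))
      · obtain ⟨Wst, hWstmem, hWstmax⟩ := exists_maximal_mem
          {W | Wm F 𝓕 M M' W ∧ Bz ∩ W = ∅} (hfam_fin _)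
          ⟨M \ M', hBLw, blocks_disjoint' hax hBz hBLb hBzBL⟩
        obtain ⟨hWstw, hWstin⟩ := hWstmem
        have hXWst : X ⊆ Wst := by
          intro x hx
          obtain ⟨Bx, hBx, hxB⟩ := hcov x (hXF hx)
          have hBxX : Bx ⊆ X := hXblocks Bx hBx ⟨x, hxB, hx⟩
          obtain ⟨W', hW', hs', hd'⟩ := habove Bx hBx hBxX
          have : W' ⊆ Wst := by
            rcases w_chain hax hF hM hM' hbow hW'.1 hW'.2.1 hW'.2.2 hWstw.1 hWstw.2.1 hWstw.2.2
              with h | h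
            · exact h
            · exact le_of_eq (hWstmax W' ⟨hW', by
                rw [Set.inter_comm] at hd' ⊢; exact hd'⟩ h)
          exact this (hs' hxB)
        have hWbWst : Wb ⊆ Wst := by
          rcases hchainb Wst hWstw with h | h
          · exact le_of_eq (hWbmin Wst ⟨Or.inl hWstw, hXWst⟩ h).symm
          · exact h
        exact (Set.eq_empty_iff_forall_notMem.1 hWstin z) ⟨hzB, hWbWst hzb⟩
    -- now produce membership
    have hWaM : Wa ⊆ M := w_sub hax hF hM hM' hbow hWaw
    have hDmem : Wa ≠ M \ M' → M' \ Wa ∈ 𝓕 ∧ X ⊆ M' \ Wa := by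
      intro hWane
      have hXD : X ⊆ M' \ Wa := fun x hx => ⟨hXM' hx, fun h =>
        (Set.eq_empty_iff_forall_notMem.1 hWaX x) ⟨h, hx⟩⟩
      obtain ⟨u, hu1, hu2⟩ : ∃ u, u ∈ Wa ∧ u ∉ M \ M' := by
        by_contra hc
        push_neg at hc
        exact hWane (le_antisymm hc hWaw.2.1)
      have huM' : u ∈ M' := by
        by_contra h
        exact hu2 ⟨hWaM hu1, h⟩
      have hdbow : Bowtie M' Wa := by
        obtain ⟨zl, hzl⟩ := hbow.2.1
        exact ⟨⟨u, huM', hu1⟩, ⟨x0, (hXD hx0).1, (hXD hx0).2⟩, ⟨zl, hWaw.2.1 hzl, hzl.2⟩⟩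
      exact ⟨(hax.2.2.2.1 M' hM'.1.1 Wa hWaw.1.1 hdbow).1, hXD⟩
    rcases hWbw with hWbw' | rfl
    · -- Wb ∈ 𝓦
      by_cases hWaBL : Wa = M \ M'
      · have : X = Wb ∩ M' := by
          rw [hXeq, hWaBL]
          ext x
          constructor
          · rintro ⟨h1, h2⟩
            refine ⟨h1, ?_⟩
            by_contra h3
            exact h2 ⟨w_sub hax hF hM hM' hbow hWbw' h1, h3⟩
          · rintro ⟨h1, h2⟩
            exact ⟨h1, fun h3 => h3.2 h2⟩
        rw [this]
        refine (hax.2.2.1 Wb hWbw'.1.1 M' hM'.1.1 ?_).2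
        exact ⟨x0, hWbX hx0, hXM' hx0⟩
      · obtain ⟨hD, hXD⟩ := hDmem hWaBL
        have : X = Wb ∩ (M' \ Wa) := by
          refine le_antisymm (fun x hx => ⟨hWbX hx, hXD hx⟩) ?_
          rintro x ⟨h1, h2⟩
          rw [hXeq]
          exact ⟨h1, h2.2⟩
        rw [this]
        refine (hax.2.2.1 Wb hWbw'.1.1 _ hD ?_).2
        exact ⟨x0, hWbX hx0, hXD hx0⟩
    · -- Wb = F
      by_cases hWaBL : Wa = M \ M'
      · have : X = M' := by
          rw [hXeq, hWaBL]
          ext x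
          constructor
          · rintro ⟨h1, h2⟩
            rcases (htop ▸ h1 : x ∈ M ∪ M') with h | h
            · by_contra h3
              exact h2 ⟨h, h3⟩
            · exact h
          · intro h
            exact ⟨htop ▸ Or.inr h, fun h3 => h3.2 h⟩
        rw [this]
        exact hM'.1.1
      · obtain ⟨hD, hXD⟩ := hDmem hWaBL
        have : X = M' \ Wa := by
          refine le_antisymm hXD ?_
          rintro x ⟨h1, h2⟩
          rw [hXeq]
          exact ⟨hax.1 M' hM'.1.1 h1, h2⟩
        rw [this]
        exact hD

end Interval

end CloneAux
namespace CloneAux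

section Assemble

variable {F : Set α} {𝓕 : Set (Set α)}
variable (hax : SatisfiesAxioms F 𝓕) (hF : F.Finite)

include hax in
lemma sub_axioms {B : Set α} (hB : IsBlockOf F 𝓕 B) :
    SatisfiesAxioms B {Y | Y ∈ 𝓕 ∧ Y ⊆ B} := by
  have hBF : B ⊆ F := hax.1 B hB.1.1
  refine ⟨fun Y hY => hY.2, ⟨?_, ?_, ?_⟩, ?_, ?_, ?_, ?_⟩
  · intro f hf
    exact ⟨hax.2.1.1 f (hBF hf), by simpa using hf⟩
  · exact fun h => hax.2.1.2.1 h.1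
  · exact ⟨hB.1.1, le_refl _⟩
  · rintro C1 ⟨hC1, hC1B⟩ C2 ⟨hC2, hC2B⟩ hint
    obtain ⟨h1, h2⟩ := hax.2.2.1 C1 hC1 C2 hC2 hint
    exact ⟨⟨h1, Set.union_subset hC1B hC2B⟩, ⟨h2, Set.inter_subset_left.trans hC1B⟩⟩
  · rintro C1 ⟨hC1, hC1B⟩ C2 ⟨hC2, hC2B⟩ hbw
    obtain ⟨h1, h2⟩ := hax.2.2.2.1 C1 hC1 C2 hC2 hbw
    exact ⟨⟨h1, Set.diff_subset.trans hC1B⟩, ⟨h2, Set.diff_subset.trans hC2B⟩⟩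
  · intro X hX
    refine le_trans (Set.encard_mono ?_) (hax.2.2.2.2.1 X hX.1)
    rintro Z ⟨hZ1, hZ2, hZ3, hZ4⟩
    refine ⟨hZ1.1, hZ2, hZ3, ?_⟩
    intro Y hY hXY hYZ
    exact hZ4 Y ⟨hY, hYZ.trans hZ1.2⟩ hXY hYZ
  · intro hch
    obtain ⟨k, A, hk, hmem, hcond⟩ := hch
    exact hax.2.2.2.2.2 ⟨k, A, hk, fun i => (hmem i).1, hcond⟩

include hax in
lemma comb_good {P : Set (Set α)} {bl : Set α → Set α → Prop} {o : Set α → α → α → Prop}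
    (hP : P = {B | IsBlockOf F 𝓕 B})
    (hcov : ∀ x ∈ F, ∃ B, IsBlockOf F 𝓕 B ∧ x ∈ B)
    (hoCC : ∀ B, IsBlockOf F 𝓕 B → ∀ Y, Y ∈ 𝓕 → Y ⊆ B → CC B (o B) Y)
    (hblIV : ∀ Y, IsBU F 𝓕 Y → Y ≠ F → ∀ B B' B'', IsBlockOf F 𝓕 B → IsBlockOf F 𝓕 B' →
      IsBlockOf F 𝓕 B'' → B ⊆ Y → B' ⊆ Y → B'' ∩ Y = ∅ → (bl B B'' ↔ bl B' B'')) :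
    ∀ Y ∈ 𝓕, CC F (combOrd P bl o) Y := by
  have hdisj : ∀ B ∈ P, ∀ B' ∈ P, ∀ x, x ∈ B → x ∈ B' → B = B' := by
    rw [hP]
    exact fun B hB B' hB' x hx hx' => blocks_disjoint hax hB hB' hx hx'
  intro Y hY
  rcases block_or_bu hax hY with ⟨B, hB, hYB⟩ | hYbu
  · exact combOrd_cc_inner hdisj (by
        rw [hP]
        intro x hx
        obtain ⟨B', hB', hxB'⟩ := hcov x hx
        exact ⟨B', hB', hxB'⟩) (by rw [hP]; exact hB) hYB (hoCC B hB Y hY hYB)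
  · by_cases hYF : Y = F
    · subst hYF
      intro c hc c' hc' a ha
      exact absurd ha.1 ha.2
    · refine combOrd_cc_blockunion hdisj (by
        rw [hP]
        intro x hx
        obtain ⟨B', hB', hxB'⟩ := hcov x hx
        exact ⟨B', hB', hxB'⟩) (hax.1 Y hY) ?_ ?_
      · rw [hP]
        exact fun B hB hint => hYbu.2 B hB hint
      · rw [hP]
        exact fun B hB B' hB' B'' hB'' h1 h2 h3 =>
          hblIV Y hYbu hYF B B' B'' hB hB' hB'' h1 h2 h3

end Assemble

end CloneAux
namespace CloneAux

section Build

variable {F : Set α} {𝓕 : Set (Set α)}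
variable (hax : SatisfiesAxioms F 𝓕) (hF : F.Finite)

/-- block-relation properties needed for the combined order -/
def BlOk (F : Set α) (𝓕 : Set (Set α)) (bl : Set α → Set α → Prop) : Prop :=
  (∀ B, IsBlockOf F 𝓕 B → ∀ B', IsBlockOf F 𝓕 B' → bl B B' → ¬ bl B' B) ∧
  (∀ B, IsBlockOf F 𝓕 B → ∀ B', IsBlockOf F 𝓕 B' → ∀ B'', IsBlockOf F 𝓕 B'' →
    bl B B' → bl B' B'' → bl B B'') ∧
  (∀ B, IsBlockOf F 𝓕 B → ∀ B', IsBlockOf F 𝓕 B' → B ≠ B' → bl B B' ∨ bl B' B)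

def BlIV (F : Set α) (𝓕 : Set (Set α)) (bl : Set α → Set α → Prop) : Prop :=
  ∀ Y, IsBU F 𝓕 Y → Y ≠ F → ∀ B B' B'', IsBlockOf F 𝓕 B → IsBlockOf F 𝓕 B' →
    IsBlockOf F 𝓕 B'' → B ⊆ Y → B' ⊆ Y → B'' ∩ Y = ∅ → (bl B B'' ↔ bl B' B'')

include hax in
lemma blok_flip {bl : Set α → Set α → Prop} (h : BlOk F 𝓕 bl) :
    BlOk F 𝓕 (fun B B' => bl B' B) := by
  refine ⟨fun B hB B' hB' h1 h2 => h.1 B' hB' B hB h1 h2,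
    fun B hB B' hB' B'' hB'' h1 h2 => h.2.1 B'' hB'' B' hB' B hB h2 h1,
    fun B hB B' hB' hne => (h.2.2 B hB B' hB' hne).imp_left id |>.symm⟩

include hax in
lemma bliv_flip {bl : Set α → Set α → Prop} (hok : BlOk F 𝓕 bl) (h : BlIV F 𝓕 bl) :
    BlIV F 𝓕 (fun B B' => bl B' B) := by
  intro Y hY hYF B B' B'' hB hB' hB'' h1 h2 h3
  have hne1 : B'' ≠ B := by
    rintro rfl
    obtain ⟨x, hx⟩ := mem_nonempty hax hB.1.1
    exact (Set.eq_empty_iff_forall_notMem.1 h3 x) ⟨hx, h1 hx⟩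
  have hne2 : B'' ≠ B' := by
    rintro rfl
    obtain ⟨x, hx⟩ := mem_nonempty hax hB'.1.1
    exact (Set.eq_empty_iff_forall_notMem.1 h3 x) ⟨hx, h2 hx⟩
  have e1 : bl B'' B ↔ ¬ bl B B'' := by
    constructor
    · intro hb hb'
      exact hok.1 B hB B'' hB'' hb' hb
    · intro hb
      exact (hok.2.2 B'' hB'' B hB hne1).resolve_right (fun hc => hb hc)
  have e2 : bl B'' B' ↔ ¬ bl B' B'' := by
    constructor
    · intro hb hb'
      exact hok.1 B' hB' B'' hB'' hb' hb
    · intro hb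
      exact (hok.2.2 B'' hB'' B' hB' hne2).resolve_right (fun hc => hb hc)
  show bl B'' B ↔ bl B'' B'
  rw [e1, e2, not_iff_not]
  exact h Y hY hYF B B' B'' hB hB' hB'' h1 h2 h3

include hax hF in
lemma build_orders {bl : Set α → Set α → Prop} {o : Set α → α → α → Prop}
    (hcov : ∀ x ∈ F, ∃ B, IsBlockOf F 𝓕 B ∧ x ∈ B)
    (hok : BlOk F 𝓕 bl) (hiv : BlIV F 𝓕 bl)
    (hoOrd : ∀ B, IsBlockOf F 𝓕 B → OrdOn B (o B))
    (hoCC : ∀ B, IsBlockOf F 𝓕 B → ∀ Y, Y ∈ 𝓕 → Y ⊆ B → CC B (o B) Y) :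
    OrdOn F (combOrd {B | IsBlockOf F 𝓕 B} bl o) ∧
      ∀ Y ∈ 𝓕, CC F (combOrd {B | IsBlockOf F 𝓕 B} bl o) Y := by
  constructor
  · refine combOrd_ordOn (fun B hB B' hB' x hx hx' => blocks_disjoint hax hB hB' hx hx')
      (fun x hx => by
        obtain ⟨B, hB, hxB⟩ := hcov x hx
        exact ⟨B, hB, hxB⟩)
      (fun B hB => hax.1 B hB.1.1) (fun B hB => hoOrd B hB)
      (fun B hB B' hB' => hok.1 B hB B' hB')
      (fun B hB B' hB' B'' hB'' => hok.2.1 B hB B' hB' B'' hB'')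
      (fun B hB B' hB' => hok.2.2 B hB B' hB')
  · exact comb_good hax rfl hcov hoCC hiv

include hax hF in
lemma case_inner {bl : Set α → Set α → Prop} {o : Set α → α → α → Prop}
    (hcov : ∀ x ∈ F, ∃ B, IsBlockOf F 𝓕 B ∧ x ∈ B)
    (hok : BlOk F 𝓕 bl) (hiv : BlIV F 𝓕 bl)
    (hoOrd : ∀ B, IsBlockOf F 𝓕 B → OrdOn B (o B))
    (hoCC : ∀ B, IsBlockOf F 𝓕 B → ∀ Y, Y ∈ 𝓕 → Y ⊆ B → CC B (o B) Y)
    {B X : Set α} {rB : α → α → Prop} (hB : IsBlockOf F 𝓕 B) (hXB : X ⊆ B)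
    (hrOrd : OrdOn B rB) (hrCC : ∀ Y, Y ∈ 𝓕 → Y ⊆ B → CC B rB Y) (hrbad : ¬ CC B rB X) :
    ∃ r, OrdOn F r ∧ (∀ Y ∈ 𝓕, CC F r Y) ∧ ¬ CC F r X := by
  classical
  set o' : Set α → α → α → Prop := fun C => if C = B then rB else o C with ho'def
  have hoOrd' : ∀ C, IsBlockOf F 𝓕 C → OrdOn C (o' C) := by
    intro C hC
    by_cases h : C = B
    · subst h
      simp only [ho'def, if_pos rfl]
      exact hrOrd
    · simp only [ho'def, if_neg h]
      exact hoOrd C hC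
  have hoCC' : ∀ C, IsBlockOf F 𝓕 C → ∀ Y, Y ∈ 𝓕 → Y ⊆ C → CC C (o' C) Y := by
    intro C hC Y hY hYC
    by_cases h : C = B
    · subst h
      simp only [ho'def, if_pos rfl]
      exact hrCC Y hY hYC
    · simp only [ho'def, if_neg h]
      exact hoCC C hC Y hY hYC
  obtain ⟨hOrd, hGood⟩ := build_orders hax hF hcov hok hiv hoOrd' hoCC'
  refine ⟨_, hOrd, hGood, ?_⟩
  rw [CC] at hrbad
  push_neg at hrbad
  obtain ⟨c, hc, c', hc', a, ha, hne⟩ := hrbad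
  intro hcc
  have hdisj : ∀ C ∈ {B | IsBlockOf F 𝓕 B}, ∀ C' ∈ {B | IsBlockOf F 𝓕 B},
      ∀ x, x ∈ C → x ∈ C' → C = C' :=
    fun C hC C' hC' x hx hx' => blocks_disjoint hax hC hC' hx hx'
  have haF : a ∈ F := hax.1 B hB.1.1 ha.1
  have e1 := combOrd_eval_same (bl := bl) (o := o') hdisj (show B ∈ _ from hB) (hXB hc) ha.1
  have e2 := combOrd_eval_same (bl := bl) (o := o') hdisj (show B ∈ _ from hB) (hXB hc') ha.1
  have := hcc c hc c' hc' a ⟨haF, ha.2⟩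
  rw [e1, e2] at this
  simp only [ho'def, if_pos rfl] at this
  rcases hne with ⟨h1, h2⟩ | ⟨h1, h2⟩
  · exact h2 (this.1 h1)
  · exact h1 (this.2 h2)

include hax hF in
lemma case_partial {bl : Set α → Set α → Prop} {o : Set α → α → α → Prop}
    (hcov : ∀ x ∈ F, ∃ B, IsBlockOf F 𝓕 B ∧ x ∈ B)
    (hok : BlOk F 𝓕 bl) (hiv : BlIV F 𝓕 bl)
    (hoOrd : ∀ B, IsBlockOf F 𝓕 B → OrdOn B (o B))
    (hoCC : ∀ B, IsBlockOf F 𝓕 B → ∀ Y, Y ∈ 𝓕 → Y ⊆ B → CC B (o B) Y)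
    {B Bc X : Set α} {c w a : α} (hB : IsBlockOf F 𝓕 B) (hBc : IsBlockOf F 𝓕 Bc)
    (hne : Bc ≠ B) (hbl : bl Bc B) (hXF : X ⊆ F)
    (hc : c ∈ X) (hcB : c ∈ Bc) (hw : w ∈ X) (hwB : w ∈ B) (ha : a ∈ B) (haX : a ∉ X) :
    ∃ r, OrdOn F r ∧ (∀ Y ∈ 𝓕, CC F r Y) ∧ ¬ CC F r X := by
  classical
  have haw : a ≠ w := fun h => haX (h ▸ hw)
  obtain ⟨t, htOrd, htCC, htaw⟩ : ∃ t, OrdOn B t ∧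
      (∀ Y, Y ∈ 𝓕 → Y ⊆ B → CC B t Y) ∧ t a w := by
    rcases (hoOrd B hB).1.2.2 a ha w hwB haw with h | h
    · exact ⟨o B, hoOrd B hB, hoCC B hB, h⟩
    · refine ⟨swapOrd (o B), (hoOrd B hB).swap, ?_, h⟩
      intro Y hY hYB
      exact (swap_cc_iff (hoOrd B hB).1 hYB).2 (hoCC B hB Y hY hYB)
  set o' : Set α → α → α → Prop := fun C => if C = B then t else o C with ho'def
  have hoOrd' : ∀ C, IsBlockOf F 𝓕 C → OrdOn C (o' C) := by
    intro C hC
    by_cases h : C = B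
    · subst h; simp only [ho'def, if_pos rfl]; exact htOrd
    · simp only [ho'def, if_neg h]; exact hoOrd C hC
  have hoCC' : ∀ C, IsBlockOf F 𝓕 C → ∀ Y, Y ∈ 𝓕 → Y ⊆ C → CC C (o' C) Y := by
    intro C hC Y hY hYC
    by_cases h : C = B
    · subst h; simp only [ho'def, if_pos rfl]; exact htCC Y hY hYC
    · simp only [ho'def, if_neg h]; exact hoCC C hC Y hY hYC
  obtain ⟨hOrd, hGood⟩ := build_orders hax hF hcov hok hiv hoOrd' hoCC'
  refine ⟨_, hOrd, hGood, ?_⟩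
  have hdisj : ∀ C ∈ {B | IsBlockOf F 𝓕 B}, ∀ C' ∈ {B | IsBlockOf F 𝓕 B},
      ∀ x, x ∈ C → x ∈ C' → C = C' :=
    fun C hC C' hC' x hx hx' => blocks_disjoint hax hC hC' hx hx'
  have haF : a ∈ F := hax.1 B hB.1.1 ha
  have h1 : combOrd {B | IsBlockOf F 𝓕 B} bl o' c a :=
    (combOrd_eval_diff hdisj (show Bc ∈ _ from hBc) (show B ∈ _ from hB) hcB ha hne).2 hbl
  have h2 : combOrd {B | IsBlockOf F 𝓕 B} bl o' a w := by
    refine (combOrd_eval_same hdisj (show B ∈ _ from hB) ha hwB).2 ?_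
    simp only [ho'def, if_pos rfl]
    exact htaw
  exact not_cc_of_witness hOrd.1 hXF hc hw ⟨haF, haX⟩ h1 h2

end Build

end CloneAux
namespace CloneAux

section MainInd

variable {F : Set α} {𝓕 : Set (Set α)}

lemma exists_ordOn_first {β : Type*} (s : Set β) (h : s.Finite) {a : β} (ha : a ∈ s) :
    ∃ r, OrdOn s r ∧ ∀ b ∈ s, b ≠ a → r a b := by
  obtain ⟨r0, hr0⟩ := exists_ordOn (s \ {a}) (h.subset Set.diff_subset)
  have heq : insert a (s \ {a}) = s := by
    rw [Set.insert_diff_singleton, Set.insert_eq_of_mem ha]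
  have h1 : OrdOn (insert a (s \ {a})) (prependOrd a (s \ {a}) r0) :=
    hr0.prepend (fun h' => h'.2 rfl)
  rw [heq] at h1
  refine ⟨prependOrd a (s \ {a}) r0, h1, ?_⟩
  intro b hb hba
  exact Or.inl ⟨rfl, hb, hba⟩

lemma exists_ordOn_first2 {β : Type*} (s : Set β) (h : s.Finite) {a b : β}
    (ha : a ∈ s) (hb : b ∈ s) (hab : a ≠ b) :
    ∃ r, OrdOn s r ∧ (∀ c ∈ s, c ≠ a → r a c) ∧ (∀ c ∈ s, c ≠ a → c ≠ b → r b c) := by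
  obtain ⟨r0, hr0⟩ := exists_ordOn ((s \ {a}) \ {b}) (h.subset (Set.diff_subset.trans Set.diff_subset))
  have hbmem : b ∈ s \ {a} := ⟨hb, fun h' => hab (Set.mem_singleton_iff.1 h').symm⟩
  have heq1 : insert b ((s \ {a}) \ {b}) = s \ {a} := by
    rw [Set.insert_diff_singleton]
    exact Set.insert_eq_of_mem hbmem
  have hr1 : OrdOn (insert b ((s \ {a}) \ {b})) (prependOrd b ((s \ {a}) \ {b}) r0) :=
    hr0.prepend (fun h' => h'.2 rfl)
  rw [heq1] at hr1
  have heq2 : insert a (s \ {a}) = s := by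
    rw [Set.insert_diff_singleton, Set.insert_eq_of_mem ha]
  have hr2 : OrdOn (insert a (s \ {a})) (prependOrd a (s \ {a}) (prependOrd b ((s \ {a}) \ {b}) r0)) :=
    hr1.prepend (fun h' => h'.2 rfl)
  rw [heq2] at hr2
  refine ⟨prependOrd a (s \ {a}) _, hr2, ?_, ?_⟩
  · intro c hc hca
    exact Or.inl ⟨rfl, hc, hca⟩
  · intro c hc hca hcb
    exact Or.inr (Or.inl ⟨rfl, ⟨hc, hca⟩, hcb⟩)

lemma ordOn_blok (hax : SatisfiesAxioms F 𝓕) {bl : Set α → Set α → Prop}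
    (h : OrdOn {B | IsBlockOf F 𝓕 B} bl) : BlOk F 𝓕 bl := by
  refine ⟨fun B hB B' hB' h1 => linOn.asymm h.1 hB hB' h1,
    fun B hB B' hB' B'' hB'' h1 h2 => h.1.2.1 B hB B' hB' B'' hB'' h1 h2,
    fun B hB B' hB' hne => h.1.2.2 B hB B' hB' hne⟩

lemma caseP_iv (hax : SatisfiesAxioms F 𝓕)
    (hP : ∀ Y, IsBU F 𝓕 Y → Y ≠ F → IsBlockOf F 𝓕 Y) (bl : Set α → Set α → Prop) :
    BlIV F 𝓕 bl := by
  intro Y hY hYF B B' B'' hB hB' hB'' h1 h2 h3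
  have hYb : IsBlockOf F 𝓕 Y := hP Y hY hYF
  obtain ⟨x, hx⟩ := block_nonempty hax hB
  obtain ⟨x', hx'⟩ := block_nonempty hax hB'
  have e1 : B = Y := blocks_disjoint hax hB hYb hx (h1 hx)
  have e2 : B' = Y := blocks_disjoint hax hB' hYb hx' (h2 hx')
  rw [e1, e2]

lemma caseQ_mm (hax : SatisfiesAxioms F 𝓕) (hF : F.Finite)
    (hcov : ∀ x ∈ F, ∃ B, IsBlockOf F 𝓕 B ∧ x ∈ B)
    (hQ : ∃ Y, IsBU F 𝓕 Y ∧ Y ≠ F ∧ ¬ IsBlockOf F 𝓕 Y) :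
    ∃ M M', IsMaxBU F 𝓕 M ∧ IsMaxBU F 𝓕 M' ∧ Bowtie M M' := by
  obtain ⟨Y0, hY0, hY0F, hY0b⟩ := hQ
  obtain ⟨M, hM, hY0M⟩ := exists_maxbu_above hax hF hY0 hY0F
  have hMnb : ¬ IsBlockOf F 𝓕 M := by
    intro hMb
    obtain ⟨z, hz⟩ := mem_nonempty hax hY0.1
    obtain ⟨Bz, hBz, hzB⟩ := hcov z (hax.1 Y0 hY0.1 hz)
    have hBzY0 : Bz ⊆ Y0 := hY0.2 Bz hBz ⟨z, hzB, hz⟩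
    have : Bz = M := blocks_disjoint hax hBz hMb hzB (hY0M (hBzY0 hzB))
    exact hY0b (by
      have : Y0 = Bz := le_antisymm (this ▸ hY0M) hBzY0
      exact this ▸ hBz)
  obtain ⟨Z, hZ, hzbow⟩ := bu_partner hax hF hcov hM.1 hM.2.1 hMnb
  have hZF : Z ≠ F := by
    rintro rfl
    obtain ⟨x, hx⟩ := hzbow.2.1
    exact hx.2 (hax.1 M hM.1.1 hx.1)
  obtain ⟨M', hM', hZM'⟩ := exists_maxbu_above hax hF hZ hZF
  refine ⟨M, M', hM, hM', ?_, ?_, ?_⟩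
  · obtain ⟨x, hx⟩ := hzbow.1
    exact ⟨x, hx.1, hZM' hx.2⟩
  · rw [Set.nonempty_iff_ne_empty]
    intro h
    rw [Set.diff_eq_empty] at h
    have heq : M' = M := hM.2.2 M' hM'.1 h hM'.2.1
    obtain ⟨x, hx⟩ := hzbow.2.2
    exact hx.2 (heq ▸ hZM' hx.1)
  · obtain ⟨x, hx⟩ := hzbow.2.2
    exact ⟨x, hZM' hx.1, hx.2⟩

lemma main_ind (N : ℕ) : ∀ (F : Set α) (𝓕 : Set (Set α)), F.Finite → F.Nonempty →
    F.ncard ≤ N → SatisfiesAxioms F 𝓕 →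
    (∃ r, OrdOn F r ∧ ∀ Y ∈ 𝓕, CC F r Y) ∧
    (∀ X, X ⊆ F → X.Nonempty → X ∉ 𝓕 →
      ∃ r, OrdOn F r ∧ (∀ Y ∈ 𝓕, CC F r Y) ∧ ¬ CC F r X) := by
  induction N with
  | zero =>
    intro F 𝓕 hF hne hcard hax
    have := (Set.ncard_pos hF).2 hne
    omega
  | succ N ih =>
    intro F 𝓕 hF hne hcard hax
    classical
    by_cases hsing : ∃ x, F = {x}
    · obtain ⟨x, rfl⟩ := hsing
      have hOrd : OrdOn ({x} : Set α) (fun _ _ => False) := by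
        refine ⟨⟨fun a _ h => h, fun a _ b _ c _ h => absurd h not_false, ?_⟩,
          fun a b h => absurd h not_false⟩
        rintro a rfl b rfl hne'
        exact absurd rfl hne'
      have hGood : ∀ Y ∈ 𝓕, CC ({x} : Set α) (fun _ _ => False) Y := by
        intro Y hY c hc c' hc' a ha
        obtain ⟨y, hy⟩ := mem_nonempty hax hY
        have : a = x := ha.1
        have : a ∈ Y := by
          rw [this]
          have := hax.1 Y hY hy
          rw [Set.mem_singleton_iff] at this
          exact this ▸ hy
        exact absurd this ha.2
      refine ⟨⟨_, hOrd, hGood⟩, ?_⟩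
      intro X hXF hXne hXmem
      exfalso
      apply hXmem
      have hXeq : X = {x} := by
        refine le_antisymm hXF ?_
        obtain ⟨z, hz⟩ := hXne
        have : z = x := hXF hz
        rintro y rfl
        exact this ▸ hz
      exact hXeq ▸ hax.2.1.2.2
    · have h2 : ∀ x ∈ F, ({x} : Set α) ≠ F := fun x hx h => hsing ⟨x, h.symm⟩
      have hcov : ∀ x ∈ F, ∃ B, IsBlockOf F 𝓕 B ∧ x ∈ B :=
        fun x hx => exists_block_of_mem hax hF hx (h2 x hx)
      have hPfin : {B | IsBlockOf F 𝓕 B}.Finite :=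
        (fam_finite hax hF).subset (fun B hB => hB.1.1)
      -- induction hypothesis for blocks
      have hIH : ∀ B, IsBlockOf F 𝓕 B →
          (∃ r, OrdOn B r ∧ ∀ Y, Y ∈ 𝓕 → Y ⊆ B → CC B r Y) ∧
          (∀ X, X ⊆ B → X.Nonempty → X ∉ 𝓕 →
            ∃ r, OrdOn B r ∧ (∀ Y, Y ∈ 𝓕 → Y ⊆ B → CC B r Y) ∧ ¬ CC B r X) := by
        intro B hB
        have hBF : B ⊆ F := hax.1 B hB.1.1
        have hBfin : B.Finite := hF.subset hBF
        have hBne : B.Nonempty := block_nonempty hax hB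
        have hlt : B.ncard ≤ N := by
          have := Set.ncard_lt_ncard (ssubset_of_ne_of_subset hB.2.1 hBF) hF
          omega
        have hres := ih B {Y | Y ∈ 𝓕 ∧ Y ⊆ B} hBfin hBne hlt (sub_axioms hax hB)
        constructor
        · obtain ⟨r, hr, hcc⟩ := hres.1
          exact ⟨r, hr, fun Y h1 h2 => hcc Y ⟨h1, h2⟩⟩
        · intro X hXB hXne hXmem
          obtain ⟨r, hr, hcc, hncc⟩ := hres.2 X hXB hXne (fun h => hXmem h.1)
          exact ⟨r, hr, fun Y h1 h2 => hcc Y ⟨h1, h2⟩, hncc⟩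
      have hbase : ∀ B, ∃ r, IsBlockOf F 𝓕 B →
          (OrdOn B r ∧ ∀ Y, Y ∈ 𝓕 → Y ⊆ B → CC B r Y) := by
        intro B
        by_cases h : IsBlockOf F 𝓕 B
        · obtain ⟨r, hr1, hr2⟩ := (hIH B h).1
          exact ⟨r, fun _ => ⟨hr1, hr2⟩⟩
        · exact ⟨fun _ _ => False, fun h' => absurd h' h⟩
      choose o ho using hbase
      have hoOrd : ∀ B, IsBlockOf F 𝓕 B → OrdOn B (o B) := fun B hB => (ho B hB).1
      have hoCC : ∀ B, IsBlockOf F 𝓕 B → ∀ Y, Y ∈ 𝓕 → Y ⊆ B → CC B (o B) Y :=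
        fun B hB => (ho B hB).2
      -- a base block relation
      have hbl_base : ∃ bl, BlOk F 𝓕 bl ∧ BlIV F 𝓕 bl := by
        by_cases hQ : ∃ Y, IsBU F 𝓕 Y ∧ Y ≠ F ∧ ¬ IsBlockOf F 𝓕 Y
        · obtain ⟨M, M', hM, hM', hbow⟩ := caseQ_mm hax hF hcov hQ
          refine ⟨blkL F 𝓕 M M', ⟨fun B hB B' hB' h1 => blkL_asymm hax hF hM hM' hbow
              (block_nonempty hax hB) (block_nonempty hax hB') h1,
              fun B hB B' hB' B'' hB'' h1 h2 => blkL_trans hax hF hM hM' hbow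
                (block_nonempty hax hB') h1 h2,
              fun B hB B' hB' hne => blkL_total hax hF hM hM' hbow hcov hB hB' hne⟩,
            fun Y hY hYF B B' B'' hB hB' hB'' h1 h2 h3 =>
              iv_of_bu hax hF hM hM' hbow hcov hY hYF hB hB' hB'' h1 h2 h3⟩
        · push_neg at hQ
          have hPall : ∀ Y, IsBU F 𝓕 Y → Y ≠ F → IsBlockOf F 𝓕 Y := by
            intro Y hY hYF
            by_contra h
            exact h (hQ Y hY hYF)
          obtain ⟨rP, hrP⟩ := exists_ordOn {B | IsBlockOf F 𝓕 B} hPfin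
          exact ⟨rP, ordOn_blok hax hrP, caseP_iv hax hPall rP⟩
      have hdirected : ∀ Bc B, IsBlockOf F 𝓕 Bc → IsBlockOf F 𝓕 B → Bc ≠ B →
          ∃ bl, BlOk F 𝓕 bl ∧ BlIV F 𝓕 bl ∧ bl Bc B := by
        intro Bc B hBc hB hne
        obtain ⟨bl0, hok0, hiv0⟩ := hbl_base
        rcases hok0.2.2 Bc hBc B hB hne with h | h
        · exact ⟨bl0, hok0, hiv0, h⟩
        · exact ⟨fun C C' => bl0 C' C, blok_flip hax hok0, bliv_flip hax hok0 hiv0, h⟩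
      have htriple : ∀ X, X ⊆ F → X.Nonempty → X ∉ 𝓕 →
          (∀ B, IsBlockOf F 𝓕 B → (B ∩ X).Nonempty → B ⊆ X) →
          ∃ bl, BlOk F 𝓕 bl ∧ BlIV F 𝓕 bl ∧
            ∃ B B' B'', IsBlockOf F 𝓕 B ∧ IsBlockOf F 𝓕 B' ∧ IsBlockOf F 𝓕 B'' ∧
              B ⊆ X ∧ B' ⊆ X ∧ B'' ∩ X = ∅ ∧ bl B B'' ∧ bl B'' B' := by
        intro X hXF hXne hXmem hXblocks
        have hXnF : X ≠ F := fun h => hXmem (h ▸ hax.2.1.2.2)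
        obtain ⟨x0, hx0⟩ := hXne
        obtain ⟨B1, hB1, hx0B⟩ := hcov x0 (hXF hx0)
        have hB1X : B1 ⊆ X := hXblocks B1 hB1 ⟨x0, hx0B, hx0⟩
        obtain ⟨u, huF, huX⟩ : ∃ u, u ∈ F ∧ u ∉ X := by
          by_contra hc
          push_neg at hc
          exact hXnF (le_antisymm hXF hc)
        obtain ⟨B2, hB2, huB⟩ := hcov u huF
        have hB2X : B2 ∩ X = ∅ := by
          by_cases h : (B2 ∩ X).Nonempty
          · exact absurd (hXblocks B2 hB2 h huB) huX
          · exact Set.not_nonempty_iff_eq_empty.1 h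
        obtain ⟨c3, hc3X, hc3B⟩ : ∃ c, c ∈ X ∧ c ∉ B1 := by
          by_contra hc
          push_neg at hc
          exact hXmem ((le_antisymm hc hB1X : X = B1) ▸ hB1.1.1)
        obtain ⟨B3, hB3, hc3B3⟩ := hcov c3 (hXF hc3X)
        have hB3X : B3 ⊆ X := hXblocks B3 hB3 ⟨c3, hc3B3, hc3X⟩
        have hB31 : B3 ≠ B1 := fun h => hc3B (h ▸ hc3B3)
        have hB21 : B2 ≠ B1 := by
          rintro rfl
          exact (Set.eq_empty_iff_forall_notMem.1 hB2X x0) ⟨hx0B, hx0⟩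
        have hB23 : B2 ≠ B3 := by
          rintro rfl
          obtain ⟨y, hy⟩ := block_nonempty hax hB3
          exact (Set.eq_empty_iff_forall_notMem.1 hB2X y) ⟨hy, hB3X hy⟩
        by_cases hQ : ∃ Y, IsBU F 𝓕 Y ∧ Y ≠ F ∧ ¬ IsBlockOf F 𝓕 Y
        · obtain ⟨M, M', hM, hM', hbow⟩ := caseQ_mm hax hF hcov hQ
          have hok : BlOk F 𝓕 (blkL F 𝓕 M M') :=
            ⟨fun B hB B' hB' h1 => blkL_asymm hax hF hM hM' hbow
              (block_nonempty hax hB) (block_nonempty hax hB') h1,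
             fun B hB B' hB' B'' hB'' h1 h2 => blkL_trans hax hF hM hM' hbow
              (block_nonempty hax hB') h1 h2,
             fun B hB B' hB' hne => blkL_total hax hF hM hM' hbow hcov hB hB' hne⟩
          have hiv : BlIV F 𝓕 (blkL F 𝓕 M M') :=
            fun Y hY hYF B B' B'' hB hB' hB'' h1 h2 h3 =>
              iv_of_bu hax hF hM hM' hbow hcov hY hYF hB hB' hB'' h1 h2 h3
          have hniv : ¬ (∀ B B' B'', IsBlockOf F 𝓕 B → IsBlockOf F 𝓕 B' →
              IsBlockOf F 𝓕 B'' → B ⊆ X → B' ⊆ X → B'' ∩ X = ∅ →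
              (blkL F 𝓕 M M' B B'' ↔ blkL F 𝓕 M M' B' B'')) := by
            intro hiv'
            exact hXmem (bu_of_iv hax hF hM hM' hbow hcov hXF ⟨x0, hx0⟩ hXnF hXblocks hiv')
          push_neg at hniv
          obtain ⟨B, B', B'', hB, hB', hB'', h1, h2, h3, hne⟩ := hniv
          have hd1 : B ≠ B'' := by
            rintro rfl
            obtain ⟨x, hx⟩ := block_nonempty hax hB
            exact (Set.eq_empty_iff_forall_notMem.1 h3 x) ⟨hx, h1 hx⟩
          have hd2 : B' ≠ B'' := by
            rintro rfl
            obtain ⟨x, hx⟩ := block_nonempty hax hB'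
            exact (Set.eq_empty_iff_forall_notMem.1 h3 x) ⟨hx, h2 hx⟩
          refine ⟨blkL F 𝓕 M M', hok, hiv, ?_⟩
          rcases hne with ⟨ha, hb⟩ | ⟨ha, hb⟩
          · exact ⟨B, B', B'', hB, hB', hB'', h1, h2, h3, ha,
              (blkL_total hax hF hM hM' hbow hcov hB'' hB' hd2.symm).resolve_right hb⟩
          · exact ⟨B', B, B'', hB', hB, hB'', h2, h1, h3, hb,
              (blkL_total hax hF hM hM' hbow hcov hB'' hB hd1.symm).resolve_right ha⟩
        · push_neg at hQ
          have hPall : ∀ Y, IsBU F 𝓕 Y → Y ≠ F → IsBlockOf F 𝓕 Y := by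
            intro Y hY hYF
            by_contra h
            exact h (hQ Y hY hYF)
          obtain ⟨rP, hrP, hfirst, hsecond⟩ := exists_ordOn_first2 {B | IsBlockOf F 𝓕 B}
            hPfin (show B1 ∈ _ from hB1) (show B2 ∈ _ from hB2) (Ne.symm hB21)
          exact ⟨rP, ordOn_blok hax hrP, caseP_iv hax hPall rP,
            B1, B3, B2, hB1, hB3, hB2, hB1X, hB3X, hB2X,
            hfirst B2 hB2 hB21, hsecond B3 hB3 hB31 hB23.symm⟩
      -- part (a)
      obtain ⟨bl0, hok0, hiv0⟩ := hbl_base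
      obtain ⟨hOrd0, hGood0⟩ := build_orders hax hF hcov hok0 hiv0 hoOrd hoCC
      refine ⟨⟨_, hOrd0, hGood0⟩, ?_⟩
      -- part (b)
      intro X hXF hXne hXmem
      by_cases hXb : ∃ B, IsBlockOf F 𝓕 B ∧ X ⊆ B
      · obtain ⟨B, hB, hXB⟩ := hXb
        obtain ⟨rB, hrOrd, hrCC, hrbad⟩ := (hIH B hB).2 X hXB hXne hXmem
        exact case_inner hax hF hcov hok0 hiv0 hoOrd hoCC hB hXB hrOrd hrCC hrbad
      · push_neg at hXb
        by_cases hXfull : ∀ B, IsBlockOf F 𝓕 B → (B ∩ X).Nonempty → B ⊆ X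
        · obtain ⟨bl, hok, hiv, B, B', B'', hB, hB', hB'', h1, h2, h3, hbl1, hbl2⟩ :=
            htriple X hXF hXne hXmem hXfull
          obtain ⟨hOrd, hGood⟩ := build_orders hax hF hcov hok hiv hoOrd hoCC
          refine ⟨_, hOrd, hGood, ?_⟩
          obtain ⟨c, hc⟩ := block_nonempty hax hB
          obtain ⟨c', hc'⟩ := block_nonempty hax hB'
          obtain ⟨a, ha⟩ := block_nonempty hax hB''
          have haX : a ∉ X := fun h => (Set.eq_empty_iff_forall_notMem.1 h3 a) ⟨ha, h⟩
          have hd1 : B ≠ B'' := by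
            rintro rfl
            exact haX (h1 ha)
          have hd2 : B'' ≠ B' := by
            rintro rfl
            exact haX (h2 ha)
          have hdisj : ∀ C ∈ {B | IsBlockOf F 𝓕 B}, ∀ C' ∈ {B | IsBlockOf F 𝓕 B},
              ∀ x, x ∈ C → x ∈ C' → C = C' :=
            fun C hC C' hC' x hx hx' => blocks_disjoint hax hC hC' hx hx'
          have e1 : combOrd {B | IsBlockOf F 𝓕 B} bl o c a :=
            (combOrd_eval_diff hdisj (show B ∈ _ from hB) (show B'' ∈ _ from hB'')
              hc ha hd1).2 hbl1
          have e2 : combOrd {B | IsBlockOf F 𝓕 B} bl o a c' :=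
            (combOrd_eval_diff hdisj (show B'' ∈ _ from hB'') (show B' ∈ _ from hB')
              ha hc' hd2).2 hbl2
          exact not_cc_of_witness hOrd.1 hXF (h1 hc) (h2 hc')
            ⟨hax.1 B'' hB''.1.1 ha, haX⟩ e1 e2
        · push_neg at hXfull
          obtain ⟨B, hB, ⟨w, hwB, hwX⟩, hnsub⟩ := hXfull
          obtain ⟨a, haB, haX⟩ := Set.not_subset.1 hnsub
          obtain ⟨c, hcX, hcB⟩ := Set.not_subset.1 (hXb B hB)
          obtain ⟨Bc, hBc, hcBc⟩ := hcov c (hXF hcX)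
          have hne : Bc ≠ B := fun h => hcB (h ▸ hcBc)
          obtain ⟨bl, hok, hiv, hbl⟩ := hdirected Bc B hBc hB hne
          exact case_partial hax hF hcov hok hiv hoOrd hoCC hB hBc hne hbl hXF
            hcX hcBc hwX hwB haB haX


end MainInd

end CloneAux
namespace CloneAux

theorem clone_of_axioms {F : Set α} {𝓕 : Set (Set α)} (hF : F.Finite) (hne : F.Nonempty)
    (hax : SatisfiesAxioms F 𝓕) : IsCloneStructure F 𝓕 := by
  classical
  obtain ⟨⟨r0, hr0Ord, hr0CC⟩, hbad⟩ :=
    main_ind F.ncard F 𝓕 hF hne (le_refl _) hax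
  have hbad' : ∀ X : Set α, ∃ r, (X ⊆ F ∧ X.Nonempty ∧ X ∉ 𝓕) →
      OrdOn F r ∧ (∀ Y ∈ 𝓕, CC F r Y) ∧ ¬ CC F r X := by
    intro X
    by_cases h : X ⊆ F ∧ X.Nonempty ∧ X ∉ 𝓕
    · obtain ⟨r, hr⟩ := hbad X h.1 h.2.1 h.2.2
      exact ⟨r, fun _ => hr⟩
    · exact ⟨r0, fun h' => absurd h' h⟩
  choose f hf using hbad'
  set 𝒳 : Set (Set α) := {X | X ⊆ F ∧ X.Nonempty ∧ X ∉ 𝓕} with h𝒳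
  have h𝒳fin : 𝒳.Finite := hF.finite_subsets.subset (fun X hX => hX.1)
  set l : List (Set α) := h𝒳fin.toFinset.toList with hl
  have hmem : ∀ X, X ∈ 𝒳 ↔ X ∈ l := by
    intro X
    rw [hl, Finset.mem_toList, Set.Finite.mem_toFinset]
  set m := l.length with hm
  refine ⟨m + 1, Fin.cases r0 (fun j => f (l.get j)), ⟨Nat.succ_pos m, ?_⟩, ?_⟩
  · intro i
    refine Fin.cases ?_ ?_ i
    · simpa using hr0Ord.1
    · intro j
      simp only [Fin.cases_succ]
      have hXj : l.get j ∈ 𝒳 := (hmem _).2 (l.get_mem j)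
      exact (hf (l.get j) hXj).1.1
  · ext X
    constructor
    · intro hX
      refine ⟨mem_nonempty hax hX, hax.1 X hX, ?_⟩
      intro c hc c' hc' a ha i
      refine Fin.cases ?_ ?_ i
      · simpa using hr0CC X hX c hc c' hc' a ha
      · intro j
        simp only [Fin.cases_succ]
        have hXj : l.get j ∈ 𝒳 := (hmem _).2 (l.get_mem j)
        exact (hf (l.get j) hXj).2.1 X hX c hc c' hc' a ha
    · rintro ⟨hXne, hXF, hcond⟩
      by_contra hXmem
      have hX𝒳 : X ∈ 𝒳 := ⟨hXF, hXne, hXmem⟩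
      obtain ⟨j, hj⟩ := List.mem_iff_get.1 ((hmem X).1 hX𝒳)
      subst hj
      have hXj : l.get j ∈ 𝒳 := (hmem _).2 (l.get_mem j)
      apply (hf (l.get j) hXj).2.2
      intro c hc c' hc' a ha
      have := hcond c hc c' hc' a ha j.succ
      simp only [Fin.cases_succ] at this
      exact this
end CloneAux

theorem clone_structure_iff_axioms (F : Set α) (hF : F.Finite) (hne : F.Nonempty)
    (𝓕 : Set (Set α)) :
    IsCloneStructure F 𝓕 ↔ SatisfiesAxioms F 𝓕 := by
  constructor
  · rintro ⟨n, R, hprof, rfl⟩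
    exact CloneAux.axioms_of_profile hF hne hprof
  · intro hax
    exact CloneAux.clone_of_axioms hF hne hax
end

section
/- Let 𝒞 be a clone structure over a finite set C, and let ℬ and 𝒟 be two distinct proper irreducible subfamilies of 𝒞 with supports B ⊆ C and D ⊆ C, respectively. Then B ∩ D = ∅. -/
variable {α : Type*}

/-- `Y` is a proper subset of `Z`: `Y ⊆ Z` and `1 < |Y| < |Z|`. -/
def IsProperSubsetOf (Y Z : Set α) : Prop :=
  Y ⊆ Z ∧ 1 < Y.ncard ∧ Y.ncard < Z.ncard

/-- `𝓔` is a subfamily of `𝓕` with support `E`. -/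
def IsSubfamilyWithSupport (𝓕 𝓔 : Set (Set α)) (E : Set α) : Prop :=
  E ∈ 𝓕 ∧ 𝓔 = {X ∈ 𝓕 | X ⊆ E} ∧ ∀ X ∈ 𝓕, X ∉ 𝓔 → E ⊆ X ∨ X ∩ E = ∅

/-- The family `𝓕` over ground set `F` has no proper subfamilies. -/
def IrreducibleFamily (F : Set α) (𝓕 : Set (Set α)) : Prop :=
  ¬∃ (𝓔 : Set (Set α)) (E : Set α),
      IsSubfamilyWithSupport 𝓕 𝓔 E ∧ IsProperSubsetOf E F

theorem irreducible_subfamilies_disjoint_supports (C : Set α) (hC : C.Finite)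
    (𝓒 : Set (Set α)) (h : IsCloneStructure C 𝓒)
    (𝓑 𝓓 : Set (Set α)) (B D : Set α)
    (hB : IsSubfamilyWithSupport 𝓒 𝓑 B) (hBprop : IsProperSubsetOf B C)
    (hBirr : IrreducibleFamily B 𝓑)
    (hD : IsSubfamilyWithSupport 𝓒 𝓓 D) (hDprop : IsProperSubsetOf D C)
    (hDirr : IrreducibleFamily D 𝓓)
    (hne : 𝓑 ≠ 𝓓) :
    B ∩ D = ∅ := by
  by_contra hcap
  have hBD : (B ∩ D).Nonempty := Set.nonempty_iff_ne_empty.mpr hcap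
  obtain ⟨hBc, hBeq, hBmax⟩ := hB
  obtain ⟨hDc, hDeq, hDmax⟩ := hD
  have hDfin : D.Finite := hC.subset hDprop.1
  have hBfin : B.Finite := hC.subset hBprop.1
  by_cases hBsubD : B ⊆ D
  · by_cases hDsubB : D ⊆ B
    · exact hne (by rw [hBeq, hDeq, Set.Subset.antisymm hBsubD hDsubB])
    · apply hDirr
      refine ⟨{X ∈ 𝓓 | X ⊆ B}, B, ⟨?_, rfl, ?_⟩, hBsubD, hBprop.2.1, ?_⟩
      · rw [hDeq]; exact ⟨hBc, hBsubD⟩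
      · intro X hX hXn
        have hXB : ¬ X ⊆ B := fun hh => hXn ⟨hX, hh⟩
        have hXC : X ∈ 𝓒 := by rw [hDeq] at hX; exact hX.1
        exact hBmax X hXC (by rw [hBeq]; exact fun hh => hXB hh.2)
      · exact Set.ncard_lt_ncard (hBsubD.ssubset_of_ne (fun hh => hDsubB hh.ge)) hDfin
  · by_cases hDsubB : D ⊆ B
    · apply hBirr
      refine ⟨{X ∈ 𝓑 | X ⊆ D}, D, ⟨?_, rfl, ?_⟩, hDsubB, hDprop.2.1, ?_⟩
      · rw [hBeq]; exact ⟨hDc, hDsubB⟩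
      · intro X hX hXn
        have hXD : ¬ X ⊆ D := fun hh => hXn ⟨hX, hh⟩
        have hXC : X ∈ 𝓒 := by rw [hBeq] at hX; exact hX.1
        exact hDmax X hXC (by rw [hDeq]; exact fun hh => hXD hh.2)
      · exact Set.ncard_lt_ncard (hDsubB.ssubset_of_ne (fun hh => hBsubD hh.ge)) hBfin
    · have hD𝓑 : D ∉ 𝓑 := by rw [hBeq]; exact fun hh => hDsubB hh.2
      rcases hBmax D hDc hD𝓑 with hh | hh
      · exact hBsubD hh
      · exact hcap (by rw [Set.inter_comm]; exact hh)
end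

section
/- Let ℱ be an irreducible family of subsets of a finite set F satisfying axioms A1–A5, and let D ∈ ℱ be a minimal proper subset of ℱ, i.e., D is a proper subset of F and no proper subset D' ∈ ℱ of F satisfies D' ⊊ D. Then |D| = 2. -/
variable {α : Type*}

theorem minimal_proper_subset_card_two (F : Set α) (hF : F.Finite)
    (𝓕 : Set (Set α)) (hax : SatisfiesAxioms F 𝓕)
    (hirr : IrreducibleFamily F 𝓕)
    (D : Set α) (hD : D ∈ 𝓕) (hprop : IsProperSubsetOf D F)
    (hmin : ∀ D' ∈ 𝓕, IsProperSubsetOf D' F → ¬D' ⊂ D) :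
    D.ncard = 2 := by
  obtain ⟨hsub, hax1, hax2, hax3, _⟩ := hax
  obtain ⟨hDF, h1D, hDF2⟩ := hprop
  have hDfin : D.Finite := hF.subset hDF
  -- every strict subset of D in 𝓕 is a singleton
  have hsing : ∀ Y ∈ 𝓕, Y ⊂ D → Y.ncard = 1 := by
    intro Y hY hYD
    have hYne : Y.Nonempty := by
      rcases Set.eq_empty_or_nonempty Y with h | h
      · exact absurd (h ▸ hY) hax1.2.1
      · exact h
    have h1 : 0 < Y.ncard := (Set.ncard_pos (hDfin.subset hYD.subset)).mpr hYne
    by_contra hne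
    have h2 : 1 < Y.ncard := by omega
    have hlt : Y.ncard < D.ncard := Set.ncard_lt_ncard hYD hDfin
    exact hmin Y hY ⟨hYD.subset.trans hDF, h2, hlt.trans hDF2⟩ hYD
  by_contra hne2
  have h3 : 3 ≤ D.ncard := by omega
  apply hirr
  refine ⟨{X ∈ 𝓕 | X ⊆ D}, D, ⟨hD, rfl, ?_⟩, hDF, h1D, hDF2⟩
  intro X hX hXnE
  have hXD : ¬X ⊆ D := fun h => hXnE ⟨hX, h⟩
  by_contra hcon
  push_neg at hcon
  obtain ⟨hDX, hXDne⟩ := hcon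
  have hint : (X ∩ D).Nonempty := hXDne
  have hbow : Bowtie X D := ⟨hint, Set.diff_nonempty.mpr hXD, Set.diff_nonempty.mpr hDX⟩
  have hdiff : D \ X ∈ 𝓕 := (hax3 X hX D hD hbow).2
  have hcap : X ∩ D ∈ 𝓕 := (hax2 X hX D hD hint).2
  have hc1 : (X ∩ D).ncard = 1 := by
    apply hsing _ hcap
    refine ⟨Set.inter_subset_right, fun h => hDX ?_⟩
    intro d hd; exact (h hd).1
  have hc2 : (D \ X).ncard = 1 := by
    apply hsing _ hdiff
    refine ⟨Set.diff_subset, fun h => ?_⟩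
    obtain ⟨x, hx⟩ := hint
    exact (h hx.2).2 hx.1
  have hdisj : Disjoint (X ∩ D) (D \ X) := by
    apply Set.disjoint_left.mpr
    rintro a ⟨ha, _⟩ ⟨_, ha2⟩
    exact ha2 ha
  have hunion : (X ∩ D) ∪ (D \ X) = D := by
    ext a
    constructor
    · rintro (⟨_, h⟩ | ⟨h, _⟩) <;> exact h
    · intro h
      by_cases hx : a ∈ X
      · exact Or.inl ⟨hx, h⟩
      · exact Or.inr ⟨h, hx⟩
  have : D.ncard = 2 := by
    rw [← hunion, Set.ncard_union_eq hdisj (hDfin.subset Set.inter_subset_right)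
      (hDfin.subset Set.diff_subset), hc1, hc2]
  omega
end

section
/- Let ℱ be a family of subsets of a finite set F satisfying axioms A1–A5. Then each element f ∈ F belongs to at most two minimal proper subsets of ℱ, where a minimal proper subset of ℱ is a proper subset D ∈ ℱ of F such that no proper subset D' ∈ ℱ of F satisfies D' ⊊ D. -/
variable {α : Type*}

/-- `D` is a minimal proper subset of `F` belonging to the family `𝓕`. -/
def IsMinProperSubset (F : Set α) (𝓕 : Set (Set α)) (D : Set α) : Prop :=
  D ∈ 𝓕 ∧ IsProperSubsetOf D F ∧ ∀ D' ∈ 𝓕, IsProperSubsetOf D' F → ¬D' ⊂ D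

theorem element_in_at_most_two_minimal_proper_subsets (F : Set α) (hF : F.Finite)
    (𝓕 : Set (Set α)) (hax : SatisfiesAxioms F 𝓕) (f : α) (hf : f ∈ F) :
    {D | IsMinProperSubset F 𝓕 D ∧ f ∈ D}.encard ≤ 2 := by
  classical
  obtain ⟨hsub, ⟨hsing, hempty, hFmem⟩, hA2, hA3, hA4, hA5⟩ := hax
  set S := {D | IsMinProperSubset F 𝓕 D ∧ f ∈ D} with hS
  have hfinmem : ∀ X ∈ 𝓕, X.Finite := fun X hX => hF.subset (hsub X hX)
  -- any two distinct members of S intersect exactly in {f}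
  have hkey : ∀ D ∈ S, ∀ D' ∈ S, D ≠ D' → D ∩ D' = {f} := by
    rintro D ⟨⟨hD𝓕, hDp, hDmin⟩, hfD⟩ D' ⟨⟨hD'𝓕, hD'p, hD'min⟩, hfD'⟩ hne'
    have hnsub : ¬ D ⊆ D' := fun h =>
      hD'min D hD𝓕 hDp ⟨h, fun h' => hne' (subset_antisymm h h')⟩
    have hnsub' : ¬ D' ⊆ D := fun h =>
      hDmin D' hD'𝓕 hD'p ⟨h, fun h' => hne'.symm (subset_antisymm h h')⟩
    have hIntNe : (D ∩ D').Nonempty := ⟨f, hfD, hfD'⟩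
    have hInt𝓕 : D ∩ D' ∈ 𝓕 := (hA2 D hD𝓕 D' hD'𝓕 hIntNe).2
    have hssub : D ∩ D' ⊂ D := by
      refine ⟨Set.inter_subset_left, fun h => hnsub ?_⟩
      intro x hx
      exact (h hx).2
    have hnp : ¬ IsProperSubsetOf (D ∩ D') F := fun hp => hDmin (D ∩ D') hInt𝓕 hp hssub
    have hIntFin : (D ∩ D').Finite := hfinmem _ hInt𝓕
    have hlt : (D ∩ D').ncard < F.ncard :=
      lt_of_le_of_lt (Set.ncard_le_ncard Set.inter_subset_left (hfinmem D hD𝓕)) hDp.2.2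
    have hle1 : (D ∩ D').ncard ≤ 1 := by
      by_contra h
      exact hnp ⟨Set.inter_subset_left.trans hDp.1, lt_of_not_ge h, hlt⟩
    have h1 : (D ∩ D').ncard = 1 :=
      le_antisymm hle1 ((Set.ncard_pos hIntFin).mpr hIntNe)
    obtain ⟨a, ha⟩ := Set.ncard_eq_one.mp h1
    have hfa : f ∈ D ∩ D' := ⟨hfD, hfD'⟩
    rw [ha] at hfa ⊢
    have hfa' : f = a := Set.mem_singleton_iff.mp hfa
    subst hfa'
    rfl
  -- each D ∈ S contains a proper minimal superset of {f}
  have hexists : ∀ D ∈ S, ∃ Z, IsProperMinimalSuperset 𝓕 ({f} : Set α) Z ∧ Z ⊆ D := by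
    rintro D ⟨⟨hD𝓕, hDp, hDmin⟩, hfD⟩
    set T := {Y | Y ∈ 𝓕 ∧ ({f} : Set α) ⊂ Y ∧ Y ⊆ D} with hT
    have hTfin : T.Finite := by
      apply (hF.finite_subsets).subset
      intro Y hY
      exact hsub Y hY.1
    have hfssD : ({f} : Set α) ⊂ D := by
      refine ⟨Set.singleton_subset_iff.mpr hfD, fun h => ?_⟩
      have hDeq : D = {f} := subset_antisymm h (Set.singleton_subset_iff.mpr hfD)
      have h1 := hDp.2.1
      rw [hDeq, Set.ncard_singleton] at h1
      exact absurd h1 (lt_irrefl 1)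
    have hTne : T.Nonempty := ⟨D, hD𝓕, hfssD, Set.Subset.rfl⟩
    obtain ⟨Z, hZT, hZmin⟩ := hTfin.exists_minimal hTne
    refine ⟨Z, ⟨hZT.1, hZT.2.1.subset, fun h => hZT.2.1.2 h.ge, ?_⟩, hZT.2.2⟩
    intro Y hY𝓕 hfY hYZ
    by_cases hYf : Y = ({f} : Set α)
    · exact Or.inl hYf
    · refine Or.inr ?_
      have hYT : Y ∈ T := ⟨hY𝓕, ⟨hfY, fun h => hYf (subset_antisymm h hfY)⟩, hYZ.trans hZT.2.2⟩
      exact subset_antisymm hYZ (hZmin hYT hYZ)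
  -- choose such a Z for each D
  set g : Set α → Set α := fun D =>
    if h : ∃ Z, IsProperMinimalSuperset 𝓕 ({f} : Set α) Z ∧ Z ⊆ D then h.choose else ∅
    with hg
  have hgspec : ∀ D ∈ S, IsProperMinimalSuperset 𝓕 ({f} : Set α) (g D) ∧ g D ⊆ D := by
    intro D hD
    have h := hexists D hD
    simp only [hg, dif_pos h]
    exact h.choose_spec
  have hinj : Set.InjOn g S := by
    intro D hD D' hD' hgeq
    by_contra hne'
    have h1 := hgspec D hD
    have h2 := hgspec D' hD'
    have hZsub : g D ⊆ D ∩ D' := Set.subset_inter h1.2 (hgeq ▸ h2.2)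
    rw [hkey D hD D' hD' hne'] at hZsub
    exact h1.1.2.2.1 (subset_antisymm h1.1.2.1 hZsub)
  calc S.encard = (g '' S).encard := (hinj.encard_image).symm
    _ ≤ {Z | IsProperMinimalSuperset 𝓕 ({f} : Set α) Z}.encard := by
        apply Set.encard_mono
        rintro _ ⟨D, hD, rfl⟩
        exact (hgspec D hD).1
    _ ≤ 2 := hA4 ({f} : Set α) (hsing f hf)
end

section
/- Let R be a preference profile over a finite candidate set C with |peak(R)| ≥ 2 that is single-peaked with respect to two linear orders > and >' on C. Let p_1 and p_2 be the extreme peaks of R with respect to > with p_1 > p_2. Then p_1 and p_2 are also the extreme peaks of R with respect to >'. Moreover, if p_1 >' p_2, then > and >' agree on the set P = {c ∈ C : p_1 > c > p_2} ∪ {p_1, p_2}, i.e., for all a, b ∈ P, a > b if and only if a >' b. -/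
variable {α : Type*}

/-- `r` is compatible with the societal axis `ax` on `C`. -/
def AxisCompatible (C : Set α) (ax r : α → α → Prop) : Prop :=
  ∀ c ∈ C, ∀ d ∈ C, ∀ e ∈ C, ((ax c d ∧ ax d e) ∨ (ax e d ∧ ax d c)) → r c d → r d e

/-- The profile `R` is single-peaked with respect to the societal axis `ax`. -/
def SinglePeakedWrt (C : Set α) {n : ℕ} (R : Fin n → α → α → Prop)
    (ax : α → α → Prop) : Prop :=
  IsLinOn C ax ∧ ∀ i, AxisCompatible C ax (R i)

/-- The profile `R` is single-peaked. -/
def SinglePeaked (C : Set α) {n : ℕ} (R : Fin n → α → α → Prop) : Prop :=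
  ∃ ax, SinglePeakedWrt C R ax

/-- `p` is the top-ranked candidate of the order `r` on `C`. -/
def IsPeakOf (C : Set α) (r : α → α → Prop) (p : α) : Prop :=
  p ∈ C ∧ ∀ a ∈ C, a ≠ p → r p a

/-- The set of peaks of the profile `R`. -/
def peakSet (C : Set α) {n : ℕ} (R : Fin n → α → α → Prop) : Set α :=
  {p | ∃ i, IsPeakOf C (R i) p}

/-- `p₁` and `p₂` are the extreme peaks of `R` with respect to the axis `gt`,
with `p₁` above `p₂`. -/
def ExtremePeaksWrt (C : Set α) {n : ℕ} (R : Fin n → α → α → Prop)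
    (gt : α → α → Prop) (p₁ p₂ : α) : Prop :=
  p₁ ∈ peakSet C R ∧ p₂ ∈ peakSet C R ∧ gt p₁ p₂ ∧
    ∀ p ∈ peakSet C R, p ≠ p₁ → p ≠ p₂ → gt p₁ p ∧ gt p p₂

lemma linAsymm {C : Set α} {r : α → α → Prop} (h : IsLinOn C r) {a b : α}
    (ha : a ∈ C) (hb : b ∈ C) (hab : r a b) : ¬ r b a :=
  fun h' => h.1 a ha (h.2.1 a ha b hb a ha hab h')

/-- Key single-peakedness lemma: the candidate between the peak and another one is preferred. -/
lemma pref_between {C : Set α} {ax r : α → α → Prop} (hcomp : AxisCompatible C ax r)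
    (hirr : ∀ a ∈ C, ¬ ax a a) {p : α} (hp : IsPeakOf C r p) {d e : α}
    (hd : d ∈ C) (he : e ∈ C)
    (hbet : (ax p d ∧ ax d e) ∨ (ax e d ∧ ax d p)) : r d e := by
  have hpd : p ≠ d := by
    rintro rfl
    rcases hbet with ⟨h1, _⟩ | ⟨_, h2⟩
    · exact hirr _ hp.1 h1
    · exact hirr _ hp.1 h2
  exact hcomp p hp.1 d hd e he hbet (hp.2 d hd (Ne.symm hpd))

lemma flip_singlePeaked {C : Set α} {n : ℕ} {R : Fin n → α → α → Prop} {ax : α → α → Prop}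
    (h : SinglePeakedWrt C R ax) : SinglePeakedWrt C R (fun a b => ax b a) := by
  obtain ⟨⟨hirr, htr, htot⟩, hcomp⟩ := h
  refine ⟨⟨fun a ha => hirr a ha,
    fun a ha b hb c hc h1 h2 => htr c hc b hb a ha h2 h1,
    fun a ha b hb hne => (htot a ha b hb hne).symm⟩, fun i c hc d hd e he hbet => ?_⟩
  rcases hbet with ⟨h1, h2⟩ | ⟨h1, h2⟩
  · exact hcomp i c hc d hd e he (Or.inr ⟨h2, h1⟩)
  · exact hcomp i c hc d hd e he (Or.inl ⟨h2, h1⟩)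

/-- Anything strictly between the extreme peaks w.r.t. one axis is strictly between
them w.r.t. any other single-peakedness axis (suitably oriented). -/
lemma between_aux {C : Set α} {n : ℕ} {R : Fin n → α → α → Prop}
    (hR : ∀ i, IsLinOn C (R i)) {ax ax' : α → α → Prop}
    (h : SinglePeakedWrt C R ax) (h' : SinglePeakedWrt C R ax')
    {i j : Fin n} {q₁ q₂ : α} (hq₁ : IsPeakOf C (R i) q₁) (hq₂ : IsPeakOf C (R j) q₂)
    (h12' : ax' q₁ q₂) {c : α} (hc : c ∈ C) (h1c : ax q₁ c) (hc2 : ax c q₂) :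
    ax' q₁ c ∧ ax' c q₂ := by
  have hq₁C := hq₁.1
  have hq₂C := hq₂.1
  have hc1 : c ≠ q₁ := by rintro rfl; exact h.1.1 c hc h1c
  have hc2' : c ≠ q₂ := by rintro rfl; exact h.1.1 c hc hc2
  constructor
  · rcases h'.1.2.2 q₁ hq₁C c hc (Ne.symm hc1) with h1 | h1
    · exact h1
    · exfalso
      have r1 : R j q₁ c := pref_between (h'.2 j) h'.1.1 hq₂ hq₁C hc (Or.inr ⟨h1, h12'⟩)
      have r2 : R j c q₁ := pref_between (h.2 j) h.1.1 hq₂ hc hq₁C (Or.inr ⟨h1c, hc2⟩)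
      exact linAsymm (hR j) hq₁C hc r1 r2
  · rcases h'.1.2.2 c hc q₂ hq₂C hc2' with h1 | h1
    · exact h1
    · exfalso
      have r1 : R i q₂ c := pref_between (h'.2 i) h'.1.1 hq₁ hq₂C hc (Or.inl ⟨h12', h1⟩)
      have r2 : R i c q₂ := pref_between (h.2 i) h.1.1 hq₁ hc hq₂C (Or.inl ⟨h1c, hc2⟩)
      exact linAsymm (hR i) hq₂C hc r1 r2

theorem extreme_peaks_unique (C : Set α) (hC : C.Finite) {n : ℕ}
    (R : Fin n → α → α → Prop) (hR : IsProfile C R)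
    (gt gt' : α → α → Prop)
    (h : SinglePeakedWrt C R gt) (h' : SinglePeakedWrt C R gt')
    (hpk : 2 ≤ (peakSet C R).encard)
    (p₁ p₂ : α) (hext : ExtremePeaksWrt C R gt p₁ p₂) :
    (ExtremePeaksWrt C R gt' p₁ p₂ ∨ ExtremePeaksWrt C R gt' p₂ p₁) ∧
      (gt' p₁ p₂ →
        ∀ a ∈ {c ∈ C | gt p₁ c ∧ gt c p₂} ∪ {p₁, p₂},
          ∀ b ∈ {c ∈ C | gt p₁ c ∧ gt c p₂} ∪ {p₁, p₂},
            (gt a b ↔ gt' a b)) := by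
  obtain ⟨hp₁pk, hp₂pk, h12, hbetween⟩ := hext
  obtain ⟨i, hi⟩ := hp₁pk
  obtain ⟨j, hj⟩ := hp₂pk
  have hRlin := hR.2
  have hp₁C := hi.1
  have hp₂C := hj.1
  have hne : p₁ ≠ p₂ := by rintro rfl; exact h.1.1 p₁ hp₁C h12
  -- membership facts for the interval P
  have Pfacts : ∀ x ∈ ({c ∈ C | gt p₁ c ∧ gt c p₂} ∪ {p₁, p₂} : Set α),
      x ∈ C ∧ (x = p₁ ∨ gt p₁ x) ∧ (x = p₂ ∨ gt x p₂) := by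
    rintro x (⟨hxC, hx1, hx2⟩ | rfl | rfl)
    · exact ⟨hxC, Or.inr hx1, Or.inr hx2⟩
    · exact ⟨hp₁C, Or.inl rfl, Or.inr h12⟩
    · exact ⟨hp₂C, Or.inr h12, Or.inl rfl⟩
  constructor
  · rcases h'.1.2.2 p₁ hp₁C p₂ hp₂C hne with h12' | h21'
    · left
      refine ⟨⟨i, hi⟩, ⟨j, hj⟩, h12', fun p hp hne1 hne2 => ?_⟩
      obtain ⟨k, hk⟩ := hp
      obtain ⟨hb1, hb2⟩ := hbetween p ⟨k, hk⟩ hne1 hne2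
      exact between_aux hRlin h h' hi hj h12' hk.1 hb1 hb2
    · right
      refine ⟨⟨j, hj⟩, ⟨i, hi⟩, h21', fun p hp hne2 hne1 => ?_⟩
      obtain ⟨k, hk⟩ := hp
      obtain ⟨hb1, hb2⟩ := hbetween p ⟨k, hk⟩ hne1 hne2
      exact between_aux hRlin (flip_singlePeaked h) h' hj hi h21' hk.1 hb2 hb1
  · intro h12'
    -- positions w.r.t. gt'
    have P'facts : ∀ x ∈ ({c ∈ C | gt p₁ c ∧ gt c p₂} ∪ {p₁, p₂} : Set α),
        (x = p₁ ∨ gt' p₁ x) ∧ (x = p₂ ∨ gt' x p₂) := by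
      rintro x (⟨hxC, hx1, hx2⟩ | rfl | rfl)
      · obtain ⟨h1, h2⟩ := between_aux hRlin h h' hi hj h12' hxC hx1 hx2
        exact ⟨Or.inr h1, Or.inr h2⟩
      · exact ⟨Or.inl rfl, Or.inr h12'⟩
      · exact ⟨Or.inr h12', Or.inl rfl⟩
    have dir : ∀ a ∈ ({c ∈ C | gt p₁ c ∧ gt c p₂} ∪ {p₁, p₂} : Set α),
        ∀ b ∈ ({c ∈ C | gt p₁ c ∧ gt c p₂} ∪ {p₁, p₂} : Set α),
        gt a b → gt' a b := by
      intro a ha b hb hab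
      obtain ⟨haC, ha1, ha2⟩ := Pfacts a ha
      obtain ⟨hbC, hb1, hb2⟩ := Pfacts b hb
      obtain ⟨ha1', ha2'⟩ := P'facts a ha
      obtain ⟨hb1', hb2'⟩ := P'facts b hb
      have hab' : a ≠ b := by rintro rfl; exact h.1.1 a haC hab
      by_contra hcon
      have hba' : gt' b a := by
        rcases h'.1.2.2 a haC b hbC hab' with h1 | h1
        · exact absurd h1 hcon
        · exact h1
      rcases ha1 with rfl | h1a
      · -- a = p₁
        have hbne : b ≠ a := Ne.symm hab'
        rcases hb1' with rfl | h1b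
        · exact hbne rfl
        · exact linAsymm h'.1 haC hbC h1b hba'
      · rcases hb2 with rfl | hb2s
        · -- b = p₂
          have hane : a ≠ b := hab'
          rcases ha2' with rfl | ha2s
          · exact hane rfl
          · exact linAsymm h'.1 haC hbC ha2s hba'
        · have hbne1 : b ≠ p₁ := by
            rintro rfl
            exact linAsymm h.1 haC hbC hab h1a
          have h1b' : gt' p₁ b := by
            rcases hb1' with rfl | h1b
            · exact absurd rfl hbne1
            · exact h1b
          have r1 : R i a b := pref_between (h.2 i) h.1.1 hi haC hbC (Or.inl ⟨h1a, hab⟩)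
          have r2 : R i b a := pref_between (h'.2 i) h'.1.1 hi hbC haC (Or.inl ⟨h1b', hba'⟩)
          exact linAsymm (hRlin i) haC hbC r1 r2
    intro a ha b hb
    constructor
    · exact dir a ha b hb
    · intro hab'
      by_contra hcon
      have haC := (Pfacts a ha).1
      have hbC := (Pfacts b hb).1
      rcases eq_or_ne a b with rfl | hne'
      · exact h'.1.1 a haC hab'
      · rcases h.1.2.2 a haC b hbC hne' with h1 | h1
        · exact hcon h1
        · exact linAsymm h'.1 haC hbC hab' (dir b hb a ha h1)
end

section
/- Let R be a single-peaked preference profile over a finite candidate set C, let D be a clone set for R with |D| ≥ 2, and let c be a candidate not in C. Then the decloned profile R(D ↦ c) is single-peaked. -/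
variable {α : Type*}

/-- The order obtained from `r` by collapsing the clone set `D` into the fresh
candidate `c`. -/
def decloneRel (r : α → α → Prop) (D : Set α) (c : α) : α → α → Prop := fun x y =>
  (x ≠ c ∧ y ≠ c ∧ r x y) ∨
    (x = c ∧ y ≠ c ∧ ∃ d ∈ D, r d y) ∨
      (x ≠ c ∧ y = c ∧ ∃ d ∈ D, r x d)

theorem declone_single_peaked (C : Set α) (hC : C.Finite) {n : ℕ}
    (R : Fin n → α → α → Prop) (hR : IsProfile C R) (hsp : SinglePeaked C R)
    (D : Set α) (hD : IsCloneSet C R D) (hcard : 2 ≤ D.ncard)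
    (c : α) (hc : c ∉ C) :
    SinglePeaked ((C \ D) ∪ {c}) (fun i => decloneRel (R i) D c) := by
  classical
  obtain ⟨ax, ⟨haxirr, haxtr, haxtot⟩, hcomp⟩ := hsp
  obtain ⟨⟨d0, hd0⟩, hDC, hclone⟩ := hD
  obtain ⟨-, hRlin⟩ := hR
  have hd0C : d0 ∈ C := hDC hd0
  set σ : α → α := fun x => if x = c then d0 else x with hσ
  have hCD : ∀ x ∈ (C \ D) ∪ {c}, x ≠ c → x ∈ C \ D := by
    intro x hx hxc
    rcases hx with h | h
    · exact h
    · exact absurd h hxc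
  have hmemC : ∀ x ∈ (C \ D) ∪ {c}, σ x ∈ C := by
    intro x hx
    by_cases hxc : x = c
    · simp [hσ, hxc, hd0C]
    · simp only [hσ, if_neg hxc]
      exact (hCD x hx hxc).1
  -- transfer: x ∈ C \ D, R i x d for some d ∈ D  →  R i x d0
  have htrans2 : ∀ i, ∀ x ∈ C \ D, ∀ d ∈ D, R i x d → R i x d0 := by
    intro i x hx d hd hxd
    obtain ⟨hirr, htr, htot⟩ := hRlin i
    by_contra hnot
    have hxne : d0 ≠ x := by rintro rfl; exact hx.2 hd0
    rcases htot d0 hd0C x hx.1 hxne with h | h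
    · have : R i d x := (hclone d0 hd0 d hd x hx i).mp h
      exact hirr x hx.1 (htr x hx.1 d (hDC hd) x hx.1 hxd this)
    · exact hnot h
  -- Claim A: decloneRel holds → R i (σ x) (σ y)
  have keyA : ∀ i, ∀ x ∈ (C \ D) ∪ {c}, ∀ y ∈ (C \ D) ∪ {c},
      decloneRel (R i) D c x y → R i (σ x) (σ y) := by
    intro i x hx y hy h
    rcases h with ⟨hxc, hyc, hxy⟩ | ⟨hxc, hyc, d, hd, hdy⟩ | ⟨hxc, hyc, d, hd, hxd⟩
    · simpa [hσ, if_neg hxc, if_neg hyc] using hxy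
    · have hyCD := hCD y hy hyc
      have : R i d0 y := (hclone d hd d0 hd0 y hyCD i).mp hdy
      simpa [hσ, hxc, if_neg hyc] using this
    · have hxCD := hCD x hx hxc
      have : R i x d0 := htrans2 i x hxCD d hd hxd
      simpa [hσ, hyc, if_neg hxc] using this
  -- Claim B: R i (σ y) (σ z) → decloneRel
  have keyB : ∀ i, ∀ y ∈ (C \ D) ∪ {c}, ∀ z ∈ (C \ D) ∪ {c},
      R i (σ y) (σ z) → decloneRel (R i) D c y z := by
    intro i y hy z hz h
    by_cases hyc : y = c <;> by_cases hzc : z = c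
    · exfalso
      have : R i d0 d0 := by simpa [hσ, hyc, hzc] using h
      exact (hRlin i).1 d0 hd0C this
    · refine Or.inr (Or.inl ⟨hyc, hzc, d0, hd0, ?_⟩)
      simpa [hσ, hyc, if_neg hzc] using h
    · refine Or.inr (Or.inr ⟨hyc, hzc, d0, hd0, ?_⟩)
      simpa [hσ, hzc, if_neg hyc] using h
    · exact Or.inl ⟨hyc, hzc, by simpa [hσ, if_neg hyc, if_neg hzc] using h⟩
  refine ⟨fun x y => ax (σ x) (σ y), ⟨?_, ?_, ?_⟩, ?_⟩
  · intro a ha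
    exact haxirr (σ a) (hmemC a ha)
  · intro a ha b hb e he hab hbe
    exact haxtr (σ a) (hmemC a ha) (σ b) (hmemC b hb) (σ e) (hmemC e he) hab hbe
  · intro a ha b hb hne
    refine haxtot (σ a) (hmemC a ha) (σ b) (hmemC b hb) ?_
    by_cases hac : a = c <;> by_cases hbc : b = c
    · exact absurd (hac.trans hbc.symm) hne
    · simp only [hσ, hac, if_pos rfl, if_neg hbc]
      intro hdb
      exact (hCD b hb hbc).2 (hdb ▸ hd0)
    · simp only [hσ, hbc, if_pos rfl, if_neg hac]
      intro hdb
      exact (hCD a ha hac).2 (hdb.symm ▸ hd0)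
    · simp only [hσ, if_neg hac, if_neg hbc]
      exact hne
  · intro i x hx y hy z hz htriple hxy
    have h1 : R i (σ x) (σ y) := keyA i x hx y hy hxy
    have h2 : R i (σ y) (σ z) :=
      hcomp i (σ x) (hmemC x hx) (σ y) (hmemC y hy) (σ z) (hmemC z hz) htriple h1
    exact keyB i y hy z hz h2
end
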